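/- arXiv:math/0210108 — 6 statements merged into one kernel-verified Lean document; each statement's English description precedes it below -/
import Mathlib

section
/- Let p be a prime and λ a partition with a(λ) the number of nodes in the p-rim of λ, and j(λ) = |λ| − |J(λ)|. Then j(λ) = a(λ) − λ₁ if p divides a(λ), and j(λ) = a(λ) + 1 − λ₁ otherwise. -/
namespace Mullineux

/-- The rim of a partition (given as its list of parts, top row first; nodes `(i,j)` with
row index `i` starting at `0` and column index `j` starting at `1`), listed in the order
obtained by reading along the rim from left to right (i.e. from the bottom-left node
to the top-right node). -/
def rimList (l : List ℕ) : List (ℕ × ℕ) :=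
  ((List.range l.length).reverse).flatMap (fun i =>
    (List.range' (max (l.getD (i+1) 0) 1) (l.getD i 0 + 1 - max (l.getD (i+1) 0) 1)).map
      (fun j => (i, j)))

/-- Auxiliary function computing the list of `p`-segments of a list of rim nodes
(read from left to right): take `p` nodes, then continue from the column strictly to
the right of the rightmost node taken so far. -/
def segsAux (p : ℕ) : ℕ → List (ℕ × ℕ) → List (List (ℕ × ℕ))
  | 0, _ => []
  | _ + 1, [] => []
  | fuel + 1, L =>
      let s := L.take p
      let c := ((s.getLast?).map Prod.snd).getD 0
      s :: segsAux p fuel ((L.drop p).filter (fun q => c < q.2))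

/-- The `p`-segments of the rim of the partition `l`. -/
def segs (p : ℕ) (l : List ℕ) : List (List (ℕ × ℕ)) :=
  segsAux p (rimList l).length (rimList l)

/-- The `p`-rim of the partition `l`: the union of the `p`-segments of its rim. -/
def pRim (p : ℕ) (l : List ℕ) : List (ℕ × ℕ) := (segs p l).flatten

/-- `a(λ)`: the number of nodes in the `p`-rim of `λ`. -/
def aNum (p : ℕ) (l : List ℕ) : ℕ := (pRim p l).length

/-- The final (i.e. `p`-th) nodes of the `p`-segments having exactly `p` nodes. -/
def segEnds (p : ℕ) (l : List ℕ) : List (ℕ × ℕ) :=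
  (segs p l).filterMap (fun s => if s.length = p then s.getLast? else none)

/-- `J(λ)`: delete from `λ` every node of the `p`-rim which is the rightmost node of its
row but is not the `p`-th node of a `p`-segment. -/
def Jmap (p : ℕ) (l : List ℕ) : List ℕ :=
  (List.range l.length).map (fun i =>
    let li := l.getD i 0
    if (i, li) ∈ pRim p l ∧ (i, li) ∉ segEnds p l then li - 1 else li)

/-- `j(λ) = |λ| - |J(λ)|`. -/
def jNum (p : ℕ) (l : List ℕ) : ℕ := l.sum - (Jmap p l).sum

/-- A partition, encoded as a weakly decreasing list of natural numbers
(trailing zeros allowed). -/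
def IsPartition (l : List ℕ) : Prop := l.Pairwise (· ≥ ·)

/-- A `p`-restricted partition: `λ_i - λ_{i+1} < p` for all `i`. -/
def IsRestricted (p : ℕ) (l : List ℕ) : Prop :=
  IsPartition l ∧ ∀ i, l.getD i 0 < l.getD (i+1) 0 + p

/-- Removing the whole `p`-rim of `λ` (used in forming the Mullineux symbol). -/
def rimRemove (p : ℕ) (l : List ℕ) : List ℕ :=
  (List.range l.length).map (fun i =>
    l.getD i 0 - ((pRim p l).filter (fun q => q.1 = i)).length)

/-- The `i`-th part (with `i` starting from `0`) of the Mullineux conjugate of `λ`,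
as computed by Xu's algorithm: `j(J^i(λ))`. -/
def xuPart (p : ℕ) (l : List ℕ) (i : ℕ) : ℕ := jNum p ((Jmap p)^[i] l)

/-- The Mullineux conjugate of `λ`, as computed by Xu's algorithm (padded with
trailing zeros to length `|λ|`). -/
def xuM (p : ℕ) (l : List ℕ) : List ℕ := (List.range l.sum).map (xuPart p l)

/-- `μ` has the Mullineux symbol prescribed by `λ`: for every `i ≥ 0`, writing
`λ⁽ⁱ⁾` (resp. `μ⁽ⁱ⁾`) for the result of removing the `p`-rim `i` times, the numbers of
`p`-rim nodes agree, `a_i := a(λ⁽ⁱ⁾) = a(μ⁽ⁱ⁾)`, and the first row of `μ⁽ⁱ⁾` is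
`s_i = a_i - r_i` if `p ∣ a_i` and `a_i + 1 - r_i` otherwise, where `r_i` is the first
row of `λ⁽ⁱ⁾`. -/
def IsMullineuxConjugate (p : ℕ) (l mu : List ℕ) : Prop :=
  ∀ i : ℕ,
    aNum p ((rimRemove p)^[i] l) = aNum p ((rimRemove p)^[i] mu) ∧
    (((rimRemove p)^[i] mu).getD 0 0 : ℤ) =
      (if (p : ℤ) ∣ (aNum p ((rimRemove p)^[i] l) : ℤ)
       then (aNum p ((rimRemove p)^[i] l) : ℤ) - (((rimRemove p)^[i] l).getD 0 0 : ℤ)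
       else (aNum p ((rimRemove p)^[i] l) : ℤ) + 1 - (((rimRemove p)^[i] l).getD 0 0 : ℤ))

/-- The sequence `x_m, x_{m-1}, …, x_1` (as a list `[x_1,…,x_m]`) defined recursively
downwards by `x_i = 0` if `p ∣ λ_i + x_{i+1} + ⋯ + x_m` and `x_i = 1` otherwise. -/
def xSeq (p : ℕ) : List ℕ → List ℕ
  | [] => []
  | a :: rest =>
      let xs := xSeq p rest
      (if p ∣ (a + xs.sum) then 0 else 1) :: xs

end Mullineux

namespace MxAux

open Mullineux List

/-! ### Abstract path lemmas -/

section Path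

variable (P : ℕ × ℕ → Prop) [DecidablePred P]

/-- The relation between consecutive nodes of a rim path: the column either stays the
same or increases by one, and `P` (being a row-end) holds exactly when the column stays. -/
def HRel (a b : ℕ × ℕ) : Prop := (b.2 = a.2 ∨ b.2 = a.2 + 1) ∧ (P a ↔ b.2 = a.2)

/-- Contribution of one segment to the number of deleted nodes. -/
def segDel (p : ℕ) (s : List (ℕ × ℕ)) : ℤ :=
  ((s.filter (fun q => decide (P q))).length : ℤ) -
    s.getLast?.elim 0 (fun z => if s.length = p ∧ P z then 1 else 0)

def cntZ (p : ℕ) (S : List (List (ℕ × ℕ))) : ℤ := (S.map (segDel P p)).sum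

theorem rec1 : ∀ (M : List (ℕ × ℕ)) (x y : ℕ × ℕ), Chain' (HRel P) M →
    M.head? = some x → M.getLast? = some y →
    ((M.filter (fun q => decide (P q))).length : ℤ) + (y.2 : ℤ) + (if P y then 0 else 1)
      = (M.length : ℤ) + (x.2 : ℤ) := by
  intro M
  induction M with
  | nil => intro x y _ hx _; simp at hx
  | cons a M ih =>
    intro x y hch hx hy
    rw [head?_cons, Option.some.injEq] at hx
    subst hx
    cases M with
    | nil =>
      simp only [getLast?_singleton, Option.some.injEq] at hy
      subst hy
      by_cases h : P a <;> simp [filter_cons, h] <;> omega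
    | cons b M' =>
      rw [Chain', isChain_cons_cons] at hch
      obtain ⟨⟨hcol, hiff⟩, hch⟩ := hch
      rw [getLast?_cons_cons] at hy
      have H := ih b y hch rfl hy
      rw [filter_cons]
      rcases hcol with h | h
      · have hPa : P a := hiff.mpr h
        rw [if_pos (show decide (P a) = true by simp [hPa])]
        by_cases hPy : P y
        · rw [if_pos hPy] at H ⊢
          rw [length_cons, length_cons]
          push_cast at H ⊢
          omega
        · rw [if_neg hPy] at H ⊢
          rw [length_cons, length_cons]
          push_cast at H ⊢
          omega
      · have hPa : ¬ P a := by
          intro hPa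
          have := hiff.mp hPa
          omega
        rw [if_neg (show ¬ decide (P a) = true by simp [hPa])]
        by_cases hPy : P y
        · rw [if_pos hPy] at H ⊢
          rw [length_cons]
          push_cast at H ⊢
          omega
        · rw [if_neg hPy] at H ⊢
          rw [length_cons]
          push_cast at H ⊢
          omega

theorem mono_chain : ∀ (M : List (ℕ × ℕ)) (x y : ℕ × ℕ),
    Chain' (fun u v : ℕ × ℕ => u.2 ≤ v.2) M → M.head? = some x → M.getLast? = some y →
    x.2 ≤ y.2 := by
  intro M
  induction M with
  | nil => intro x y _ hx _; simp at hx
  | cons a t ih =>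
    intro x y hch hx hy
    rw [head?_cons, Option.some.injEq] at hx
    subst hx
    cases t with
    | nil =>
      simp only [getLast?_singleton, Option.some.injEq] at hy
      subst hy; exact le_rfl
    | cons b t' =>
      rw [getLast?_cons_cons] at hy
      rw [Chain', isChain_cons_cons] at hch
      exact le_trans hch.1 (ih b y hch.2 rfl hy)

theorem le_of_mem_chain : ∀ (t : List (ℕ × ℕ)) (a : ℕ × ℕ),
    Chain' (fun u v : ℕ × ℕ => u.2 ≤ v.2) (a :: t) → ∀ b ∈ t, a.2 ≤ b.2 := by
  intro t
  induction t with
  | nil => intro a _ b hb; simp at hb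
  | cons c t ih =>
    intro a hch b hb
    rw [Chain', isChain_cons_cons] at hch
    rcases mem_cons.mp hb with rfl | hb
    · exact hch.1
    · exact le_trans hch.1 (ih c hch.2 b hb)

theorem filt_dropWhile : ∀ (M : List (ℕ × ℕ)) (c : ℕ),
    Chain' (fun u v : ℕ × ℕ => u.2 ≤ v.2) M →
    M.filter (fun q => decide (c < q.2)) = M.dropWhile (fun q => decide (q.2 ≤ c)) := by
  intro M
  induction M with
  | nil => intro c _; simp
  | cons a t ih =>
    intro c hch
    have hch' : Chain' (fun u v : ℕ × ℕ => u.2 ≤ v.2) t := hch.tail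
    by_cases h : a.2 ≤ c
    · rw [filter_cons, dropWhile_cons, if_neg (by simp; omega), if_pos (by simp [h])]
      exact ih c hch'
    · push_neg at h
      rw [filter_cons, dropWhile_cons, if_pos (by simp [h]), if_neg (by simp; omega)]
      congr 1
      rw [filter_eq_self]
      intro b hb
      have := le_of_mem_chain t a hch b hb
      simp; omega

theorem head_dropWhile_false {α : Type*} (p : α → Bool) : ∀ (l : List α) (a : α),
    (l.dropWhile p).head? = some a → p a = false := by
  intro l
  induction l with
  | nil => intro a h; simp at h
  | cons b t ih =>
    intro a h
    rw [dropWhile_cons] at h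
    by_cases hb : p b = true
    · rw [if_pos hb] at h; exact ih a h
    · rw [if_neg hb] at h
      rw [head?_cons, Option.some.injEq] at h
      subst h
      exact Bool.eq_false_iff.mpr hb

theorem segsAux_nil (p n : ℕ) : segsAux p n [] = [] := by cases n <;> rfl

theorem mainLem (p : ℕ) (hp : 1 ≤ p) : ∀ (fuel : ℕ) (L : List (ℕ × ℕ)) (x y : ℕ × ℕ),
    L.length ≤ fuel → L.head? = some x → L.getLast? = some y →
    Chain' (HRel P) L → P y →
    (segsAux p fuel L).flatten <+ L ∧ (∀ s ∈ segsAux p fuel L, s ≠ []) ∧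
    (cntZ P p (segsAux p fuel L) + (y.2 : ℤ) + 1 =
      ((segsAux p fuel L).flatten.length : ℤ) + (x.2 : ℤ) +
        (if p ∣ (segsAux p fuel L).flatten.length then 0 else 1)) := by
  intro fuel
  induction fuel with
  | zero =>
    intro L x y hlen hx hy hch hPy
    rw [Nat.le_zero, length_eq_zero_iff] at hlen
    subst hlen
    simp at hx
  | succ n ih =>
    intro L x y hlen hx hy hch hPy
    obtain ⟨a, L', rfl⟩ : ∃ a L', L = a :: L' := by
      cases L with
      | nil => simp at hx
      | cons a L' => exact ⟨a, L', rfl⟩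
    set s := (a :: L').take p with hs
    have hsne : s ≠ [] := by
      rw [hs]
      cases p with
      | zero => omega
      | succ p' => simp
    obtain ⟨z, hz⟩ : ∃ z, s.getLast? = some z :=
      Option.isSome_iff_exists.mp (getLast?_isSome.mpr hsne)
    have hE : segsAux p (n+1) (a :: L') =
        s :: segsAux p n (((a :: L').drop p).filter (fun q => z.2 < q.2)) := by
      have h0 : segsAux p (n+1) (a :: L') =
          ((a :: L').take p) :: segsAux p n (((a :: L').drop p).filter
            (fun q => ((((a :: L').take p).getLast?).map Prod.snd).getD 0 < q.2)) := rfl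
      simp only [← hs, hz, Option.map_some, Option.getD_some] at h0
      exact h0
    set rest := ((a :: L').drop p).filter (fun q => decide (z.2 < q.2)) with hrestdef
    have hsplit : s ++ (a :: L').drop p = a :: L' := take_append_drop p _
    have hch2 : Chain' (HRel P) (s ++ (a :: L').drop p) := by rw [hsplit]; exact hch
    rw [Chain', isChain_append] at hch2
    obtain ⟨hchs, hchd, hjun⟩ := hch2
    have hheads : s.head? = some x := by
      rw [hs, head?_take, if_neg (by omega)]; exact hx
    have hcold : Chain' (fun u v : ℕ × ℕ => u.2 ≤ v.2) ((a :: L').drop p) :=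
      hchd.imp (fun u v h => by rcases h.1 with h' | h' <;> omega)
    have hslen1 : 1 ≤ s.length := length_pos_iff.mpr hsne
    have hslenp : s.length ≤ p := by
      rw [hs, length_take]; omega
    by_cases hrest : rest = []
    · -- one final (possibly short) segment
      have hsegs : segsAux p (n+1) (a :: L') = [s] := by
        rw [hE, hrest, segsAux_nil]
      have hzy : z = y ∨ ((a :: L').drop p ≠ []) := by
        cases hdrop : (a :: L').drop p with
        | nil =>
          left
          have hsL : s = a :: L' := by rw [← hsplit, hdrop, append_nil]
          rw [hsL, hy, Option.some.injEq] at hz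
          exact hz.symm
        | cons d D => right; simp
      have key : y.2 = z.2 ∧ P z := by
        rcases hzy with rfl | hdropne
        · exact ⟨rfl, hPy⟩
        · obtain ⟨d, D, hdrop⟩ : ∃ d D, (a :: L').drop p = d :: D := by
            cases hdrop : (a :: L').drop p with
            | nil => exact absurd hdrop hdropne
            | cons d D => exact ⟨d, D, rfl⟩
          have hzd : HRel P z d := hjun z (by simp [hz]) d (by simp [hdrop])
          have hfilnil := filter_eq_nil_iff.mp (hrestdef ▸ hrest)
          have hdmem : d ∈ (a :: L').drop p := by rw [hdrop]; exact mem_cons_self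
          have hdle : d.2 ≤ z.2 := by
            have := hfilnil d hdmem
            simp at this; omega
          have hdz : d.2 = z.2 := by rcases hzd.1 with h | h <;> omega
          refine ⟨?_, hzd.2.mpr hdz⟩
          -- y is the last of drop
          have hyd : ((a :: L').drop p).getLast? = some y := by
            rw [← hsplit, getLast?_append, hdrop] at hy
            obtain ⟨w, hw⟩ : ∃ w, (d :: D).getLast? = some w :=
              Option.isSome_iff_exists.mp (getLast?_isSome.mpr (cons_ne_nil _ _))
            rw [hw] at hy
            simp only [Option.or] at hy
            rw [hdrop, hw, hy]
          have hymem : y ∈ (a :: L').drop p := mem_of_mem_getLast? (by simp [hyd])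
          have hyle : y.2 ≤ z.2 := by
            have := hfilnil y hymem
            simp at this; omega
          have hdy : d.2 ≤ y.2 :=
            mono_chain _ d y hcold (by rw [hdrop]; rfl) hyd
          omega
      obtain ⟨hyz2, hPz⟩ := key
      have hrec := rec1 P s x z hchs hheads hz
      rw [if_pos hPz] at hrec
      refine ⟨?_, ?_, ?_⟩
      · rw [hsegs]
        simpa using (hs ▸ take_sublist p (a :: L') : s <+ a :: L')
      · rw [hsegs]
        intro s' hs'
        rw [mem_singleton] at hs'
        subst hs'
        exact hsne
      · rw [hsegs]
        have hcntZ : cntZ P p [s] =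
            ((s.filter (fun q => decide (P q))).length : ℤ) -
              (if s.length = p ∧ P z then 1 else 0) := by
          simp [cntZ, segDel, hz]
        rw [hcntZ]
        have hflat : ([s] : List (List (ℕ × ℕ))).flatten.length = s.length := by simp
        rw [hflat, hyz2]
        by_cases hfull : s.length = p
        · rw [if_pos ⟨hfull, hPz⟩, if_pos (hfull ▸ dvd_refl p)]
          push_cast at hrec ⊢
          omega
        · rw [if_neg (show ¬(s.length = p ∧ P z) from fun h => hfull h.1),
            if_neg (fun hd => hfull (le_antisymm hslenp (Nat.le_of_dvd (by omega) hd)))]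
          push_cast at hrec ⊢
          omega
    · -- at least one further segment
      have hdropne : (a :: L').drop p ≠ [] := by
        intro h
        apply hrest
        rw [hrestdef, h, filter_nil]
      have hplen : p < (a :: L').length := by
        by_contra h
        exact hdropne (drop_eq_nil_of_le (by omega))
      have hslen : s.length = p := by
        rw [hs, length_take]; omega
      obtain ⟨d, hd⟩ : ∃ d, ((a :: L').drop p).head? = some d := by
        cases hdp : (a :: L').drop p with
        | nil => exact absurd hdp hdropne
        | cons d D => exact ⟨d, rfl⟩
      have hzd : HRel P z d := hjun z (by simp [hz]) d (by simp [hd])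
      have hdw : rest = ((a :: L').drop p).dropWhile (fun q => decide (q.2 ≤ z.2)) := by
        rw [hrestdef]
        exact filt_dropWhile _ z.2 hcold
      obtain ⟨x', hx'⟩ : ∃ x', rest.head? = some x' := by
        cases hrn : rest with
        | nil => exact absurd hrn hrest
        | cons u U => exact ⟨u, rfl⟩
      set tW := ((a :: L').drop p).takeWhile (fun q => decide (q.2 ≤ z.2)) with htW
      have hsplit2 : (s ++ tW) ++ rest = a :: L' := by
        rw [append_assoc, htW, hdw, takeWhile_append_dropWhile, hsplit]
      have hch3 : Chain' (HRel P) ((s ++ tW) ++ rest) := by rw [hsplit2]; exact hch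
      rw [Chain', isChain_append] at hch3
      obtain ⟨hchM1, hchrest, hjun2⟩ := hch3
      obtain ⟨w, hw⟩ : ∃ w, (s ++ tW).getLast? = some w :=
        Option.isSome_iff_exists.mp (getLast?_isSome.mpr (by simp [hsne]))
      have hwz : w.2 ≤ z.2 := by
        rw [getLast?_append] at hw
        cases htWl : tW.getLast? with
        | none =>
          rw [htWl] at hw
          simp only [Option.or] at hw
          rw [hw] at hz
          rw [Option.some.injEq] at hz
          rw [hz]
        | some u =>
          rw [htWl] at hw
          simp only [Option.or, Option.some.injEq] at hw
          subst hw
          have hu : u ∈ tW := mem_of_mem_getLast? (by simp [htWl])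
          have := mem_takeWhile_imp hu
          simp at this
          omega
      have hwx' : HRel P w x' := hjun2 w (by simp [hw]) x' (by simp [hx'])
      have hx'gt : z.2 < x'.2 := by
        have := head_dropWhile_false _ ((a :: L').drop p) x' (by rw [← hdw]; exact hx')
        simp at this
        omega
      have hx'2 : x'.2 = z.2 + 1 := by rcases hwx'.1 with h | h <;> omega
      have hyrest : rest.getLast? = some y := by
        rw [← hsplit2, getLast?_append] at hy
        obtain ⟨y', hy'⟩ : ∃ y', rest.getLast? = some y' :=
          Option.isSome_iff_exists.mp (getLast?_isSome.mpr hrest)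
        rw [hy'] at hy
        simp only [Option.or, Option.some.injEq] at hy
        rw [hy', hy]
      have hrlen : rest.length ≤ n := by
        have h1 : rest.length ≤ ((a :: L').drop p).length := by
          rw [hdw]
          exact (dropWhile_sublist _).length_le
        rw [length_drop] at h1
        omega
      obtain ⟨IHsub, IHne, IHeq⟩ := ih rest x' y hrlen hx' hyrest hchrest hPy
      have hrec := rec1 P s x z hchs hheads hz
      have hsegdel : segDel P p s = (p : ℤ) + (x.2 : ℤ) - (z.2 : ℤ) - 1 := by
        rw [segDel, hz]
        simp only [Option.elim]
        by_cases hPz : P z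
        · rw [if_pos hPz] at hrec
          rw [if_pos (show s.length = p ∧ P z from ⟨hslen, hPz⟩)]
          rw [hslen] at hrec
          push_cast at hrec ⊢
          omega
        · rw [if_neg hPz] at hrec
          rw [if_neg (show ¬(s.length = p ∧ P z) from fun h => hPz h.2)]
          rw [hslen] at hrec
          push_cast at hrec ⊢
          omega
      have hrsub : rest <+ (a :: L').drop p := by
        rw [hdw]
        exact dropWhile_sublist _
      refine ⟨?_, ?_, ?_⟩
      · rw [hE, flatten_cons]
        have h1 : (segsAux p n rest).flatten <+ (a :: L').drop p := IHsub.trans hrsub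
        have h2 := h1.append_left s
        rw [hsplit] at h2
        exact h2
      · rw [hE]
        intro s' hs'
        rcases mem_cons.mp hs' with rfl | h
        · exact hsne
        · exact IHne _ h
      · rw [hE]
        have hcntZ : cntZ P p (s :: segsAux p n rest) =
            segDel P p s + cntZ P p (segsAux p n rest) := by
          simp [cntZ]
        have hflat : ((s :: segsAux p n rest).flatten).length =
            p + (segsAux p n rest).flatten.length := by
          rw [flatten_cons, length_append, hslen]
        rw [hcntZ, hsegdel, hflat, hx'2] at *
        have hdvd : p ∣ p + (segsAux p n rest).flatten.length ↔
            p ∣ (segsAux p n rest).flatten.length := Nat.dvd_add_right (dvd_refl p)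
        by_cases hdv : p ∣ (segsAux p n rest).flatten.length
        · rw [if_pos (hdvd.mpr hdv)]
          rw [if_pos hdv] at IHeq
          push_cast at IHeq ⊢
          omega
        · rw [if_neg (fun h => hdv (hdvd.mp h))]
          rw [if_neg hdv] at IHeq
          push_cast at IHeq ⊢
          omega

/-! ### From membership counting to `cntZ` -/

theorem filter_and_ne_length {s : List (ℕ × ℕ)} (hnd : s.Nodup) {z : ℕ × ℕ} (hz : z ∈ s) :
    ((s.filter (fun q => decide (P q ∧ q ≠ z))).length : ℤ)
      = ((s.filter (fun q => decide (P q))).length : ℤ) - (if P z then 1 else 0) := by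
  by_cases hPz : P z
  · have heq : s.filter (fun q => decide (P q ∧ q ≠ z)) =
        (s.filter (fun q => decide (P q))).erase z := by
      rw [(hnd.filter _).erase_eq_filter, filter_filter]
      apply filter_congr
      intro q hq
      by_cases h1 : P q <;> by_cases h2 : q = z <;> simp [h1, h2]
    have hzmem : z ∈ s.filter (fun q => decide (P q)) := mem_filter.mpr ⟨hz, by simpa⟩
    have hpos : 1 ≤ (s.filter (fun q => decide (P q))).length :=
      length_pos_iff.mpr (ne_nil_of_mem hzmem)
    rw [heq, length_erase_of_mem hzmem, if_pos hPz]
    push_cast [Nat.cast_sub hpos]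
    ring
  · have heq : s.filter (fun q => decide (P q ∧ q ≠ z)) = s.filter (fun q => decide (P q)) := by
      apply filter_congr
      intro q hq
      by_cases h1 : P q
      · have : q ≠ z := fun h => hPz (h ▸ h1)
        simp [h1, this]
      · simp [h1]
    rw [heq, if_neg hPz]
    ring

theorem cntZ_eq (p : ℕ) : ∀ (S : List (List (ℕ × ℕ))),
    (∀ s ∈ S, s ≠ []) → S.flatten.Nodup →
    ((S.flatten.filter (fun q => decide (P q ∧ q ∉ S.filterMap
        (fun s => if s.length = p then s.getLast? else none)))).length : ℤ)
      = cntZ P p S := by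
  intro S
  induction S with
  | nil => intro _ _; simp [cntZ]
  | cons s S' ih =>
    intro hne hnd
    have hE'sub : ∀ q ∈ S'.filterMap (fun t => if t.length = p then t.getLast? else none),
        q ∈ S'.flatten := by
      intro q hq
      rw [mem_filterMap] at hq
      obtain ⟨t, ht, hq⟩ := hq
      by_cases h : t.length = p
      · rw [if_pos h] at hq
        exact mem_flatten.mpr ⟨t, ht, mem_of_mem_getLast? (by simp [hq])⟩
      · rw [if_neg h] at hq; simp at hq
    rw [flatten_cons, nodup_append'] at hnd
    obtain ⟨hnds, hndf, hdisj⟩ := hnd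
    have hsne : s ≠ [] := hne s (mem_cons_self)
    obtain ⟨z, hz⟩ : ∃ z, s.getLast? = some z :=
      Option.isSome_iff_exists.mp (getLast?_isSome.mpr hsne)
    have hzs : z ∈ s := mem_of_mem_getLast? (by simp [hz])
    have hmemE : ∀ q, (q ∈ (s :: S').filterMap (fun t => if t.length = p then t.getLast? else none))
        ↔ ((s.length = p ∧ q = z) ∨
            q ∈ S'.filterMap (fun t => if t.length = p then t.getLast? else none)) := by
      intro q
      rw [filterMap_cons]
      by_cases h : s.length = p
      · rw [if_pos h, hz]
        simp [h, eq_comm]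
      · rw [if_neg h]
        simp [h]
    rw [flatten_cons, filter_append, length_append]
    have hrestpart : (S'.flatten.filter (fun q => decide (P q ∧ q ∉ (s :: S').filterMap
          (fun t => if t.length = p then t.getLast? else none)))) =
        S'.flatten.filter (fun q => decide (P q ∧ q ∉ S'.filterMap
          (fun t => if t.length = p then t.getLast? else none))) := by
      apply filter_congr
      intro q hq
      have hqnz : q ≠ z := fun h => hdisj hzs (h ▸ hq)
      rw [decide_eq_decide]
      rw [hmemE q]
      constructor
      · rintro ⟨h1, h2⟩; exact ⟨h1, fun h3 => h2 (Or.inr h3)⟩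
      · rintro ⟨h1, h2⟩
        refine ⟨h1, ?_⟩
        rintro (⟨_, h3⟩ | h3)
        · exact hqnz h3
        · exact h2 h3
    rw [hrestpart]
    have hspart : ((s.filter (fun q => decide (P q ∧ q ∉ (s :: S').filterMap
          (fun t => if t.length = p then t.getLast? else none)))).length : ℤ)
        = segDel P p s := by
      have hcongr : s.filter (fun q => decide (P q ∧ q ∉ (s :: S').filterMap
            (fun t => if t.length = p then t.getLast? else none))) =
          s.filter (fun q => decide (P q ∧ ¬(s.length = p ∧ q = z))) := by
        apply filter_congr
        intro q hq
        have hqE' : q ∉ S'.filterMap (fun t => if t.length = p then t.getLast? else none) :=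
          fun h => hdisj hq (hE'sub q h)
        rw [decide_eq_decide, hmemE q]
        constructor
        · rintro ⟨h1, h2⟩; exact ⟨h1, fun h3 => h2 (Or.inl h3)⟩
        · rintro ⟨h1, h2⟩
          refine ⟨h1, ?_⟩
          rintro (h3 | h3)
          · exact h2 h3
          · exact hqE' h3
      rw [hcongr, segDel, hz]
      simp only [Option.elim]
      by_cases hfull : s.length = p
      · have : s.filter (fun q => decide (P q ∧ ¬(s.length = p ∧ q = z))) =
            s.filter (fun q => decide (P q ∧ q ≠ z)) := by
          apply filter_congr
          intro q hq
          rw [decide_eq_decide]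
          constructor
          · rintro ⟨h1, h2⟩; exact ⟨h1, fun h3 => h2 ⟨hfull, h3⟩⟩
          · rintro ⟨h1, h2⟩; exact ⟨h1, fun h3 => h2 h3.2⟩
        rw [this, filter_and_ne_length P hnds hzs]
        by_cases hPz : P z
        · rw [if_pos hPz, if_pos ⟨hfull, hPz⟩]
        · rw [if_neg hPz, if_neg (show ¬(s.length = p ∧ P z) from fun h => hPz h.2)]
      · have : s.filter (fun q => decide (P q ∧ ¬(s.length = p ∧ q = z))) =
            s.filter (fun q => decide (P q)) := by
          apply filter_congr
          intro q hq
          rw [decide_eq_decide]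
          constructor
          · rintro ⟨h1, _⟩; exact h1
          · intro h1; exact ⟨h1, fun h3 => hfull h3.1⟩
        rw [this, if_neg (show ¬(s.length = p ∧ P z) from fun h => hfull h.1)]
        ring
    have hih := ih (fun t ht => hne t (mem_cons_of_mem _ ht)) hndf
    have hcntZ : cntZ P p (s :: S') = segDel P p s + cntZ P p S' := by simp [cntZ]
    rw [hcntZ, ← hih, ← hspart]
    push_cast
    ring

end Path

/-! ### Structure of the rim -/

section Rim

variable (l : List ℕ)

def F (i : ℕ) : List (ℕ × ℕ) :=
  (List.range' (max (l.getD (i+1) 0) 1) (l.getD i 0 + 1 - max (l.getD (i+1) 0) 1)).map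
    (fun j => (i, j))

def Rim (k : ℕ) : List (ℕ × ℕ) := ((List.range k).reverse).flatMap (F l)

theorem rimList_eq : rimList l = Rim l l.length := rfl

def RRel (a b : ℕ × ℕ) : Prop :=
  (b.2 = a.2 ∨ b.2 = a.2 + 1) ∧ ((l.getD a.1 0 = a.2) ↔ b.2 = a.2) ∧
    ((b.2 : ℤ) - (b.1 : ℤ) = (a.2 : ℤ) - (a.1 : ℤ) + 1)

theorem Rim_succ (k : ℕ) : Rim l (k+1) = F l k ++ Rim l k := by
  rw [Rim, range_succ, reverse_append]
  simp [Rim]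

theorem getD_anti (hl : IsPartition l) {i j : ℕ} (h : i ≤ j) : l.getD j 0 ≤ l.getD i 0 := by
  rcases lt_or_ge j l.length with hj | hj
  · have hi : i < l.length := lt_of_le_of_lt (by omega) hj
    rw [getD_eq_getElem l 0 hj, getD_eq_getElem l 0 hi]
    rcases eq_or_lt_of_le h with rfl | h'
    · exact le_rfl
    · exact (pairwise_iff_getElem.mp hl) i j hi hj h'
  · rw [getD_eq_default l 0 hj]
    exact Nat.zero_le _

theorem F_eq_nil {i : ℕ} (h : l.getD i 0 = 0) : F l i = [] := by
  have h1 : 1 ≤ max (l.getD (i+1) 0) 1 := le_max_right _ _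
  have h2 : l.getD i 0 + 1 - max (l.getD (i+1) 0) 1 = 0 := by
    rcases max_cases (l.getD (i+1) 0) 1 with ⟨hm, _⟩ | ⟨hm, _⟩ <;> rw [hm] <;> omega
  rw [F, h2]
  simp

theorem F_cnt (hl : IsPartition l) {i : ℕ} (h1 : 1 ≤ l.getD i 0) :
    l.getD i 0 + 1 - max (l.getD (i+1) 0) 1
      = (l.getD i 0 - max (l.getD (i+1) 0) 1) + 1 := by
  have h2 : max (l.getD (i+1) 0) 1 ≤ l.getD i 0 :=
    max_le (getD_anti l hl (Nat.le_succ i)) h1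
  have h3 : 1 ≤ max (l.getD (i+1) 0) 1 := le_max_right _ _
  rcases max_cases (l.getD (i+1) 0) 1 with ⟨hm, _⟩ | ⟨hm, _⟩ <;> rw [hm] at h2 h3 ⊢ <;> omega

theorem F_head (hl : IsPartition l) {i : ℕ} (h1 : 1 ≤ l.getD i 0) :
    (F l i).head? = some (i, max (l.getD (i+1) 0) 1) := by
  rw [F, F_cnt l hl h1, range'_succ]
  rfl

theorem range'_getLast? : ∀ (c s : ℕ), (List.range' s (c+1)).getLast? = some (s + c) := by
  intro c
  induction c with
  | zero => intro s; simp
  | succ c ihc =>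
    intro s
    rw [range'_succ]
    have h2 : List.range' (s+1) (c+1) ≠ [] := by simp [range'_eq_nil_iff]
    cases hr : List.range' (s+1) (c+1) with
    | nil => exact absurd hr h2
    | cons u U =>
      rw [getLast?_cons_cons, ← hr, ihc (s+1)]
      congr 1
      omega

theorem F_getLast (hl : IsPartition l) {i : ℕ} (h1 : 1 ≤ l.getD i 0) :
    (F l i).getLast? = some (i, l.getD i 0) := by
  have h2 : max (l.getD (i+1) 0) 1 ≤ l.getD i 0 :=
    max_le (getD_anti l hl (Nat.le_succ i)) h1
  rw [F, getLast?_map, F_cnt l hl h1, range'_getLast?]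
  simp only [Option.map_some]
  have h3 : max (l.getD (i+1) 0) 1 + (l.getD i 0 - max (l.getD (i+1) 0) 1) = l.getD i 0 := by
    rcases max_cases (l.getD (i+1) 0) 1 with ⟨hm, _⟩ | ⟨hm, _⟩ <;> rw [hm] at h2 ⊢ <;> omega
  rw [h3]

theorem chain'_range'_strong : ∀ (c s : ℕ),
    Chain' (fun u v => v = u + 1 ∧ s ≤ u ∧ v < s + c) (List.range' s c) := by
  intro c
  induction c with
  | zero => intro s; simp [Chain']
  | succ c ihc =>
    intro s
    rw [range'_succ, Chain', isChain_cons]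
    constructor
    · intro b hb
      cases c with
      | zero => simp at hb
      | succ c' =>
        rw [range'_succ] at hb
        rw [head?_cons, Option.mem_def, Option.some.injEq] at hb
        subst hb
        exact ⟨rfl, le_rfl, by omega⟩
    · exact (ihc (s+1)).imp (fun u v h => ⟨h.1, by omega, by omega⟩)

theorem F_chain (hl : IsPartition l) (i : ℕ) : Chain' (RRel l) (F l i) := by
  rw [F]
  rw [Chain', isChain_map]
  have hd : l.getD (i+1) 0 ≤ l.getD i 0 := getD_anti l hl (Nat.le_succ i)
  have hle : max (l.getD (i+1) 0) 1 + (l.getD i 0 + 1 - max (l.getD (i+1) 0) 1)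
      ≤ l.getD i 0 + 1 := by
    rcases max_cases (l.getD (i+1) 0) 1 with ⟨hm, _⟩ | ⟨hm, _⟩ <;> rw [hm] <;> omega
  refine (chain'_range'_strong _ _).imp (fun u v h => ?_)
  obtain ⟨h1, h2, h3⟩ := h
  have hules : u + 1 ≤ l.getD i 0 := by omega
  refine ⟨Or.inr h1, ?_, ?_⟩
  · show l.getD i 0 = u ↔ v = u
    omega
  · show (v : ℤ) - (i : ℤ) = (u : ℤ) - (i : ℤ) + 1
    push_cast
    omega

theorem Rim_head (hl : IsPartition l) {j : ℕ} (hj : 1 ≤ l.getD j 0) :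
    (Rim l (j+1)).head? = some (j, max (l.getD (j+1) 0) 1) := by
  rw [Rim_succ, head?_append, F_head l hl hj]
  rfl

theorem Rim_chain (hl : IsPartition l) : ∀ k, Chain' (RRel l) (Rim l k) := by
  intro k
  induction k with
  | zero => simp [Rim, Chain']
  | succ k ihk =>
    rw [Rim_succ, Chain', isChain_append]
    refine ⟨F_chain l hl k, ihk, ?_⟩
    intro u hu v hv
    have hFne : F l k ≠ [] := by
      intro h
      rw [h] at hu
      simp at hu
    have hlk : 1 ≤ l.getD k 0 := by
      by_contra h
      exact hFne (F_eq_nil l (by omega))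
    rw [F_getLast l hl hlk, Option.mem_def, Option.some.injEq] at hu
    subst hu
    cases k with
    | zero =>
      have : Rim l 0 = [] := rfl
      rw [this] at hv
      simp at hv
    | succ j =>
      have hlj : 1 ≤ l.getD j 0 := le_trans hlk (getD_anti l hl (Nat.le_succ j))
      rw [Rim_head l hl hlj, Option.mem_def, Option.some.injEq] at hv
      subst hv
      have hmax : max (l.getD (j+1) 0) 1 = l.getD (j+1) 0 := max_eq_left hlk
      rw [hmax]
      refine ⟨Or.inl rfl, by simp, ?_⟩
      push_cast
      ring

theorem Rim_getLast (hl : IsPartition l) (h0 : 1 ≤ l.getD 0 0) :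
    ∀ k, 1 ≤ k → (Rim l k).getLast? = some (0, l.getD 0 0) := by
  intro k
  induction k with
  | zero => omega
  | succ k ihk =>
    intro _
    rcases Nat.eq_zero_or_pos k with rfl | h
    · rw [Rim_succ]
      have : Rim l 0 = [] := rfl
      rw [this, append_nil]
      exact F_getLast l hl h0
    · rw [Rim_succ, getLast?_append, ihk h]
      rfl

theorem Rim_mem {k : ℕ} {q : ℕ × ℕ} (hq : q ∈ Rim l k) :
    q.1 < k ∧ 1 ≤ q.2 ∧ q.2 ≤ l.getD q.1 0 := by
  rw [Rim, mem_flatMap] at hq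
  obtain ⟨i, hi, hq⟩ := hq
  rw [mem_reverse, mem_range] at hi
  rw [F, mem_map] at hq
  obtain ⟨j, hj, rfl⟩ := hq
  rw [mem_range'_1] at hj
  have h1 : 1 ≤ max (l.getD (i+1) 0) 1 := le_max_right _ _
  simp only
  omega

theorem Rim_nodup (hl : IsPartition l) (k : ℕ) : (Rim l k).Nodup := by
  have hch : Chain' (fun u v : ℕ × ℕ => (u.2 : ℤ) - (u.1 : ℤ) < (v.2 : ℤ) - (v.1 : ℤ))
      (Rim l k) :=
    (Rim_chain l hl k).imp (fun u v h => by have := h.2.2; omega)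
  have : IsTrans (ℕ × ℕ) (fun u v : ℕ × ℕ => (u.2 : ℤ) - (u.1 : ℤ) < (v.2 : ℤ) - (v.1 : ℤ)) :=
    ⟨fun a b c hab hbc => lt_trans hab hbc⟩
  have hpw := isChain_iff_pairwise.mp hch
  exact hpw.imp (fun {a b} h => by intro hab; subst hab; omega)

theorem rim_zero (hl : IsPartition l) (h0 : l.getD 0 0 = 0) (k : ℕ) : Rim l k = [] := by
  induction k with
  | zero => rfl
  | succ k ihk =>
    rw [Rim_succ, ihk, append_nil]
    apply F_eq_nil
    have := getD_anti l hl (Nat.zero_le k)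
    omega

theorem Rim_strip (hl : IsPartition l) {k0 : ℕ} (h : l.getD k0 0 = 0) :
    ∀ d, Rim l (k0 + d) = Rim l k0 := by
  intro d
  induction d with
  | zero => rfl
  | succ d ihd =>
    have hF : F l (k0 + d) = [] := by
      apply F_eq_nil
      have := getD_anti l hl (Nat.le_add_right k0 d)
      omega
    rw [show k0 + (d+1) = (k0 + d) + 1 from rfl, Rim_succ, hF, nil_append, ihd]

end Rim

/-! ### Small summation helpers -/

theorem map_getD_range : ∀ (l : List ℕ), (List.range l.length).map (fun i => l.getD i 0) = l := by
  intro l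
  induction l with
  | nil => rfl
  | cons a t iht =>
    have h2 : List.map ((fun i => (a :: t).getD i 0) ∘ Nat.succ) (List.range t.length)
        = List.map (fun i => t.getD i 0) (List.range t.length) :=
      map_congr_left (fun i _ => by simp [Function.comp])
    rw [length_cons, range_succ_eq_map, map_cons, map_map, h2, iht]
    simp

theorem sum_map_add (f g h : ℕ → ℕ) : ∀ (L : List ℕ), (∀ i ∈ L, f i + g i = h i) →
    (L.map f).sum + (L.map g).sum = (L.map h).sum := by
  intro L
  induction L with
  | nil => intro _; simp
  | cons a t iht =>
    intro hyp
    simp only [map_cons, sum_cons]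
    have h1 := hyp a (mem_cons_self)
    have h2 := iht (fun i hi => hyp i (mem_cons_of_mem _ hi))
    omega

theorem sum_map_ite_count (C : ℕ → Prop) [DecidablePred C] : ∀ (L : List ℕ),
    (L.map (fun i => if C i then 1 else 0)).sum = (L.filter (fun i => decide (C i))).length := by
  intro L
  induction L with
  | nil => simp
  | cons a t iht =>
    by_cases h : C a <;> simp [filter_cons, h, iht] <;> omega

end MxAux


open Mullineux in
/-- `j(λ) = a(λ) - λ₁` if `p ∣ a(λ)`, and `j(λ) = a(λ) + 1 - λ₁` otherwise. -/
theorem jNum_eq (p : ℕ) (hp : p.Prime) (l : List ℕ) (hl : IsPartition l) :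
    (jNum p l : ℤ) =
      if (p : ℤ) ∣ (aNum p l : ℤ) then (aNum p l : ℤ) - (l.getD 0 0 : ℤ)
      else (aNum p l : ℤ) + 1 - (l.getD 0 0 : ℤ) := by
  classical
  have hp1 : 1 ≤ p := hp.two_le.trans' (by omega)
  by_cases h0 : l.getD 0 0 = 0
  · -- degenerate case: the partition is empty
    have hr : rimList l = [] := by
      rw [MxAux.rimList_eq]
      exact MxAux.rim_zero l hl h0 l.length
    have hsegs : segs p l = [] := by
      rw [segs, hr]
      exact MxAux.segsAux_nil p _
    have hpRim : pRim p l = [] := by rw [pRim, hsegs]; rfl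
    have haNum : aNum p l = 0 := by rw [aNum, hpRim]; rfl
    have hJ : Jmap p l = l := by
      rw [Jmap]
      conv_rhs => rw [← MxAux.map_getD_range l]
      apply List.map_congr_left
      intro i _
      rw [if_neg]
      rintro ⟨hmem, -⟩
      rw [hpRim] at hmem
      simp at hmem
    rw [jNum, hJ, Nat.sub_self, haNum, h0]
    norm_num
  · -- main case
    have h1 : 1 ≤ l.getD 0 0 := by omega
    -- the first index where the parts become zero
    have hex : ∃ k, l.getD k 0 = 0 := ⟨l.length, List.getD_eq_default _ _ le_rfl⟩
    have hk0spec : l.getD (Nat.find hex) 0 = 0 := Nat.find_spec hex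
    set k0 := Nat.find hex with hk0
    have hk0pos : 1 ≤ k0 := by
      rcases Nat.eq_zero_or_pos k0 with h | h
      · rw [h] at hk0spec; exact absurd hk0spec h0
      · exact h
    have hk0le : k0 ≤ l.length := Nat.find_le (List.getD_eq_default _ _ le_rfl)
    obtain ⟨j, hj⟩ : ∃ j, k0 = j + 1 := ⟨k0 - 1, by omega⟩
    have hprev : l.getD j 0 ≠ 0 := Nat.find_min hex (by omega)
    have hrim_eq : rimList l = MxAux.Rim l k0 := by
      rw [MxAux.rimList_eq, show l.length = k0 + (l.length - k0) by omega]
      exact MxAux.Rim_strip l hl hk0spec (l.length - k0)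
    have hhead : (rimList l).head? = some (j, 1) := by
      rw [hrim_eq, hj, MxAux.Rim_head l hl (by omega)]
      rw [← hj, hk0spec]
      norm_num
    have hlast : (rimList l).getLast? = some (0, l.getD 0 0) := by
      rw [hrim_eq]
      exact MxAux.Rim_getLast l hl h1 k0 hk0pos
    set P : ℕ × ℕ → Prop := fun q => l.getD q.1 0 = q.2 with hPdef
    have hch : List.Chain' (MxAux.HRel P) (rimList l) := by
      rw [MxAux.rimList_eq]
      exact (MxAux.Rim_chain l hl l.length).imp (fun u v h => ⟨h.1, h.2.1⟩)
    have hPy : P (0, l.getD 0 0) := rfl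
    obtain ⟨hsub, hne', heq⟩ := MxAux.mainLem P p hp1 (rimList l).length (rimList l)
      (j, 1) (0, l.getD 0 0) le_rfl hhead hlast hch hPy
    have hsegs_def : segs p l = segsAux p (rimList l).length (rimList l) := rfl
    rw [← hsegs_def] at hsub hne' heq
    have hflat_def : pRim p l = (segs p l).flatten := rfl
    rw [← hflat_def] at hsub heq
    have hrimnodup : (rimList l).Nodup := by
      rw [MxAux.rimList_eq]
      exact MxAux.Rim_nodup l hl l.length
    have hnod : (pRim p l).Nodup := hsub.nodup hrimnodup
    have hB := MxAux.cntZ_eq P p (segs p l) hne' (hflat_def ▸ hnod)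
    rw [← hflat_def] at hB
    have hEnds_def : segEnds p l =
        (segs p l).filterMap (fun s => if s.length = p then s.getLast? else none) := rfl
    rw [← hEnds_def] at hB
    -- the membership bound for p-rim nodes
    have hmemRim : ∀ q ∈ pRim p l, q.1 < l.length ∧ 1 ≤ q.2 ∧ q.2 ≤ l.getD q.1 0 := by
      intro q hq
      have : q ∈ MxAux.Rim l l.length := by
        rw [← MxAux.rimList_eq]
        exact hsub.subset hq
      exact MxAux.Rim_mem l this
    set C : ℕ → Prop := fun i =>
      (i, l.getD i 0) ∈ pRim p l ∧ (i, l.getD i 0) ∉ segEnds p l with hCdef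
    -- jNum equals the number of deleted rows
    have hJsum : (Jmap p l).sum +
        ((List.range l.length).map (fun i => if C i then 1 else 0)).sum = l.sum := by
      conv_rhs => rw [← MxAux.map_getD_range l]
      rw [Jmap]
      apply MxAux.sum_map_add
      intro i _
      show (if (i, l.getD i 0) ∈ pRim p l ∧ (i, l.getD i 0) ∉ segEnds p l
            then l.getD i 0 - 1 else l.getD i 0) + (if C i then 1 else 0) = l.getD i 0
      by_cases hCi : (i, l.getD i 0) ∈ pRim p l ∧ (i, l.getD i 0) ∉ segEnds p l
      · rw [if_pos hCi, if_pos (show C i from hCi)]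
        have h2 : (1:ℕ) ≤ l.getD i 0 := (hmemRim _ hCi.1).2.1
        omega
      · rw [if_neg hCi, if_neg (show ¬ C i from hCi)]
        omega
    have hjNum : jNum p l =
        ((List.range l.length).filter (fun i => decide (C i))).length := by
      rw [jNum, ← MxAux.sum_map_ite_count C (List.range l.length)]
      omega
    -- bijection between deleted rows and deleted p-rim nodes
    have hbij : ((List.range l.length).filter (fun i => decide (C i))).length
        = ((pRim p l).filter (fun q => decide (P q ∧ q ∉ segEnds p l))).length := by
      rw [← List.toFinset_card_of_nodup (List.nodup_range.filter _),
        ← List.toFinset_card_of_nodup (hnod.filter _),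
        List.toFinset_filter, List.toFinset_filter]
      apply Finset.card_bij' (fun i _ => (i, l.getD i 0)) (fun q _ => q.1)
      · intro i hi
        rw [Finset.mem_filter, List.mem_toFinset, List.mem_range] at hi
        obtain ⟨hi1, hi2⟩ := hi
        rw [decide_eq_true_eq] at hi2
        rw [Finset.mem_filter, List.mem_toFinset]
        refine ⟨hi2.1, ?_⟩
        rw [decide_eq_true_eq]
        exact ⟨rfl, hi2.2⟩
      · intro q hq
        rw [Finset.mem_filter, List.mem_toFinset] at hq
        obtain ⟨hq1, hq2⟩ := hq
        rw [decide_eq_true_eq] at hq2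
        rw [Finset.mem_filter, List.mem_toFinset, List.mem_range]
        have hqeq : (q.1, l.getD q.1 0) = q := by
          have : l.getD q.1 0 = q.2 := hq2.1
          rw [this]
        refine ⟨(hmemRim q hq1).1, ?_⟩
        rw [decide_eq_true_eq, hCdef]
        simp only [hqeq]
        exact ⟨hq1, hq2.2⟩
      · intro i _
        rfl
      · intro q hq
        rw [Finset.mem_filter, List.mem_toFinset] at hq
        obtain ⟨hq1, hq2⟩ := hq
        rw [decide_eq_true_eq] at hq2
        have : l.getD q.1 0 = q.2 := hq2.1
        rw [this]
    -- put everything together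
    have haNum_def : aNum p l = (pRim p l).length := rfl
    have hfinal : (jNum p l : ℤ) = MxAux.cntZ P p (segs p l) := by
      rw [hjNum, hbij]
      exact hB
    rw [hfinal]
    have heq2 : MxAux.cntZ P p (segs p l) + (l.getD 0 0 : ℤ) + 1 =
        ((pRim p l).length : ℤ) + 1 +
          (if p ∣ (pRim p l).length then 0 else 1) := heq
    simp only [haNum_def, Int.natCast_dvd_natCast]
    by_cases hdv : p ∣ (pRim p l).length
    · rw [if_pos hdv]
      rw [if_pos hdv] at heq2
      omega
    · rw [if_neg hdv]
      rw [if_neg hdv] at heq2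
      omega
end

section
/- Let p be a prime and λ a partition with λ_{m+1} = 0. Define x_i ∈ {0,1} for i = m, m−1, ..., 1 recursively by: x_i = 1 if λ_i + x_{i+1} + ... + x_m is not divisible by p, and x_i = 0 otherwise (with x_{m+1} = ... = 0). Then J(λ) is the partition μ with μ_i = λ_i − x_i for all i. -/
namespace MullAux
open Mullineux

def shf (q : ℕ × ℕ) : ℕ × ℕ := (q.1 + 1, q.2)

def step (p : ℕ) (s q : ℕ × ℕ) : ℕ × ℕ :=
  if s.1 % p = 0 ∧ q.2 ≤ s.2 then s else (s.1 + 1, q.2)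

def runS (p : ℕ) : ℕ × ℕ → List (ℕ × ℕ) → List (ℕ × ℕ)
  | _, [] => []
  | s, q :: L => if s.1 % p = 0 ∧ q.2 ≤ s.2 then runS p s L else q :: runS p (s.1 + 1, q.2) L

def endsS (p : ℕ) : ℕ × ℕ → List (ℕ × ℕ) → List (ℕ × ℕ)
  | _, [] => []
  | s, q :: L => if s.1 % p = 0 ∧ q.2 ≤ s.2 then endsS p s L
      else (if (s.1 + 1) % p = 0 then [q] else []) ++ endsS p (s.1 + 1, q.2) L

def lastCol (s : List (ℕ × ℕ)) (c : ℕ) : ℕ := ((s.getLast?).map Prod.snd).getD c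

lemma lastCol_nil (c : ℕ) : lastCol [] c = c := rfl

lemma lastCol_cons (q : ℕ × ℕ) (s : List (ℕ × ℕ)) (c : ℕ) :
    lastCol (q :: s) c = lastCol s q.2 := by
  cases s with
  | nil => rfl
  | cons r s => simp [lastCol, List.getLast?_cons_cons]; cases h : (r :: s).getLast? with
    | none => simp [List.getLast?_eq_none_iff] at h
    | some v => simp [h]

lemma lastCol_ne_nil (s : List (ℕ × ℕ)) (hs : s ≠ []) (c c' : ℕ) :
    lastCol s c = lastCol s c' := by
  cases s with
  | nil => exact absurd rfl hs
  | cons q s => rw [lastCol_cons, lastCol_cons]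

lemma runS_append (p : ℕ) (A B : List (ℕ × ℕ)) : ∀ s,
    runS p s (A ++ B) = runS p s A ++ runS p (A.foldl (step p) s) B := by
  induction A with
  | nil => intro s; simp [runS]
  | cons q A ih =>
    intro s
    by_cases h : s.1 % p = 0 ∧ q.2 ≤ s.2 <;>
      simp [runS, step, h, ih]

lemma endsS_append (p : ℕ) (A B : List (ℕ × ℕ)) : ∀ s,
    endsS p s (A ++ B) = endsS p s A ++ endsS p (A.foldl (step p) s) B := by
  induction A with
  | nil => intro s; simp [endsS]
  | cons q A ih =>
    intro s
    by_cases h : s.1 % p = 0 ∧ q.2 ≤ s.2 <;>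
      simp [endsS, step, h, ih]

lemma foldl_step_map_shf (p : ℕ) (A : List (ℕ × ℕ)) : ∀ s,
    (A.map shf).foldl (step p) s = A.foldl (step p) s := by
  induction A with
  | nil => intro s; rfl
  | cons q A ih => intro s; simp [step, shf, ih]

lemma runS_map_shf (p : ℕ) (A : List (ℕ × ℕ)) : ∀ s,
    runS p s (A.map shf) = (runS p s A).map shf := by
  induction A with
  | nil => intro s; simp [runS]
  | cons q A ih =>
    intro s
    by_cases h : s.1 % p = 0 ∧ q.2 ≤ s.2 <;>
      simp [runS, shf, h, ih]

lemma endsS_map_shf (p : ℕ) (A : List (ℕ × ℕ)) : ∀ s,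
    endsS p s (A.map shf) = (endsS p s A).map shf := by
  induction A with
  | nil => intro s; simp [endsS]
  | cons q A ih =>
    intro s
    by_cases h : s.1 % p = 0 ∧ q.2 ≤ s.2 <;>
      by_cases h2 : (s.1 + 1) % p = 0 <;>
        simp [endsS, shf, h, h2, ih]

lemma runS_subset (p : ℕ) (A : List (ℕ × ℕ)) : ∀ s q, q ∈ runS p s A → q ∈ A := by
  induction A with
  | nil => intro s q h; simp [runS] at h
  | cons r A ih =>
    intro s q h
    by_cases hc : s.1 % p = 0 ∧ r.2 ≤ s.2
    · simp only [runS, if_pos hc] at h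
      exact List.mem_cons_of_mem _ (ih _ _ h)
    · simp only [runS, if_neg hc, List.mem_cons] at h
      rcases h with h | h
      · exact h ▸ List.mem_cons_self
      · exact List.mem_cons_of_mem _ (ih _ _ h)

lemma endsS_subset (p : ℕ) (A : List (ℕ × ℕ)) : ∀ s q, q ∈ endsS p s A → q ∈ A := by
  induction A with
  | nil => intro s q h; simp [endsS] at h
  | cons r A ih =>
    intro s q h
    by_cases hc : s.1 % p = 0 ∧ r.2 ≤ s.2
    · simp only [endsS, if_pos hc] at h
      exact List.mem_cons_of_mem _ (ih _ _ h)
    · simp only [endsS, if_neg hc, List.mem_append, List.mem_cons] at h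
      rcases h with h | h
      · by_cases h2 : (s.1 + 1) % p = 0
        · simp [h2] at h; exact h ▸ List.mem_cons_self
        · simp [h2] at h
      · exact List.mem_cons_of_mem _ (ih _ _ h)

lemma foldl_step_runS (p : ℕ) (A : List (ℕ × ℕ)) : ∀ s,
    A.foldl (step p) s = (s.1 + (runS p s A).length, lastCol (runS p s A) s.2) := by
  induction A with
  | nil => intro s; simp [runS, lastCol]
  | cons q A ih =>
    intro s
    by_cases h : s.1 % p = 0 ∧ q.2 ≤ s.2
    · simp only [List.foldl_cons, step, if_pos h, runS]
      exact ih s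
    · simp only [List.foldl_cons, step, if_neg h, runS, ih (s.1 + 1, q.2)]
      simp [lastCol_cons, List.length_cons]
      omega

lemma runS_dropWhile (p : ℕ) (L : List (ℕ × ℕ)) : ∀ s : ℕ × ℕ, s.1 % p = 0 →
    runS p s (L.dropWhile (fun q => q.2 ≤ s.2)) = runS p s L := by
  induction L with
  | nil => intro s _; rfl
  | cons q L ih =>
    intro s hs
    by_cases h : q.2 ≤ s.2
    · rw [List.dropWhile_cons_of_pos (by simpa using h)]
      rw [ih s hs]
      simp [runS, hs, h]
    · rw [List.dropWhile_cons_of_neg (by simpa using h)]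

lemma endsS_dropWhile (p : ℕ) (L : List (ℕ × ℕ)) : ∀ s : ℕ × ℕ, s.1 % p = 0 →
    endsS p s (L.dropWhile (fun q => q.2 ≤ s.2)) = endsS p s L := by
  induction L with
  | nil => intro s _; rfl
  | cons q L ih =>
    intro s hs
    by_cases h : q.2 ≤ s.2
    · rw [List.dropWhile_cons_of_pos (by simpa using h)]
      rw [ih s hs]
      simp [endsS, hs, h]
    · rw [List.dropWhile_cons_of_neg (by simpa using h)]

lemma filter_eq_dropWhile (c : ℕ) (L : List (ℕ × ℕ))
    (hL : L.Pairwise (fun q r => q.2 ≤ r.2)) :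
    L.filter (fun q => c < q.2) = L.dropWhile (fun q => q.2 ≤ c) := by
  induction L with
  | nil => rfl
  | cons q L ih =>
    rcases List.pairwise_cons.1 hL with ⟨hq, hL'⟩
    by_cases h : q.2 ≤ c
    · rw [List.filter_cons_of_neg (by simpa using h),
        List.dropWhile_cons_of_pos (by simpa using h), ih hL']
    · rw [List.filter_cons_of_pos (by simpa using h),
        List.dropWhile_cons_of_neg (by simpa using h)]
      congr 1
      exact List.filter_eq_self.2 (fun r hr => by
        simp only [decide_eq_true_eq]
        exact lt_of_not_ge h |>.trans_le (hq r hr))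

lemma getLast?_cons_ne_nil {α : Type*} (A : List α) (q : α) (hA : A ≠ []) :
    (q :: A).getLast? = A.getLast? := by
  cases A with
  | nil => exact absurd rfl hA
  | cons r A => exact List.getLast?_cons_cons

lemma not_mod_eq_zero_of_lt {p n k : ℕ} (hp : 2 ≤ p) (h1 : 1 ≤ k) (hk : k < p)
    (hnk : (n + k) % p = 0) : ¬ n % p = 0 := by
  intro hn
  have h1' : p ∣ n + k := Nat.dvd_of_mod_eq_zero hnk
  have h2' : p ∣ n := Nat.dvd_of_mod_eq_zero hn
  have h3 : p ∣ k := by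
    have h4 := Nat.dvd_sub h1' h2'
    simpa using h4
  exact absurd (Nat.le_of_dvd (by omega) h3) (by omega)

lemma runS_chunk (p : ℕ) (hp : 2 ≤ p) : ∀ (k : ℕ) (L : List (ℕ × ℕ)) (n c : ℕ),
    k + 1 ≤ p → (n + (k + 1)) % p = 0 → (n % p = 0 → ∀ q ∈ L, c < q.2) →
    runS p (n, c) L =
      L.take (k+1) ++ runS p (n + min (k+1) L.length, lastCol (L.take (k+1)) c) (L.drop (k+1)) := by
  intro k
  induction k with
  | zero =>
    intro L n c hk hnk hc
    cases L with
    | nil => simp [runS, lastCol]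
    | cons q L =>
      have hns : ¬ (n % p = 0 ∧ q.2 ≤ n) ∨ True := Or.inr trivial
      have hnoskip : ¬ (n % p = 0 ∧ q.2 ≤ c) := by
        rintro ⟨h1, h2⟩
        exact absurd (hc h1 q (List.mem_cons_self)) (not_lt.2 h2)
      simp only [runS, if_neg hnoskip, List.take_succ_cons, List.take_zero,
        List.drop_succ_cons, List.drop_zero, List.length_cons]
      rw [lastCol_cons, lastCol_nil]
      have : min 1 (L.length + 1) = 1 := by omega
      rw [this]
      rfl
  | succ k ih =>
    intro L n c hk hnk hc
    cases L with
    | nil => simp [runS, lastCol]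
    | cons q L =>
      have hnoskip : ¬ (n % p = 0 ∧ q.2 ≤ c) := by
        rintro ⟨h1, h2⟩
        exact absurd (hc h1 q (List.mem_cons_self)) (not_lt.2 h2)
      simp only [runS, if_neg hnoskip]
      have hmod : ((n+1) + (k+1)) % p = 0 := by rw [show (n+1)+(k+1) = n+(k+1+1) by omega]; exact hnk
      have hn1 : ¬ (n+1) % p = 0 :=
        not_mod_eq_zero_of_lt hp (by omega) (by omega) hmod
      rw [ih L (n+1) q.2 (by omega) hmod (fun h => absurd h hn1)]
      simp only [List.take_succ_cons, List.drop_succ_cons, List.length_cons, List.cons_append]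
      rw [lastCol_cons]
      rw [show n + 1 + min (k+1) L.length = n + min (k+1+1) (L.length+1) from by omega]

lemma endsS_chunk (p : ℕ) (hp : 2 ≤ p) : ∀ (k : ℕ) (L : List (ℕ × ℕ)) (n c : ℕ),
    k + 1 ≤ p → (n + (k + 1)) % p = 0 → (n % p = 0 → ∀ q ∈ L, c < q.2) →
    endsS p (n, c) L =
      (if k + 1 ≤ L.length then (L.take (k+1)).getLast?.toList else []) ++
        endsS p (n + min (k+1) L.length, lastCol (L.take (k+1)) c) (L.drop (k+1)) := by
  intro k
  induction k with
  | zero =>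
    intro L n c hk hnk hc
    cases L with
    | nil => simp [endsS]
    | cons q L =>
      have hnoskip : ¬ (n % p = 0 ∧ q.2 ≤ c) := by
        rintro ⟨h1, h2⟩
        exact absurd (hc h1 q (List.mem_cons_self)) (not_lt.2 h2)
      have hend : (n + 1) % p = 0 := hnk
      simp only [endsS, if_neg hnoskip, if_pos hend, List.take_succ_cons, List.take_zero,
        List.drop_succ_cons, List.drop_zero, List.length_cons]
      rw [lastCol_cons, lastCol_nil]
      have h1 : min 1 (L.length + 1) = 1 := by omega
      have h2 : 1 ≤ L.length + 1 := by omega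
      rw [h1, if_pos h2]
      rfl
  | succ k ih =>
    intro L n c hk hnk hc
    cases L with
    | nil => simp [endsS]
    | cons q L =>
      have hnoskip : ¬ (n % p = 0 ∧ q.2 ≤ c) := by
        rintro ⟨h1, h2⟩
        exact absurd (hc h1 q (List.mem_cons_self)) (not_lt.2 h2)
      have hmod : ((n+1) + (k+1)) % p = 0 := by rw [show (n+1)+(k+1) = n+(k+1+1) by omega]; exact hnk
      have hn1 : ¬ (n+1) % p = 0 :=
        not_mod_eq_zero_of_lt hp (by omega) (by omega) hmod
      simp only [endsS, if_neg hnoskip, if_neg hn1, List.nil_append]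
      rw [ih L (n+1) q.2 (by omega) hmod (fun h => absurd h hn1)]
      simp only [List.take_succ_cons, List.drop_succ_cons, List.length_cons]
      rw [lastCol_cons]
      have hiff : k + 1 ≤ L.length ↔ k + 1 + 1 ≤ L.length + 1 := by omega
      by_cases hlen : k + 1 ≤ L.length
      · rw [if_pos hlen, if_pos (hiff.1 hlen)]
        have htk : L.take (k+1) ≠ [] := by
          intro h
          have h5 : (L.take (k+1)).length = min (k+1) L.length := List.length_take
          rw [h] at h5
          simp only [List.length_nil] at h5
          omega
        rw [getLast?_cons_ne_nil _ q htk]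
        rw [show n + 1 + min (k+1) L.length = n + min (k+1+1) (L.length+1) from by omega]
      · rw [if_neg hlen, if_neg (fun h => hlen (hiff.2 h))]
        rw [show n + 1 + min (k+1) L.length = n + min (k+1+1) (L.length+1) from by omega]

lemma segsAux_nil (p : ℕ) : ∀ fuel, segsAux p fuel [] = [] := by
  intro fuel; cases fuel <;> rfl

lemma segsAux_cons (p fuel : ℕ) (q : ℕ × ℕ) (L0 : List (ℕ × ℕ)) :
    segsAux p (fuel+1) (q::L0) = (q::L0).take p ::
      segsAux p fuel (((q::L0).drop p).filter
        (fun r => ((((q::L0).take p).getLast?).map Prod.snd).getD 0 < r.2)) := by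
  rw [segsAux]
  simp

lemma bridge (p : ℕ) (hp : 2 ≤ p) : ∀ (fuel : ℕ) (L : List (ℕ × ℕ)) (n c : ℕ),
    L.length ≤ fuel → L.Pairwise (fun q r => q.2 ≤ r.2) → n % p = 0 →
    (∀ q ∈ L, c < q.2) →
    (segsAux p fuel L).flatten = runS p (n, c) L ∧
    (segsAux p fuel L).filterMap (fun s => if s.length = p then s.getLast? else none)
      = endsS p (n, c) L := by
  intro fuel
  induction fuel with
  | zero =>
    intro L n c hlen _ _ _
    have hL : L = [] := List.length_eq_zero_iff.1 (Nat.le_zero.1 hlen)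
    subst hL
    exact ⟨rfl, rfl⟩
  | succ fuel ih =>
    intro L n c hlen hpw hn hc
    cases L with
    | nil => exact ⟨rfl, rfl⟩
    | cons q L0 =>
      rw [segsAux_cons]
      set L : List (ℕ × ℕ) := q :: L0 with hLdef
      set s : List (ℕ × ℕ) := L.take p with hsdef
      have hsne : s ≠ [] := by
        have : s.length = min p L.length := List.length_take
        intro h
        rw [h] at this
        simp only [List.length_nil] at this
        have : L.length = 0 ∨ p = 0 := by omega
        rcases this with h' | h'
        · simp [hLdef] at h'
        · omega
      set cd : ℕ := ((s.getLast?).map Prod.snd).getD 0 with hcddef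
      have hcd : lastCol s c = cd := lastCol_ne_nil s hsne c 0
      set M : List (ℕ × ℕ) := (L.drop p).filter (fun r => cd < r.2) with hMdef
      have hnp : (n + p) % p = 0 := by rw [Nat.add_mod_right]; exact hn
      have hrchunk := runS_chunk p hp (p-1) L n c (by omega)
        (by rw [show n + (p - 1 + 1) = n + p from by omega]; exact hnp) (fun _ => hc)
      have hechunk := endsS_chunk p hp (p-1) L n c (by omega)
        (by rw [show n + (p - 1 + 1) = n + p from by omega]; exact hnp) (fun _ => hc)
      rw [show p - 1 + 1 = p from by omega] at hrchunk hechunk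
      by_cases hbig : p ≤ L.length
      · have hmin : min p L.length = p := min_eq_left hbig
        have hpwd : (L.drop p).Pairwise (fun q r => q.2 ≤ r.2) :=
          hpw.sublist (List.drop_sublist _ _)
        have hfd : (L.drop p).filter (fun r => cd < r.2)
            = (L.drop p).dropWhile (fun r => r.2 ≤ cd) :=
          filter_eq_dropWhile cd _ hpwd
        have htail_run : runS p (n + p, cd) (L.drop p) = runS p (n + p, cd) M := by
          rw [hMdef, hfd]
          exact (runS_dropWhile p (L.drop p) (n + p, cd) hnp).symm
        have htail_ends : endsS p (n + p, cd) (L.drop p) = endsS p (n + p, cd) M := by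
          rw [hMdef, hfd]
          exact (endsS_dropWhile p (L.drop p) (n + p, cd) hnp).symm
        have hMlen : M.length ≤ fuel := by
          have h1 : M.length ≤ (L.drop p).length := List.length_filter_le _ _
          have h2 : (L.drop p).length = L.length - p := List.length_drop
          have h3 : L.length ≤ fuel + 1 := hlen
          omega
        have hMpw : M.Pairwise (fun q r => q.2 ≤ r.2) :=
          hpwd.sublist (List.filter_sublist)
        have hMc : ∀ r ∈ M, cd < r.2 := by
          intro r hr
          have := List.of_mem_filter hr
          simpa using this
        obtain ⟨hrun, hends⟩ := ih M (n + p) cd hMlen hMpw hnp hMc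
        constructor
        · rw [List.flatten_cons, hrchunk, hmin, hcd, htail_run, hrun]
        · rw [List.filterMap_cons, hechunk, hmin, hcd, htail_ends, hends]
          have hslen : s.length = p := by
            rw [hsdef, List.length_take]; exact min_eq_left hbig
          rw [if_pos hslen, if_pos hbig]
          obtain ⟨b, hb⟩ := Option.isSome_iff_exists.1
            (List.getLast?_isSome.2 hsne)
          rw [← hsdef, hb]
          rfl
      · have hdrop : L.drop p = [] := List.drop_eq_nil_of_le (le_of_lt (Nat.lt_of_not_ge hbig))
        have hM : M = [] := by rw [hMdef, hdrop]; rfl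
        have hs : s = L := by rw [hsdef]; exact List.take_of_length_le (le_of_lt (Nat.lt_of_not_ge hbig))
        constructor
        · rw [List.flatten_cons, hrchunk, hM, segsAux_nil, hdrop]
          rfl
        · rw [List.filterMap_cons, hechunk, hM, segsAux_nil, hdrop]
          have hslen : ¬ s.length = p := by
            rw [hsdef, List.length_take]
            omega
          rw [if_neg hslen, if_neg (by omega : ¬ p ≤ L.length)]
          simp [endsS]

def blockF (l : List ℕ) (i : ℕ) : List (ℕ × ℕ) :=
  (List.range' (max (l.getD (i+1) 0) 1) (l.getD i 0 + 1 - max (l.getD (i+1) 0) 1)).map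
    (fun j => (i, j))

lemma rimList_eq (l : List ℕ) : rimList l = ((List.range l.length).reverse).flatMap (blockF l) :=
  rfl

lemma mem_blockF {l : List ℕ} {i : ℕ} {q : ℕ × ℕ} (hq : q ∈ blockF l i) :
    q.1 = i ∧ max (l.getD (i+1) 0) 1 ≤ q.2 ∧ q.2 ≤ l.getD i 0 := by
  simp only [blockF, List.mem_map, List.mem_range'_1] at hq
  obtain ⟨j, ⟨hj1, hj2⟩, rfl⟩ := hq
  refine ⟨rfl, hj1, ?_⟩
  omega

lemma rimList_col_pos (l : List ℕ) : ∀ q ∈ rimList l, 0 < q.2 := by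
  intro q hq
  rw [rimList_eq] at hq
  obtain ⟨i, _, hq⟩ := List.mem_flatMap.1 hq
  have := (mem_blockF hq).2.1
  omega

lemma getD_mono {l : List ℕ} (hl : l.Pairwise (· ≥ ·)) {i j : ℕ} (h : i ≤ j) :
    l.getD j 0 ≤ l.getD i 0 := by
  by_cases hj : j < l.length
  · have hi : i < l.length := lt_of_le_of_lt h hj
    rw [List.getD_eq_getElem l 0 hj, List.getD_eq_getElem l 0 hi]
    exact hl.rel_get_of_le (a := ⟨i, hi⟩) (b := ⟨j, hj⟩) h
  · rw [List.getD_eq_default l 0 (le_of_not_gt hj)]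
    exact Nat.zero_le _

lemma rimList_pairwise {l : List ℕ} (hl : l.Pairwise (· ≥ ·)) :
    (rimList l).Pairwise (fun q r => q.2 ≤ r.2) := by
  rw [rimList_eq, List.flatMap_def, List.pairwise_flatten]
  constructor
  · intro b hb
    obtain ⟨i, _, rfl⟩ := List.mem_map.1 hb
    rw [blockF, List.pairwise_map]
    exact (List.pairwise_lt_range' 1 Nat.one_pos).imp (fun h => le_of_lt h)
  · rw [List.pairwise_map, List.pairwise_reverse]
    have hr : (List.range l.length).Pairwise (· < ·) := List.pairwise_lt_range
    refine hr.imp_of_mem ?_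
    intro i' i _ _ hlt x hx y hy
    obtain ⟨-, -, hx2⟩ := mem_blockF hx
    obtain ⟨-, hy1, -⟩ := mem_blockF hy
    have hmono : l.getD i 0 ≤ l.getD (i'+1) 0 := getD_mono hl (by omega)
    omega

lemma rimList_cons (a : ℕ) (t : List ℕ) :
    rimList (a :: t) = (rimList t).map shf ++
      (List.range' (max (t.getD 0 0) 1) (a + 1 - max (t.getD 0 0) 1)).map
        (fun j => ((0:ℕ), j)) := by
  rw [rimList_eq, rimList_eq, List.length_cons, List.range_succ_eq_map,
    List.reverse_cons, List.flatMap_append]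
  congr 1
  · rw [← List.map_reverse, List.flatMap_map, List.map_flatMap]
    apply List.flatMap_congr
    intro i _
    show blockF (a :: t) (i + 1) = (blockF t i).map shf
    rw [blockF, blockF, List.getD_cons_succ, List.getD_cons_succ, List.map_map]
    rfl
  · show blockF (a :: t) 0 ++ [] = _
    rw [List.append_nil]
    rfl

lemma runS_row (p : ℕ) : ∀ (m s n c : ℕ), (c < s ∨ ¬ n % p = 0) →
    runS p (n, c) ((List.range' s m).map (fun j => ((0:ℕ), j)))
      = (List.range' s m).map (fun j => ((0:ℕ), j)) := by
  intro m
  induction m with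
  | zero => intro s n c _; rfl
  | succ m ih =>
    intro s n c h
    rw [List.range'_succ]
    have hnoskip : ¬ (n % p = 0 ∧ ((0:ℕ), s).2 ≤ c) := by
      rintro ⟨h1, h2⟩
      rcases h with h | h
      · simp at h2; omega
      · exact h h1
    simp only [List.map_cons, runS, if_neg hnoskip]
    rw [ih (s+1) (n+1) s (Or.inl (by omega))]

lemma endsS_row (p : ℕ) : ∀ (m s n c a : ℕ), (c < s ∨ ¬ n % p = 0) →
    (((0:ℕ), a) ∈ endsS p (n, c) ((List.range' s m).map (fun j => ((0:ℕ), j))) ↔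
      (s ≤ a ∧ a < s + m ∧ (n + (a + 1 - s)) % p = 0)) := by
  intro m
  induction m with
  | zero =>
    intro s n c a _
    simp only [List.range'_zero, List.map_nil]
    constructor
    · intro h; simp [endsS] at h
    · intro h; omega
  | succ m ih =>
    intro s n c a h
    rw [List.range'_succ]
    have hnoskip : ¬ (n % p = 0 ∧ ((0:ℕ), s).2 ≤ c) := by
      rintro ⟨h1, h2⟩
      rcases h with h | h
      · simp at h2; omega
      · exact h h1
    simp only [List.map_cons, endsS, if_neg hnoskip, List.mem_append]
    rw [ih (s+1) (n+1) s a (Or.inl (by omega))]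
    constructor
    · rintro (hmem | ⟨ha1, ha2, ha3⟩)
      · by_cases h2 : (n+1) % p = 0
        · rw [if_pos h2] at hmem
          simp only [List.mem_singleton, Prod.mk.injEq, true_and] at hmem
          refine ⟨by omega, by omega, ?_⟩
          rw [show a + 1 - s = 1 from by omega]
          exact h2
        · rw [if_neg h2] at hmem
          simp at hmem
      · refine ⟨by omega, by omega, ?_⟩
        rw [show n + (a + 1 - s) = n + 1 + (a + 1 - (s + 1)) from by omega]
        exact ha3
    · rintro ⟨ha1, ha2, ha3⟩
      by_cases he : a = s
      · subst he
        left
        rw [show a + 1 - a = 1 from by omega] at ha3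
        rw [if_pos ha3]
        exact List.mem_singleton.2 rfl
      · right
        refine ⟨by omega, by omega, ?_⟩
        rw [show n + 1 + (a + 1 - (s + 1)) = n + (a + 1 - s) from by omega]
        exact ha3

lemma lastCol_row (p : ℕ) : ∀ (m s c : ℕ), 0 < m →
    lastCol ((List.range' s m).map (fun j => ((0:ℕ), j))) c = s + m - 1 := by
  intro m
  induction m with
  | zero => intro s c h; omega
  | succ m ih =>
    intro s c _
    rw [List.range'_succ, List.map_cons, lastCol_cons]
    by_cases hm : 0 < m
    · rw [ih (s+1) s hm]; omega
    · have : m = 0 := by omega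
      subst this
      simp [lastCol]

lemma xSeq_sum_zero (p : ℕ) : ∀ {t : List ℕ}, (∀ b ∈ t, b = 0) → (xSeq p t).sum = 0 := by
  intro t
  induction t with
  | nil => intro _; rfl
  | cons a t ih =>
    intro h
    have ha : a = 0 := h a (List.mem_cons_self)
    have ht := ih (fun b hb => h b (List.mem_cons_of_mem _ hb))
    simp [xSeq, ha, ht]

lemma all_zero_of_sorted_head {t : List ℕ} (ht : t.Pairwise (· ≥ ·)) (h0 : t.getD 0 0 = 0) :
    ∀ b ∈ t, b = 0 := by
  cases t with
  | nil => simp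
  | cons a t =>
    intro b hb
    have ha : a = 0 := by simpa using h0
    rcases List.mem_cons.1 hb with rfl | hb
    · exact ha
    · have := (List.pairwise_cons.1 ht).1 b hb
      omega

lemma pRim_runS {p : ℕ} (hp : 2 ≤ p) {l : List ℕ} (hl : l.Pairwise (· ≥ ·)) :
    pRim p l = runS p (0, 0) (rimList l) ∧ segEnds p l = endsS p (0, 0) (rimList l) :=
  bridge p hp (rimList l).length (rimList l) 0 0 le_rfl (rimList_pairwise hl)
    (Nat.zero_mod p) (fun q hq => rimList_col_pos l q hq)

lemma getD_head_le {t : List ℕ} {a : ℕ} (hat : ∀ b ∈ t, a ≥ b) : t.getD 0 0 ≤ a := by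
  cases t with
  | nil => exact Nat.zero_le _
  | cons b t => exact hat b (List.mem_cons_self)

lemma invariant (p : ℕ) (hp : 2 ≤ p) : ∀ {l : List ℕ}, l.Pairwise (· ≥ ·) →
    ((rimList l).foldl (step p) (0, 0)).2 = l.getD 0 0 ∧
    (((rimList l).foldl (step p) (0, 0)).1 = 0 ↔ l.getD 0 0 = 0) ∧
    ((((rimList l).foldl (step p) (0, 0)).1 : ZMod p)
      = (l.getD 0 0 : ZMod p) + ((xSeq p (l.drop 1)).sum : ZMod p)) := by
  haveI : NeZero p := ⟨by omega⟩
  intro l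
  induction l with
  | nil =>
    intro _
    refine ⟨rfl, by simp [rimList], by simp [rimList, xSeq]⟩
  | cons a t ih =>
    intro hl
    obtain ⟨hat, ht⟩ := List.pairwise_cons.1 hl
    obtain ⟨iC, iN0, iZ⟩ := ih ht
    have hta : t.getD 0 0 ≤ a := getD_head_le hat
    rcases hst : (rimList t).foldl (step p) (0, 0) with ⟨N, C⟩
    rw [hst] at iC iN0 iZ
    simp only at iC iN0 iZ
    rw [rimList_cons, List.foldl_append, foldl_step_map_shf, hst, foldl_step_runS]
    simp only [List.getD_cons_zero, List.drop_one, List.tail_cons]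
    by_cases ha : a = 0
    · subst ha
      have ht0 : t.getD 0 0 = 0 := by omega
      have hm0 : 0 + 1 - max (t.getD 0 0) 1 = 0 := by omega
      rw [hm0]
      simp only [List.range'_zero, List.map_nil, runS, List.length_nil, lastCol_nil,
        Nat.add_zero]
      refine ⟨by rw [iC, ht0], by simp [iN0.2 ht0], ?_⟩
      rw [iN0.2 ht0, xSeq_sum_zero p (all_zero_of_sorted_head ht ht0)]
      simp
    · by_cases ht0 : t.getD 0 0 = 0
      · have hN : N = 0 := iN0.2 ht0
        have hC0 : C = 0 := by rw [iC, ht0]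
        have hs : max (t.getD 0 0) 1 = 1 := by omega
        have hm : a + 1 - max (t.getD 0 0) 1 = a := by omega
        rw [hs] at hm
        rw [hs, hm]
        have hrun : runS p (N, C) ((List.range' 1 a).map (fun j => ((0:ℕ), j)))
            = (List.range' 1 a).map (fun j => ((0:ℕ), j)) :=
          runS_row p a 1 N C (Or.inl (by omega))
        rw [hrun, lastCol_row p a 1 C (by omega)]
        simp only [List.length_map, List.length_range']
        refine ⟨by omega, by omega, ?_⟩
        rw [hN, xSeq_sum_zero p (all_zero_of_sorted_head ht ht0)]
        simp
      · cases t with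
        | nil => simp at ht0
        | cons b t' =>
          simp only [List.getD_cons_zero, List.tail_cons] at iC iN0 iZ ht0 hta ⊢
          simp only [List.drop_one, List.tail_cons] at iZ ⊢
          have hble : b ≤ a := hta
          have hb1 : 1 ≤ b := by omega
          have hs : max b 1 = b := by omega
          rw [hs]
          have hNpos : N ≠ 0 := fun h => ht0 (iN0.1 h)
          by_cases hNp : N % p = 0
          · have hNz : (N : ZMod p) = 0 :=
              (ZMod.natCast_eq_zero_iff N p).2 (Nat.dvd_of_mod_eq_zero hNp)
            have hx : p ∣ b + (xSeq p t').sum := by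
              rw [← ZMod.natCast_eq_zero_iff, Nat.cast_add, ← iZ]
              exact hNz
            have hxseq : xSeq p (b :: t') = 0 :: xSeq p t' := by simp [xSeq, hx]
            rw [show a + 1 - b = (a - b) + 1 from by omega, List.range'_succ, List.map_cons]
            have hskipcond : N % p = 0 ∧ (((0:ℕ), b) : ℕ × ℕ).2 ≤ C := ⟨hNp, by simp [iC]⟩
            have hunput : runS p (N, C) ((((0:ℕ), b) : ℕ × ℕ) ::
                (List.range' (b+1) (a-b)).map (fun j => ((0:ℕ), j)))
                = runS p (N, C) ((List.range' (b+1) (a-b)).map (fun j => ((0:ℕ), j))) := by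
              rw [runS, if_pos hskipcond]
            rw [hunput]
            have hrun : runS p (N, C) ((List.range' (b+1) (a-b)).map (fun j => ((0:ℕ), j)))
                = (List.range' (b+1) (a-b)).map (fun j => ((0:ℕ), j)) :=
              runS_row p (a-b) (b+1) N C (Or.inl (by omega))
            rw [hrun]
            simp only [List.length_map, List.length_range']
            have hlast : lastCol ((List.range' (b+1) (a-b)).map (fun j => ((0:ℕ), j))) C = a := by
              by_cases hab : a = b
              · rw [show a - b = 0 from by omega]
                simp only [List.range'_zero, List.map_nil, lastCol_nil]
                omega
              · rw [lastCol_row p (a-b) (b+1) C (by omega)]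
                omega
            rw [hlast, hxseq]
            refine ⟨rfl, by omega, ?_⟩
            rw [Nat.cast_add, Nat.cast_sub hble, iZ, List.sum_cons, Nat.cast_add,
              Nat.cast_zero]
            ring
          · have hNz : (N : ZMod p) ≠ 0 := fun h =>
              hNp (Nat.mod_eq_zero_of_dvd ((ZMod.natCast_eq_zero_iff N p).1 h))
            have hx : ¬ p ∣ b + (xSeq p t').sum := by
              intro hdvd
              apply hNz
              rw [iZ, ← Nat.cast_add]
              exact (ZMod.natCast_eq_zero_iff _ p).2 hdvd
            have hxseq : xSeq p (b :: t') = 1 :: xSeq p t' := by simp [xSeq, hx]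
            have hrun : runS p (N, C) ((List.range' b (a+1-b)).map (fun j => ((0:ℕ), j)))
                = (List.range' b (a+1-b)).map (fun j => ((0:ℕ), j)) :=
              runS_row p (a+1-b) b N C (Or.inr hNp)
            rw [hrun, lastCol_row p (a+1-b) b C (by omega), hxseq]
            simp only [List.length_map, List.length_range']
            refine ⟨by omega, by omega, ?_⟩
            rw [Nat.cast_add, Nat.cast_sub (by omega : b ≤ a + 1), iZ, List.sum_cons,
              Nat.cast_add, Nat.cast_one]
            push_cast
            ring

lemma mem_shift_append_succ {X R0 : List (ℕ × ℕ)} (hR0 : ∀ r ∈ R0, r.1 = 0) (i j : ℕ) :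
    ((i+1, j) ∈ X.map shf ++ R0) ↔ (i, j) ∈ X := by
  simp only [List.mem_append, List.mem_map]
  constructor
  · rintro (⟨q, hq, heq⟩ | hr)
    · obtain ⟨q1, q2⟩ := q
      simp only [shf, Prod.mk.injEq] at heq
      obtain ⟨h1, h2⟩ := heq
      have : q1 = i := by omega
      subst this; subst h2
      exact hq
    · have := hR0 _ hr
      simp at this
  · intro h
    exact Or.inl ⟨(i, j), h, rfl⟩

lemma mem_shift_append_zero {X R0 : List (ℕ × ℕ)} (j : ℕ) :
    (((0:ℕ), j) ∈ X.map shf ++ R0) ↔ ((0:ℕ), j) ∈ R0 := by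
  simp only [List.mem_append, List.mem_map]
  constructor
  · rintro (⟨q, hq, heq⟩ | hr)
    · exfalso
      obtain ⟨q1, q2⟩ := q
      simp only [shf, Prod.mk.injEq] at heq
      omega
    · exact hr
  · exact Or.inr

end MullAux

open Mullineux in
/-- Recursive description of `J(λ)`: with `x_i = 1` iff `p ∤ λ_i + x_{i+1} + ⋯ + x_m`
(computed downwards from `i = m`, where `λ` has at most `m` parts), one has
`J(λ)_i = λ_i - x_i` for all `i`. -/
theorem Jmap_eq_sub_xSeq (p : ℕ) (hp : p.Prime) (l : List ℕ) (hl : IsPartition l) :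
    Jmap p l = List.zipWith (fun a x => a - x) l (xSeq p l) := by
  open MullAux in
  have hp2 : 2 ≤ p := hp.two_le
  haveI : NeZero p := ⟨by omega⟩
  rw [IsPartition] at hl
  revert hl
  induction l with
  | nil => intro _; rfl
  | cons a t ih =>
    intro hl
    obtain ⟨hat, ht⟩ := List.pairwise_cons.1 hl
    have iht := ih ht
    obtain ⟨iC, iN0, iZ⟩ := MullAux.invariant p hp2 ht
    rcases hst : (rimList t).foldl (MullAux.step p) (0, 0) with ⟨N, C⟩
    rw [hst] at iC iN0 iZ
    simp only at iC iN0 iZ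
    have hta : t.getD 0 0 ≤ a := MullAux.getD_head_le hat
    obtain ⟨hprA, hendA⟩ := MullAux.pRim_runS hp2 hl
    obtain ⟨hprT, hendT⟩ := MullAux.pRim_runS hp2 ht
    set R0 : List (ℕ × ℕ) :=
      (List.range' (max (t.getD 0 0) 1) (a + 1 - max (t.getD 0 0) 1)).map
        (fun j => ((0:ℕ), j)) with hR0def
    have hdecr : pRim p (a :: t) = (pRim p t).map MullAux.shf ++
        MullAux.runS p (N, C) R0 := by
      rw [hprA, hprT, rimList_cons, MullAux.runS_append, MullAux.runS_map_shf,
        MullAux.foldl_step_map_shf, hst]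
    have hdece : segEnds p (a :: t) = (segEnds p t).map MullAux.shf ++
        MullAux.endsS p (N, C) R0 := by
      rw [hendA, hendT, rimList_cons, MullAux.endsS_append, MullAux.endsS_map_shf,
        MullAux.foldl_step_map_shf, hst]
    have hR0fst : ∀ r ∈ MullAux.runS p (N, C) R0, r.1 = 0 := by
      intro r hr
      have := MullAux.runS_subset p R0 (N, C) r hr
      rw [hR0def] at this
      obtain ⟨j, _, rfl⟩ := List.mem_map.1 this
      rfl
    have hE0fst : ∀ r ∈ MullAux.endsS p (N, C) R0, r.1 = 0 := by
      intro r hr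
      have := MullAux.endsS_subset p R0 (N, C) r hr
      rw [hR0def] at this
      obtain ⟨j, _, rfl⟩ := List.mem_map.1 this
      rfl
    -- decompose Jmap
    rw [Jmap, List.length_cons, List.range_succ_eq_map, List.map_cons, List.map_map]
    rw [xSeq]
    simp only [List.zipWith_cons_cons]
    congr 1
    -- === tail entries ===
    case e_tail =>
      rw [← iht, Jmap]
      apply List.map_congr_left
      intro i _
      simp only [Function.comp_apply, List.getD_cons_succ]
      have hmem : ((i+1, t.getD i 0) ∈ pRim p (a :: t)) ↔ (i, t.getD i 0) ∈ pRim p t := by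
        rw [hdecr]
        exact MullAux.mem_shift_append_succ hR0fst i _
      have hend : ((i+1, t.getD i 0) ∈ segEnds p (a :: t)) ↔ (i, t.getD i 0) ∈ segEnds p t := by
        rw [hdece]
        exact MullAux.mem_shift_append_succ hE0fst i _
      by_cases h1 : (i, t.getD i 0) ∈ pRim p t ∧ (i, t.getD i 0) ∉ segEnds p t
      · rw [if_pos ⟨hmem.2 h1.1, fun hc => h1.2 (hend.1 hc)⟩, if_pos h1]
      · rw [if_neg (fun hc => h1 ⟨hmem.1 hc.1, fun hc2 => hc.2 (hend.2 hc2)⟩), if_neg h1]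
    -- === head entry ===
    case e_head =>
      simp only [List.getD_cons_zero]
      have hmem0 : (((0:ℕ), a) ∈ pRim p (a :: t)) ↔ ((0:ℕ), a) ∈ MullAux.runS p (N, C) R0 := by
        rw [hdecr]; exact MullAux.mem_shift_append_zero a
      have hend0 : (((0:ℕ), a) ∈ segEnds p (a :: t)) ↔ ((0:ℕ), a) ∈ MullAux.endsS p (N, C) R0 := by
        rw [hdece]; exact MullAux.mem_shift_append_zero a
      by_cases ha : a = 0
      · subst ha
        have hm0 : 0 + 1 - max (t.getD 0 0) 1 = 0 := by omega
        have hR0nil : R0 = [] := by rw [hR0def, hm0]; rfl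
        have : ¬ (((0:ℕ), 0) ∈ pRim p (0 :: t) ∧ ((0:ℕ), 0) ∉ segEnds p (0 :: t)) := by
          rintro ⟨h1, -⟩
          rw [hmem0, hR0nil] at h1
          simp [MullAux.runS] at h1
        rw [if_neg this]
        omega
      · by_cases ht0 : t.getD 0 0 = 0
        · -- previous rows empty
          have hN : N = 0 := iN0.2 ht0
          have hC0 : C = 0 := by rw [iC, ht0]
          have hR0eq : R0 = (List.range' 1 a).map (fun j => ((0:ℕ), j)) := by
            rw [hR0def, ht0]
            norm_num
          have hS : (xSeq p t).sum = 0 :=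
            MullAux.xSeq_sum_zero p (MullAux.all_zero_of_sorted_head ht ht0)
          have hmem : ((0:ℕ), a) ∈ MullAux.runS p (N, C) R0 := by
            rw [hR0eq, MullAux.runS_row p a 1 N C (Or.inl (by omega))]
            simp only [List.mem_map, List.mem_range'_1]
            exact ⟨a, ⟨by omega, by omega⟩, rfl⟩
          have hendiff : ((0:ℕ), a) ∈ MullAux.endsS p (N, C) R0 ↔ p ∣ a + (xSeq p t).sum := by
            rw [hR0eq, MullAux.endsS_row p a 1 N C a (Or.inl (by omega))]
            rw [hS, hN]
            constructor
            · rintro ⟨-, -, h3⟩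
              rw [show 0 + (a + 1 - 1) = a + 0 from by omega] at h3
              exact Nat.dvd_of_mod_eq_zero h3
            · intro h
              refine ⟨by omega, by omega, ?_⟩
              rw [show 0 + (a + 1 - 1) = a + 0 from by omega]
              exact Nat.mod_eq_zero_of_dvd h
          by_cases hdvd : p ∣ a + (xSeq p t).sum
          · rw [if_neg (by rw [hmem0, hend0, hendiff]; tauto), if_pos hdvd]
            omega
          · rw [if_pos ⟨hmem0.2 hmem, by rw [hend0, hendiff]; exact hdvd⟩, if_neg hdvd]
        · -- t has positive first row
          rcases t with - | ⟨b, t'⟩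
          · simp at ht0
          simp only [List.getD_cons_zero] at iC iN0 ht0 hta iZ
          have hble : b ≤ a := hta
          have hb1 : 1 ≤ b := by omega
          have hs : max b 1 = b := by omega
          have hNpos : N ≠ 0 := fun h => ht0 (iN0.1 h)
          have hR0eq : R0 = (List.range' b (a + 1 - b)).map (fun j => ((0:ℕ), j)) := by
            rw [hR0def]
            simp only [List.getD_cons_zero, hs]
          simp only [List.drop_one, List.tail_cons] at iZ
          by_cases hNp : N % p = 0
          · -- skip case
            have hNz : (N : ZMod p) = 0 :=
              (ZMod.natCast_eq_zero_iff N p).2 (Nat.dvd_of_mod_eq_zero hNp)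
            have hx : p ∣ b + (xSeq p t').sum := by
              rw [← ZMod.natCast_eq_zero_iff, Nat.cast_add, ← iZ]
              exact hNz
            have hxseq : xSeq p (b :: t') = 0 :: xSeq p t' := by simp [xSeq, hx]
            have hsum : (xSeq p (b :: t')).sum = (xSeq p t').sum := by
              rw [hxseq, List.sum_cons, Nat.zero_add]
            have hrow : R0 = (((0:ℕ), b) : ℕ × ℕ) ::
                (List.range' (b+1) (a-b)).map (fun j => ((0:ℕ), j)) := by
              rw [hR0eq, show a + 1 - b = (a - b) + 1 from by omega, List.range'_succ,
                List.map_cons]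
            have hskipcond : N % p = 0 ∧ ((((0:ℕ), b) : ℕ × ℕ)).2 ≤ C := ⟨hNp, by simp [iC]⟩
            have hrunR0 : MullAux.runS p (N, C) R0 =
                (List.range' (b+1) (a-b)).map (fun j => ((0:ℕ), j)) := by
              rw [hrow]
              rw [MullAux.runS, if_pos hskipcond]
              exact MullAux.runS_row p (a-b) (b+1) N C (Or.inl (by omega))
            have hendR0 : ((0:ℕ), a) ∈ MullAux.endsS p (N, C) R0 ↔
                (b + 1 ≤ a ∧ (N + (a - b)) % p = 0) := by
              rw [hrow]
              rw [MullAux.endsS, if_pos hskipcond]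
              rw [MullAux.endsS_row p (a-b) (b+1) N C a (Or.inl (by omega))]
              constructor
              · rintro ⟨h1, -, h3⟩
                refine ⟨h1, ?_⟩
                rw [show N + (a - b) = N + (a + 1 - (b+1)) from by omega]
                exact h3
              · rintro ⟨h1, h2⟩
                refine ⟨h1, by omega, ?_⟩
                rw [show N + (a + 1 - (b+1)) = N + (a - b) from by omega]
                exact h2
            have hkey : (N + (a - b)) % p = 0 ↔ p ∣ a + (xSeq p t').sum := by
              have hcast : ((N + (a - b) : ℕ) : ZMod p) = ((a + (xSeq p t').sum : ℕ) : ZMod p) := by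
                rw [Nat.cast_add, Nat.cast_add, Nat.cast_sub hble, iZ]
                ring
              constructor
              · intro h
                rw [← ZMod.natCast_eq_zero_iff, ← hcast]
                exact (ZMod.natCast_eq_zero_iff _ p).2 (Nat.dvd_of_mod_eq_zero h)
              · intro h
                apply Nat.mod_eq_zero_of_dvd
                rw [← ZMod.natCast_eq_zero_iff] at h ⊢
                rw [hcast]
                exact h
            by_cases hab : a = b
            · -- whole row skipped
              have hnm : ¬ (((0:ℕ), a) ∈ pRim p (a :: b :: t') ∧
                  ((0:ℕ), a) ∉ segEnds p (a :: b :: t')) := by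
                rintro ⟨h1, -⟩
                rw [hmem0, hrunR0] at h1
                obtain ⟨j, hj, hj2⟩ := List.mem_map.1 h1
                have := List.mem_range'_1.1 hj
                omega
              rw [if_neg hnm]
              have hx0 : p ∣ a + (xSeq p (b :: t')).sum := by
                rw [hsum, hab]
                exact hx
              rw [if_pos hx0]
              omega
            · have hmem : ((0:ℕ), a) ∈ MullAux.runS p (N, C) R0 := by
                rw [hrunR0]
                simp only [List.mem_map, List.mem_range'_1]
                exact ⟨a, ⟨by omega, by omega⟩, rfl⟩
              by_cases hdvd : p ∣ a + (xSeq p (b :: t')).sum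
              · have hnot : ¬ (((0:ℕ), a) ∈ pRim p (a :: b :: t') ∧
                    ((0:ℕ), a) ∉ segEnds p (a :: b :: t')) := by
                  rintro ⟨-, h2⟩
                  apply h2
                  rw [hend0, hendR0]
                  exact ⟨by omega, hkey.2 (by rw [← hsum]; exact hdvd)⟩
                rw [if_neg hnot, if_pos hdvd]
                omega
              · have hyes : (((0:ℕ), a) ∈ pRim p (a :: b :: t') ∧
                    ((0:ℕ), a) ∉ segEnds p (a :: b :: t')) := by
                  refine ⟨hmem0.2 hmem, fun hc => ?_⟩
                  rw [hend0, hendR0] at hc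
                  exact hdvd (by rw [hsum]; exact hkey.1 hc.2)
                rw [if_pos hyes, if_neg hdvd]
          · -- no-skip case
            have hNz : (N : ZMod p) ≠ 0 := fun h =>
              hNp (Nat.mod_eq_zero_of_dvd ((ZMod.natCast_eq_zero_iff N p).1 h))
            have hx : ¬ p ∣ b + (xSeq p t').sum := by
              intro hdvd
              apply hNz
              rw [iZ, ← Nat.cast_add]
              exact (ZMod.natCast_eq_zero_iff _ p).2 hdvd
            have hxseq : xSeq p (b :: t') = 1 :: xSeq p t' := by simp [xSeq, hx]
            have hsum : (xSeq p (b :: t')).sum = 1 + (xSeq p t').sum := by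
              rw [hxseq, List.sum_cons]
            have hrunR0 : MullAux.runS p (N, C) R0 = R0 := by
              rw [hR0eq]
              exact MullAux.runS_row p (a+1-b) b N C (Or.inr hNp)
            have hmem : ((0:ℕ), a) ∈ MullAux.runS p (N, C) R0 := by
              rw [hrunR0, hR0eq]
              simp only [List.mem_map, List.mem_range'_1]
              exact ⟨a, ⟨by omega, by omega⟩, rfl⟩
            have hendR0 : ((0:ℕ), a) ∈ MullAux.endsS p (N, C) R0 ↔
                (N + (a + 1 - b)) % p = 0 := by
              rw [hR0eq, MullAux.endsS_row p (a+1-b) b N C a (Or.inr hNp)]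
              constructor
              · rintro ⟨-, -, h3⟩; exact h3
              · intro h; exact ⟨by omega, by omega, h⟩
            have hkey : (N + (a + 1 - b)) % p = 0 ↔ p ∣ a + (xSeq p (b :: t')).sum := by
              have hcast : ((N + (a + 1 - b) : ℕ) : ZMod p)
                  = ((a + (xSeq p (b :: t')).sum : ℕ) : ZMod p) := by
                rw [Nat.cast_add, Nat.cast_add, Nat.cast_sub (by omega : b ≤ a + 1), iZ, hsum]
                push_cast
                ring
              constructor
              · intro h
                rw [← ZMod.natCast_eq_zero_iff, ← hcast]
                exact (ZMod.natCast_eq_zero_iff _ p).2 (Nat.dvd_of_mod_eq_zero h)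
              · intro h
                apply Nat.mod_eq_zero_of_dvd
                rw [← ZMod.natCast_eq_zero_iff] at h ⊢
                rw [hcast]
                exact h
            by_cases hdvd : p ∣ a + (xSeq p (b :: t')).sum
            · have hnot : ¬ (((0:ℕ), a) ∈ pRim p (a :: b :: t') ∧
                  ((0:ℕ), a) ∉ segEnds p (a :: b :: t')) := by
                rintro ⟨-, h2⟩
                exact h2 (hend0.2 (hendR0.2 (hkey.2 hdvd)))
              rw [if_neg hnot, if_pos hdvd]
              omega
            · have hyes : (((0:ℕ), a) ∈ pRim p (a :: b :: t') ∧
                  ((0:ℕ), a) ∉ segEnds p (a :: b :: t')) :=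
                ⟨hmem0.2 hmem, fun hc => hdvd (hkey.1 (hendR0.1 (hend0.1 hc)))⟩
              rw [if_pos hyes, if_neg hdvd]
end

section
/- Let p be a prime, λ a partition with λ_{m+1} = 0, and define x_1,...,x_m as in the recursive description of J(λ) (x_i = 1 iff p ∤ (λ_i + x_{i+1} + ... + x_m)). Then a(λ) = λ₁ + x₂ + x₃ + ... + x_m, where a(λ) is the number of nodes in the p-rim of λ. -/
namespace MullineuxAux


/-- Count of nodes taken by the segmentation process, column-list version. -/
def cnt (p : ℕ) : ℕ → List ℕ → ℕ
  | 0, _ => 0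
  | _ + 1, [] => 0
  | fuel + 1, L =>
      (L.take p).length +
        cnt p fuel ((L.drop p).filter (fun x => ((L.take p).getLast?).getD 0 < x))

@[simp] lemma cnt_nil (p fuel : ℕ) : cnt p fuel [] = 0 := by
  cases fuel <;> rfl

lemma cnt_cons (p fuel : ℕ) (a : ℕ) (L : List ℕ) :
    cnt p (fuel + 1) (a :: L) =
      ((a :: L).take p).length +
        cnt p fuel (((a :: L).drop p).filter
          (fun x => (((a :: L).take p).getLast?).getD 0 < x)) := rfl

lemma cnt_step (p fuel : ℕ) (L : List ℕ) (hL : L ≠ []) :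
    cnt p (fuel + 1) L =
      (L.take p).length +
        cnt p fuel ((L.drop p).filter (fun x => ((L.take p).getLast?).getD 0 < x)) := by
  cases L with
  | nil => exact absurd rfl hL
  | cons a L => exact cnt_cons p fuel a L

lemma length_filter_drop_lt (p : ℕ) (hp : 0 < p) (L : List ℕ) (c : ℕ) (hL : L ≠ []) :
    ((L.drop p).filter (fun x => c < x)).length ≤ L.length - 1 := by
  calc ((L.drop p).filter (fun x => c < x)).length ≤ (L.drop p).length :=
        List.length_filter_le _ _
    _ = L.length - p := by rw [List.length_drop]
    _ ≤ L.length - 1 := Nat.sub_le_sub_left hp _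

/-- fuel irrelevance -/
lemma cnt_fuel (p : ℕ) (hp : 0 < p) :
    ∀ f₁, ∀ L : List ℕ, ∀ f₂, L.length ≤ f₁ → L.length ≤ f₂ →
      cnt p f₁ L = cnt p f₂ L := by
  intro f₁
  induction f₁ with
  | zero => intro L f₂ h1 _; rw [List.length_eq_zero_iff.mp (Nat.le_zero.mp h1)]; simp
  | succ f ih =>
    intro L f₂ h1 h2
    rcases eq_or_ne L [] with rfl | hL
    · simp
    · have hlen : 1 ≤ L.length := List.length_pos_iff.mpr hL
      obtain ⟨f₂', rfl⟩ : ∃ f₂', f₂ = f₂' + 1 := ⟨f₂ - 1, by omega⟩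
      rw [cnt_step p f L hL, cnt_step p f₂' L hL]
      congr 1
      exact ih _ _ (le_trans (length_filter_drop_lt p hp L _ hL) (by omega))
        (le_trans (length_filter_drop_lt p hp L _ hL) (by omega))

/-- canonical count -/
def CNT (p : ℕ) (L : List ℕ) : ℕ := cnt p L.length L

lemma cnt_eq_CNT (p : ℕ) (hp : 0 < p) (f : ℕ) (L : List ℕ) (h : L.length ≤ f) :
    cnt p f L = CNT p L := cnt_fuel p hp f L L.length h le_rfl

@[simp] lemma CNT_nil (p : ℕ) : CNT p [] = 0 := by simp [CNT]

/-- count on a strictly increasing run of columns: everything is taken -/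
lemma cnt_range' (p : ℕ) (hp : 0 < p) :
    ∀ f n s, n ≤ f → cnt p f (List.range' s n) = n := by
  intro f
  induction f with
  | zero => intro n s h; interval_cases n; simp
  | succ f ih =>
    intro n s h
    rcases Nat.eq_zero_or_pos n with rfl | hn
    · simp
    · have hne : List.range' s n ≠ [] := by rw [Ne, List.range'_eq_nil_iff]; omega
      rw [cnt_step p f _ hne]
      have hsplit : p ≤ n → List.range' s p ++ List.range' (s + p) (n - p) = List.range' s n := by
        intro hpn
        have := List.range'_append (s := s) (m := p) (n := n - p) (step := 1)
        simp only [one_mul] at this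
        rw [this, show p + (n - p) = n by omega]
      have hdrop : (List.range' s n).drop p = List.range' (s + p) (n - p) := by
        rcases le_or_gt p n with hpn | hpn
        · rw [← hsplit hpn]
          exact List.drop_left' (by simp)
        · rw [List.drop_eq_nil_iff.mpr (by simp; omega)]
          rw [show n - p = 0 by omega]; rfl
      have htake : (List.range' s n).take p = List.range' s (min p n) := by
        rcases le_or_gt p n with hpn | hpn
        · rw [← hsplit hpn, min_eq_left hpn]
          exact List.take_left' (by simp)
        · rw [List.take_of_length_le (by simp; omega), min_eq_right (le_of_lt hpn)]
      have hlast : (((List.range' s n).take p).getLast?).getD 0 = s + min p n - 1 := by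
        rw [htake]
        have : min p n = (min p n - 1) + 1 := by omega
        rw [this, List.range'_concat, List.getLast?_concat]
        simp only [Option.getD_some, Nat.mul_one]
        omega
      rw [hlast, hdrop]
      have hfil : (List.range' (s + p) (n - p)).filter (fun x => s + min p n - 1 < x)
          = List.range' (s + p) (n - p) := by
        rw [List.filter_eq_self]
        intro a ha
        rw [List.mem_range'_1] at ha
        simp only [decide_eq_true_eq]
        omega
      rw [hfil, ih (n - p) (s + p) (by omega)]
      simp [List.length_take]
      omega


open Mullineux

/-- relation between segsAux on pairs and cnt on the column list -/
lemma length_flatten_segsAux (p : ℕ) :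
    ∀ fuel (L : List (ℕ × ℕ)),
      ((segsAux p fuel L).flatten).length = cnt p fuel (L.map Prod.snd) := by
  intro fuel
  induction fuel with
  | zero => intro L; rfl
  | succ f ih =>
    intro L
    cases L with
    | nil => rfl
    | cons q L0 =>
      rw [show segsAux p (f+1) (q :: L0) =
        ((q :: L0).take p) :: segsAux p f (((q :: L0).drop p).filter
          (fun r => ((((q :: L0).take p).getLast?).map Prod.snd).getD 0 < r.2)) from rfl]
      rw [List.flatten_cons, List.length_append, ih, List.map_cons, cnt_cons]
      rw [← List.map_cons, ← List.map_take, ← List.map_drop, List.getLast?_map,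
        List.filter_map, List.length_map]
      rfl

/-- Column list of the rim. -/
def cols (l : List ℕ) : List ℕ := (rimList l).map Prod.snd

lemma length_cols (l : List ℕ) : (cols l).length = (rimList l).length :=
  List.length_map _

lemma aNum_eq_CNT (p : ℕ) (l : List ℕ) : aNum p l = CNT p (cols l) := by
  unfold aNum pRim segs CNT
  rw [length_flatten_segsAux, length_cols]
  rfl

lemma cols_eq (l : List ℕ) :
    cols l = ((List.range l.length).reverse).flatMap (fun i =>
      List.range' (max (l.getD (i+1) 0) 1) (l.getD i 0 + 1 - max (l.getD (i+1) 0) 1)) := by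
  unfold cols rimList
  rw [List.map_flatMap]
  congr 1; funext i
  rw [List.map_map]
  simp

@[simp] lemma cols_nil : cols ([] : List ℕ) = [] := rfl

lemma cols_cons (a : ℕ) (rest : List ℕ) :
    cols (a :: rest) = cols rest ++
      List.range' (max (rest.getD 0 0) 1) (a + 1 - max (rest.getD 0 0) 1) := by
  rw [cols_eq, cols_eq]
  rw [List.length_cons, List.range_succ_eq_map, List.reverse_cons, List.flatMap_append,
    ← List.map_reverse, List.flatMap_map]
  congr 1
  · simp only [List.flatMap_cons, List.flatMap_nil, List.append_nil, List.getD_cons_zero,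
      List.getD_cons_succ]

lemma getD_le_head (a : ℕ) (rest : List ℕ) (h : IsPartition (a :: rest)) :
    rest.getD 0 0 ≤ a := by
  cases rest with
  | nil => simp
  | cons b rest' =>
    have := (List.pairwise_cons.mp (show List.Pairwise (· ≥ ·) (a :: b :: rest') from h)).1 b (by simp)
    simpa using this

lemma cols_props : ∀ l : List ℕ, IsPartition l →
    (cols l).Pairwise (· ≤ ·) ∧ (∀ x ∈ cols l, 1 ≤ x ∧ x ≤ l.getD 0 0) ∧
      (1 ≤ l.getD 0 0 → (cols l).getLast? = some (l.getD 0 0)) := by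
  intro l hl
  induction l with
  | nil => simp
  | cons a rest ih =>
    have hr : IsPartition rest := hl.of_cons
    have har : rest.getD 0 0 ≤ a := getD_le_head a rest hl
    obtain ⟨ih1, ih2, ih3⟩ := ih hr
    rw [cols_cons]
    by_cases hr0 : rest.getD 0 0 = 0
    · have hnil : cols rest = [] := by
        rw [List.eq_nil_iff_forall_not_mem]
        intro x hx
        have := ih2 x hx
        omega
      rw [hnil, hr0, List.nil_append, Nat.zero_max, Nat.add_sub_cancel]
      simp only [List.getD_cons_zero]
      refine ⟨(List.pairwise_lt_range' (s := 1) (n := a)).imp (fun h => le_of_lt h), fun x hx => ?_, fun ha => ?_⟩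
      · rw [List.mem_range'_1] at hx; omega
      · rw [show a = (a - 1) + 1 by omega, List.range'_concat, List.getLast?_concat]
        simp only [Nat.mul_one, Option.some.injEq]
        omega
    · have hr1 : 1 ≤ rest.getD 0 0 := by omega
      rw [max_eq_left hr1]
      set r := rest.getD 0 0 with hrdef
      have ht : 1 ≤ a + 1 - r := by omega
      have hrangene : List.range' r (a + 1 - r) ≠ [] := by
        rw [Ne, List.range'_eq_nil_iff]; omega
      simp only [List.getD_cons_zero]
      refine ⟨?_, fun x hx => ?_, fun _ => ?_⟩
      · rw [List.pairwise_append]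
        refine ⟨ih1, (List.pairwise_lt_range' (s := r)).imp (fun h => le_of_lt h), ?_⟩
        intro x hx y hy
        have hxr := (ih2 x hx).2
        rw [List.mem_range'_1] at hy
        omega
      · rw [List.mem_append] at hx
        rcases hx with hx | hx
        · have := ih2 x hx; omega
        · rw [List.mem_range'_1] at hx; omega
      · rw [List.getLast?_append]
        rw [show a + 1 - r = (a + 1 - r - 1) + 1 by omega, List.range'_concat,
          List.getLast?_concat]
        simp only [Option.some_or, Nat.mul_one, Option.some.injEq]
        omega

lemma cols_eq_nil (l : List ℕ) (hl : IsPartition l) (h0 : l.getD 0 0 = 0) :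
    cols l = [] := by
  obtain ⟨-, h2, -⟩ := cols_props l hl
  rw [List.eq_nil_iff_forall_not_mem]
  intro x hx
  have := h2 x hx
  omega

lemma getLast?_max : ∀ (M : List ℕ) (C : ℕ), M.Pairwise (· ≤ ·) → (∀ x ∈ M, x ≤ C) →
    C ∈ M → M.getLast? = some C := by
  intro M
  induction M with
  | nil => intro C _ _ h; simp at h
  | cons a M' ih =>
    intro C hs hb hc
    cases M' with
    | nil =>
      simp only [List.mem_singleton] at hc
      rw [hc]; rfl
    | cons b M'' =>
      rw [List.getLast?_cons_cons]
      apply ih C hs.of_cons (fun x hx => hb x (List.mem_cons_of_mem a hx))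
      rcases List.mem_cons.mp hc with hca | hcm
      · have hab : a ≤ b := (List.pairwise_cons.mp hs).1 b (by simp)
        have hbC : b ≤ C := hb b (by simp)
        have : b = C := by omega
        rw [← this]; simp
      · exact hcm

lemma cnt_short (p : ℕ) (L : List ℕ) (h : L.length ≤ p) : CNT p L = L.length := by
  rcases eq_or_ne L [] with rfl | hL
  · simp
  · have h1 : 1 ≤ L.length := List.length_pos_iff.mpr hL
    unfold CNT
    rw [show L.length = (L.length - 1) + 1 by omega, cnt_step p _ L hL]
    rw [List.drop_eq_nil_iff.mpr h, List.filter_nil, cnt_nil,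
      List.take_of_length_le h]
    omega

lemma filter_range'_top (C t c : ℕ) (hc : c < C) :
    (List.range' C t).filter (fun x => c < x) = List.range' C t := by
  rw [List.filter_eq_self]
  intro a ha
  rw [List.mem_range'_1] at ha
  simp only [decide_eq_true_eq]
  omega

lemma filter_range'_head (C t : ℕ) (ht : 1 ≤ t) :
    (List.range' C t).filter (fun x => C < x) = List.range' (C + 1) (t - 1) := by
  rw [show t = (t - 1) + 1 by omega, List.range'_succ]
  rw [List.filter_cons_of_neg (by simp)]
  rw [filter_range'_top _ _ _ (Nat.lt_succ_self C)]
  simp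

lemma key (p : ℕ) (hp : 0 < p) : ∀ n, ∀ L : List ℕ, L.length ≤ n → ∀ C t : ℕ,
    L ≠ [] → L.Pairwise (· ≤ ·) → (∀ x ∈ L, x ≤ C) → L.getLast? = some C → 1 ≤ t →
    CNT p (L ++ List.range' C t) = CNT p L + t - (if p ∣ CNT p L then 1 else 0) := by
  intro n
  induction n with
  | zero =>
    intro L hn
    rw [List.length_eq_zero_iff.mp (Nat.le_zero.mp hn)]
    intro _ _ h _ _ _ _; exact absurd rfl h
  | succ n ihn =>
    intro L hn C t hLne hsort hbd hlast ht
    have hlen1 : 1 ≤ L.length := List.length_pos_iff.mpr hLne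
    have hCL : C ∈ L := by
      rw [List.getLast?_eq_getLast hLne] at hlast
      have := List.getLast_mem hLne
      rwa [Option.some_inj.mp hlast] at this
    have hTne : List.range' C t ≠ [] := by rw [Ne, List.range'_eq_nil_iff]; omega
    have hlenapp : (L ++ List.range' C t).length = L.length + t := by
      simp [List.length_append]
    have happne : L ++ List.range' C t ≠ [] := by
      simp [hLne]
    have hunf : CNT p (L ++ List.range' C t) =
        ((L ++ List.range' C t).take p).length +
          cnt p (L.length + t - 1) (((L ++ List.range' C t).drop p).filter
            (fun x => (((L ++ List.range' C t).take p).getLast?).getD 0 < x)) := by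
      unfold CNT
      rw [hlenapp, show L.length + t = (L.length + t - 1) + 1 by omega,
        cnt_step p _ _ happne]
      rw [show L.length + t - 1 + 1 - 1 = L.length + t - 1 by omega]
    rcases le_or_gt L.length p with hshort | hlong
    · -- Case B : |L| ≤ p
      have hCNTL : CNT p L = L.length := cnt_short p L hshort
      rcases eq_or_lt_of_le hshort with hEq | hlt
      · -- B1 : |L| = p
        have htake : (L ++ List.range' C t).take p = L := List.take_left' hEq
        have hdrop : (L ++ List.range' C t).drop p = List.range' C t := List.drop_left' hEq
        rw [hunf, htake, hdrop, hlast]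
        simp only [Option.getD_some]
        rw [filter_range'_head C t ht, cnt_range' p hp _ _ _ (by omega)]
        rw [hCNTL, ← hEq, if_pos (dvd_refl _)]
        omega
      · -- B2 : |L| < p
        rcases le_or_gt (L.length + t) p with hB2a | hB2b
        · -- everything in one segment
          have htake : (L ++ List.range' C t).take p = L ++ List.range' C t :=
            List.take_of_length_le (by omega)
          have hdrop : (L ++ List.range' C t).drop p = [] :=
            List.drop_eq_nil_iff.mpr (by omega)
          rw [hunf, htake, hdrop, List.filter_nil, cnt_nil, hlenapp, hCNTL,
            if_neg (fun hd => by have := Nat.le_of_dvd hlen1 hd; omega)]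
          omega
        · -- segment ends inside the top row
          set k := p - L.length with hk
          have hk1 : 1 ≤ k := by omega
          have hkt : k ≤ t := by omega
          have hTsplit : List.range' C t = List.range' C k ++ List.range' (C + k) (t - k) := by
            have := List.range'_append (s := C) (m := k) (n := t - k) (step := 1)
            simp only [one_mul, Nat.mul_one] at this
            rw [this, show k + (t - k) = t by omega]
          have hassoc : L ++ List.range' C t =
              (L ++ List.range' C k) ++ List.range' (C + k) (t - k) := by
            rw [hTsplit, List.append_assoc]
          have hlen2 : (L ++ List.range' C k).length = p := by
            simp [List.length_append]; omega
          have htake : (L ++ List.range' C t).take p = L ++ List.range' C k := by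
            rw [hassoc]; exact List.take_left' hlen2
          have hdrop : (L ++ List.range' C t).drop p = List.range' (C + k) (t - k) := by
            rw [hassoc]; exact List.drop_left' hlen2
          have hlast2 : (L ++ List.range' C k).getLast? = some (C + k - 1) := by
            rw [List.getLast?_append]
            rw [show k = (k - 1) + 1 by omega, List.range'_concat, List.getLast?_concat]
            simp only [Option.some_or, Option.some.injEq, Nat.mul_one]
            omega
          rw [hunf, htake, hdrop, hlast2]
          simp only [Option.getD_some]
          rw [filter_range'_top _ _ _ (by omega), cnt_range' p hp _ _ _ (by omega)]
          rw [hlen2, hCNTL, if_neg (fun hd => by have := Nat.le_of_dvd hlen1 hd; omega)]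
          omega
    · -- Case A : p < |L|
      have htake : (L ++ List.range' C t).take p = L.take p :=
        List.take_append_of_le_length (le_of_lt hlong)
      have hdrop : (L ++ List.range' C t).drop p = L.drop p ++ List.range' C t :=
        List.drop_append_of_le_length (le_of_lt hlong)
      have htakene : L.take p ≠ [] := by
        rw [Ne, List.take_eq_nil_iff]
        push_neg
        exact ⟨by omega, hLne⟩
      have hlentake : (L.take p).length = p := by
        rw [List.length_take]; omega
      have hcval : ((L.take p).getLast?).getD 0 = L[p - 1]'(by omega) := by
        rw [List.getLast?_eq_getLast htakene, List.getLast_eq_getElem]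
        simp only [Option.getD_some]
        rw [List.getElem_take]
        congr 1
        omega
      set c := ((L.take p).getLast?).getD 0 with hcdef
      have hcC : c ≤ C := by
        rw [hcval]
        exact hbd _ (List.getElem_mem _)
      have hdropbd : ∀ x ∈ L.drop p, c ≤ x := by
        intro x hx
        obtain ⟨j, hj, rfl⟩ := List.getElem_of_mem hx
        rw [List.getElem_drop]
        rw [hcval]
        exact (List.pairwise_iff_getElem.mp hsort) _ _ (by omega)
          (by rw [List.length_drop] at hj; omega) (by omega)
      -- unfold CNT p L one step as well
      have hunfL : CNT p L = p + cnt p (L.length - 1) ((L.drop p).filter (fun x => c < x)) := by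
        unfold CNT
        rw [show L.length = (L.length - 1) + 1 by omega, cnt_step p _ L hLne, ← hcdef,
          hlentake]
        rw [show L.length - 1 + 1 - 1 = L.length - 1 by omega]
      rcases eq_or_lt_of_le hcC with hceq | hclt
      · -- the first segment ends at column C
        have hfilL : (L.drop p).filter (fun x => c < x) = [] := by
          rw [List.filter_eq_nil_iff]
          intro x hx
          have h1 := hdropbd x hx
          have h2 : x ≤ C := hbd x (List.mem_of_mem_drop hx)
          simp only [decide_eq_true_eq]
          omega
        have hfilT : (List.range' C t).filter (fun x => c < x) = List.range' (C + 1) (t - 1) := by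
          rw [hceq]; exact filter_range'_head C t ht
        rw [hunf, htake, hdrop, ← hcdef, List.filter_append, hfilL, hfilT, List.nil_append,
          cnt_range' p hp _ _ _ (by omega), hlentake]
        rw [hunfL, hfilL, cnt_nil, if_pos (by simp [Nat.dvd_refl])]
        omega
      · -- the first segment ends strictly left of column C
        set L' := (L.drop p).filter (fun x => c < x) with hL'def
        have hL'sub : L'.Sublist L :=
          (List.filter_sublist).trans (List.drop_sublist p L)
        have hL'sort : L'.Pairwise (· ≤ ·) := List.Pairwise.sublist hL'sub hsort
        have hL'bd : ∀ x ∈ L', x ≤ C := fun x hx => hbd x (hL'sub.mem hx)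
        have hCdrop : C ∈ L.drop p := by
          have hll : L.length - 1 - p < (L.drop p).length := by
            rw [List.length_drop]; omega
          have : (L.drop p)[L.length - 1 - p] = C := by
            rw [List.getElem_drop]
            rw [List.getLast?_eq_getLast hLne, List.getLast_eq_getElem] at hlast
            have h2 := Option.some_inj.mp hlast
            rw [← h2]
            congr 1
            omega
          rw [← this]
          exact List.getElem_mem _
        have hCL' : C ∈ L' := by
          rw [hL'def, List.mem_filter]
          exact ⟨hCdrop, by simp only [decide_eq_true_eq]; omega⟩
        have hL'ne : L' ≠ [] := fun h => by rw [h] at hCL'; simp at hCL'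
        have hL'last : L'.getLast? = some C := getLast?_max L' C hL'sort hL'bd hCL'
        have hL'len : L'.length ≤ L.length - p := by
          calc L'.length ≤ (L.drop p).length := List.length_filter_le _ _
            _ = L.length - p := List.length_drop
        have hfilT : (List.range' C t).filter (fun x => c < x) = List.range' C t :=
          filter_range'_top _ _ _ hclt
        have hIH := ihn L' (le_trans hL'len (by omega)) C t hL'ne hL'sort hL'bd hL'last ht
        rw [hunf]
        rw [htake]
        rw [hdrop]
        rw [← hcdef]
        rw [List.filter_append]
        rw [hfilT]
        rw [hlentake]
        show p + cnt p (L.length + t - 1) (L' ++ List.range' C t) = _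
        rw [cnt_eq_CNT p hp _ _ (by simp only [List.length_append, List.length_range']; omega),
          hIH]
        rw [hunfL, cnt_eq_CNT p hp _ _ (by omega)]
        have hdvd : p ∣ p + CNT p L' ↔ p ∣ CNT p L' := by
          constructor
          · intro h; exact (Nat.dvd_add_right (dvd_refl p)).mp h
          · intro h; exact Dvd.dvd.add (dvd_refl p) h
        by_cases hd : p ∣ CNT p L'
        · rw [if_pos (hdvd.mpr hd), if_pos hd]
          omega
        · rw [if_neg (fun h => hd (hdvd.mp h)), if_neg hd]
          omega

lemma xSeq_cons (p c : ℕ) (L : List ℕ) :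
    xSeq p (c :: L) = (if p ∣ (c + (xSeq p L).sum) then 0 else 1) :: xSeq p L := rfl

lemma xSeq_sum_zero (p : ℕ) : ∀ l : List ℕ, IsPartition l → l.getD 0 0 = 0 →
    (xSeq p l).sum = 0 := by
  intro l
  induction l with
  | nil => intro _ _; rfl
  | cons a rest ih =>
    intro hl h0
    simp only [List.getD_cons_zero] at h0
    have har := getD_le_head a rest hl
    have hr0 : rest.getD 0 0 = 0 := by omega
    have hs := ih hl.of_cons hr0
    rw [xSeq_cons, List.sum_cons, hs, h0]
    simp

lemma aNum_top (p : ℕ) (hp : 0 < p) (a : ℕ) (rest : List ℕ)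
    (h : IsPartition (a :: rest)) (hr0 : rest.getD 0 0 = 0) :
    aNum p (a :: rest) = a := by
  rw [aNum_eq_CNT, cols_cons, cols_eq_nil rest h.of_cons hr0, hr0, List.nil_append,
    Nat.zero_max, Nat.add_sub_cancel]
  unfold CNT
  rw [cnt_range' p hp _ _ _ (by simp)]

lemma aNum_cons (p : ℕ) (hp : 0 < p) (a : ℕ) (rest : List ℕ)
    (h : IsPartition (a :: rest)) (hr1 : 1 ≤ rest.getD 0 0) :
    aNum p (a :: rest) = aNum p rest + (a + 1 - rest.getD 0 0) -
      (if p ∣ aNum p rest then 1 else 0) := by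
  obtain ⟨h1, h2, h3⟩ := cols_props rest h.of_cons
  have har := getD_le_head a rest h
  rw [aNum_eq_CNT, aNum_eq_CNT, cols_cons, max_eq_left hr1]
  have hlast := h3 hr1
  have hne : cols rest ≠ [] := by intro hnil; rw [hnil] at hlast; simp at hlast
  exact key p hp (cols rest).length (cols rest) le_rfl (rest.getD 0 0)
    (a + 1 - rest.getD 0 0) hne h1 (fun x hx => (h2 x hx).2) hlast (by omega)

end MullineuxAux


open Mullineux in
/-- `a(λ) = λ₁ + x₂ + x₃ + ⋯ + x_m`, where the `x_i` are defined recursively by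
`x_i = 1` iff `p ∤ λ_i + x_{i+1} + ⋯ + x_m`. -/
theorem aNum_eq_head_add_tail_xSeq (p : ℕ) (hp : p.Prime) (l : List ℕ)
    (hl : IsPartition l) :
    aNum p l = l.getD 0 0 + ((xSeq p l).drop 1).sum := by
  have hp0 : 0 < p := hp.pos
  induction l with
  | nil => rfl
  | cons a rest ih =>
    have hrp : IsPartition rest := hl.of_cons
    have hdrop1 : (xSeq p (a :: rest)).drop 1 = xSeq p rest := by
      rw [MullineuxAux.xSeq_cons]; rfl
    rw [List.getD_cons_zero, hdrop1]
    by_cases hr0 : rest.getD 0 0 = 0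
    · rw [MullineuxAux.aNum_top p hp0 a rest hl hr0, MullineuxAux.xSeq_sum_zero p rest hrp hr0]
      omega
    · have hr1 : 1 ≤ rest.getD 0 0 := by omega
      have hIH := ih hrp
      cases rest with
      | nil => simp at hr1
      | cons b rest' =>
        simp only [List.getD_cons_zero] at hIH hr1
        have hdrop2 : (xSeq p (b :: rest')).drop 1 = xSeq p rest' := by
          rw [MullineuxAux.xSeq_cons]; rfl
        rw [hdrop2] at hIH
        have hab : b ≤ a := by simpa using MullineuxAux.getD_le_head a (b :: rest') hl
        rw [MullineuxAux.aNum_cons p hp0 a (b :: rest') hl (by simpa using hr1), hIH, MullineuxAux.xSeq_cons,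
          List.sum_cons]
        simp only [List.getD_cons_zero]
        by_cases hd : p ∣ b + (xSeq p rest').sum
        · rw [if_pos hd, if_pos hd]
          omega
        · rw [if_neg hd, if_neg hd]
          omega
end

section
/- Let p be a prime and λ a p-restricted partition. Then j(λ) equals the first part of the Mullineux conjugate M(λ). -/
open Mullineux List

namespace XuProof

def isR (l : List ℕ) (q : ℕ × ℕ) : Prop := q.2 = l.getD q.1 0

instance (l : List ℕ) : DecidablePred (isR l) := fun q => instDecidableEqNat _ _

def Rel (l : List ℕ) (q q' : ℕ × ℕ) : Prop :=
  (q'.2 = q.2 + 1 ∧ ¬ isR l q) ∨ (q'.2 = q.2 ∧ isR l q)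

def lastcol (L : List (ℕ × ℕ)) : ℕ := ((L.getLast?).map Prod.snd).getD 0
def headcol (L : List (ℕ × ℕ)) : ℕ := ((L.head?).map Prod.snd).getD 0

lemma rel_mono {l q q'} (h : Rel l q q') : q.2 ≤ q'.2 := by
  rcases h with ⟨h, _⟩ | ⟨h, _⟩ <;> omega

lemma rel_le_succ {l q q'} (h : Rel l q q') : q'.2 ≤ q.2 + 1 := by
  rcases h with ⟨h, _⟩ | ⟨h, _⟩ <;> omega

/-- filtering a column-monotone list by `c < col` yields a suffix -/
lemma suffix_filter (c : ℕ) :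
    ∀ (L : List (ℕ × ℕ)), L.Pairwise (fun a b => a.2 ≤ b.2) →
      L.filter (fun q => c < q.2) <:+ L := by
  intro L hL
  induction L with
  | nil => simp
  | cons a t ih =>
    rw [pairwise_cons] at hL
    by_cases hc : c < a.2
    · have : t.filter (fun q => c < q.2) = t :=
        List.filter_eq_self.2 (fun b hb => by simpa using lt_of_lt_of_le hc (hL.1 b hb))
      simp [List.filter_cons, hc, this]
    · rw [List.filter_cons, if_neg (by simpa using hc)]
      exact (ih hL.2).trans (t.suffix_cons a)

lemma head_filter (c : ℕ) :
    ∀ (L : List (ℕ × ℕ)), Chain' (fun a b => b.2 ≤ a.2 + 1) L →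
      (∀ q ∈ L.head?, q.2 ≤ c + 1) →
      ∀ q ∈ (L.filter (fun q => c < q.2)).head?, q.2 = c + 1 := by
  intro L
  induction L with
  | nil => simp
  | cons a t ih =>
    intro hC hh q hq
    by_cases hc : c < a.2
    · rw [List.filter_cons, if_pos (by simpa using hc)] at hq
      simp only [head?_cons, Option.mem_def, Option.some_inj] at hq
      have := hh a (by simp)
      subst hq
      omega
    · rw [List.filter_cons, if_neg (by simpa using hc)] at hq
      refine ih hC.tail ?_ q hq
      intro b hb
      have := List.isChain_cons.1 hC
      have hab := this.1 b hb
      omega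

/-- `true` iff the last element satisfies `isR`. -/
def lastR (l : List ℕ) (L : List (ℕ × ℕ)) : Bool :=
  match L.getLast? with
  | none => false
  | some q => decide (isR l q)

lemma countP_chain (l : List ℕ) :
    ∀ (L : List (ℕ × ℕ)), Chain' (Rel l) L → L ≠ [] →
      (L.countP (fun q => decide (isR l q)) : ℤ) + lastcol L
        = (L.length : ℤ) - 1 + headcol L + (if lastR l L then 1 else 0) := by
  intro L
  induction L with
  | nil => simp
  | cons a t ih =>
    intro hC _
    cases t with
    | nil =>
      simp [lastcol, headcol, lastR, List.countP_cons]
      by_cases h : isR l a <;> simp [h] <;> omega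
    | cons b t' =>
      have hrel : Rel l a b := (List.isChain_cons_cons.1 hC).1
      have hih := ih (List.isChain_cons_cons.1 hC).2 (by simp)
      have hlast : lastcol (a :: b :: t') = lastcol (b :: t') := by
        simp [lastcol, List.getLast?_cons_cons]
      have hlastR : lastR l (a :: b :: t') = lastR l (b :: t') := by
        simp [lastR, List.getLast?_cons_cons]
      rw [List.countP_cons, hlast, hlastR]
      have hhead : headcol (a :: b :: t') = a.2 := rfl
      have hhead' : headcol (b :: t') = b.2 := rfl
      rw [hhead] at *
      rw [hhead'] at hih
      rcases hrel with ⟨h1, h2⟩ | ⟨h1, h2⟩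
      · rw [if_neg (by simpa using h2)]
        push_cast
        push_cast at hih
        simp only [List.length_cons] at *
        omega
      · rw [if_pos (by simpa using h2)]
        push_cast
        push_cast at hih
        simp only [List.length_cons] at *
        omega

lemma countP_erase_last (l : List ℕ) (d : List (ℕ × ℕ)) (x : ℕ × ℕ) (hx : x ∉ d) :
    ((d ++ [x]).countP (fun q => decide (isR l q) && !(q == x)) : ℤ)
      + (if isR l x then 1 else 0)
      = (d ++ [x]).countP (fun q => decide (isR l q)) := by
  rw [List.countP_append, List.countP_append]
  have h1 : d.countP (fun q => decide (isR l q) && !(q == x))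
      = d.countP (fun q => decide (isR l q)) := by
    apply List.countP_congr
    intro q hq
    have : q ≠ x := fun h => hx (h ▸ hq)
    simp [this]
  rw [h1]
  by_cases h : isR l x <;> simp [List.countP_cons, h]

def ends (p : ℕ) (S : List (List (ℕ × ℕ))) : List (ℕ × ℕ) :=
  S.filterMap (fun s => if s.length = p then s.getLast? else none)

lemma segsAux_nil (p f : ℕ) : segsAux p f [] = [] := by cases f <;> rfl

lemma segsAux_cons (p f : ℕ) (a : ℕ × ℕ) (t : List (ℕ × ℕ)) :
    segsAux p (f+1) (a :: t) =
      ((a :: t).take p) :: segsAux p f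
        (((a :: t).drop p).filter
          (fun q => ((((a :: t).take p).getLast?).map Prod.snd).getD 0 < q.2)) := rfl

lemma mem_of_mem_ends {p : ℕ} {S : List (List (ℕ × ℕ))} {q : ℕ × ℕ}
    (h : q ∈ ends p S) : q ∈ S.flatten := by
  rw [ends, List.mem_filterMap] at h
  obtain ⟨s, hs, hq⟩ := h
  rw [List.mem_flatten]
  refine ⟨s, hs, ?_⟩
  by_cases hl : s.length = p
  · rw [if_pos hl] at hq; exact List.mem_of_mem_getLast? hq
  · rw [if_neg hl] at hq; simp at hq


lemma segsAux_cons' (p f : ℕ) (L : List (ℕ × ℕ)) (h : L ≠ []) :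
    segsAux p (f+1) L =
      (L.take p) :: segsAux p f
        ((L.drop p).filter (fun q => lastcol (L.take p) < q.2)) := by
  obtain ⟨a, t, rfl⟩ := List.exists_cons_of_ne_nil h
  rfl

theorem main (p : ℕ) (hp : 1 ≤ p) (l : List ℕ) :
    ∀ (fuel : ℕ) (L : List (ℕ × ℕ)) (c : ℕ),
      L.length ≤ fuel → L ≠ [] → Chain' (Rel l) L → L.Nodup →
      headcol L = c + 1 → (∀ q ∈ L.getLast?, isR l q) →
      ((segsAux p fuel L).flatten.Sublist L) ∧
      (((segsAux p fuel L).flatten.countP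
          (fun q => decide (isR l q) && !(decide (q ∈ ends p (segsAux p fuel L))))) : ℤ)
        = ((segsAux p fuel L).flatten.length : ℤ) - lastcol L + c
          + (if p ∣ (segsAux p fuel L).flatten.length then 0 else 1) := by
  intro fuel
  induction fuel with
  | zero =>
    intro L c hfuel hne _ _ _ _
    exact absurd (List.length_eq_zero_iff.mp (Nat.le_zero.mp hfuel)) hne
  | succ f ih =>
    intro L c hfuel hne hC hN hhd hlast
    rw [segsAux_cons' p f L hne]
    set s := L.take p with hs
    set c' := lastcol s with hc'
    set L2 := (L.drop p).filter (fun q => c' < q.2) with hL2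
    have hsplit : s ++ L.drop p = L := by rw [hs]; exact List.take_append_drop p L
    have hslen : s.length = min p L.length := by rw [hs, List.length_take]
    have hLpos : 0 < L.length := List.length_pos_iff.mpr hne
    have hsne : s ≠ [] := by
      rw [← List.length_pos_iff, hslen]; omega
    have hhds : headcol s = c + 1 := by
      rw [← hhd, headcol, headcol, hs, List.head?_take, if_neg (by omega)]
    have hchains : Chain' (Rel l) s := hC.take p
    have hnodups : s.Nodup := hN.sublist (hs ▸ List.take_sublist p L)
    haveI : IsTrans (ℕ × ℕ) (fun a b => a.2 ≤ b.2) := ⟨fun _ _ _ => le_trans⟩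
    have hmono : Pairwise (fun a b : ℕ × ℕ => a.2 ≤ b.2) L :=
      List.isChain_iff_pairwise.mp (hC.imp (fun _ _ => rel_mono))
    have hCsplit : Chain' (Rel l) (s ++ L.drop p) := by rw [hsplit]; exact hC
    have hjun : ∀ x ∈ s.getLast?, ∀ y ∈ (L.drop p).head?, Rel l x y :=
      (List.isChain_append.mp hCsplit).2.2
    have hgl : s.getLast? = some (s.getLast hsne) := List.getLast?_eq_getLast _
    set x := s.getLast hsne with hxdef
    have hxcol : x.2 = c' := by rw [hc', lastcol, hgl]; rfl
    have hxmem : x ∈ s := List.getLast_mem hsne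
    have hxd : x ∉ s.dropLast := by
      have hn2 := hnodups
      rw [← List.dropLast_concat_getLast hsne] at hn2
      have := (List.nodup_append'.mp hn2).2.2
      intro hmem
      exact this hmem (by simp [hxdef])
    have hcntS := countP_chain l s hchains hsne
    have hlastRs : lastR l s = decide (isR l x) := by rw [lastR, hgl]
    by_cases h2 : L2 = []
    · -- final segment
      rw [h2, segsAux_nil]
      have hlcL : lastcol L = c' := by
        by_cases hlen : L.length ≤ p
        · rw [hc', hs, List.take_of_length_le hlen]
        · have hdne : L.drop p ≠ [] := by
            rw [← List.length_pos_iff, List.length_drop]; omega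
          have hdcols_le : ∀ yq ∈ L.drop p, yq.2 ≤ c' := by
            intro yq hyq
            have := List.filter_eq_nil_iff.mp h2 yq hyq
            simpa using this
          have hcross : ∀ yq ∈ L.drop p, c' ≤ yq.2 := by
            have hpw : Pairwise (fun a b : ℕ × ℕ => a.2 ≤ b.2) (s ++ L.drop p) := by
              rw [hsplit]; exact hmono
            intro yq hyq
            have := (List.pairwise_append.mp hpw).2.2 x hxmem yq hyq
            omega
          have hgLd : L.getLast? = (L.drop p).getLast? := by
            conv_lhs => rw [← hsplit]
            exact List.getLast?_append_of_ne_nil _ hdne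
          have hgld2 : (L.drop p).getLast? = some ((L.drop p).getLast hdne) :=
            List.getLast?_eq_getLast _
          have hmemlast : (L.drop p).getLast hdne ∈ L.drop p := List.getLast_mem hdne
          have h1 := hdcols_le _ hmemlast
          have h2' := hcross _ hmemlast
          rw [lastcol, hgLd, hgld2]
          simp only [Option.map_some, Option.getD_some]
          omega
      have hlx : isR l x := by
        by_cases hlen : L.length ≤ p
        · have hsL : s = L := by rw [hs]; exact List.take_of_length_le hlen
          apply hlast
          rw [← hsL, hgl]; rfl
        · have hdne : L.drop p ≠ [] := by
            rw [← List.length_pos_iff, List.length_drop]; omega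
          have hhd' : (L.drop p).head? = some ((L.drop p).head hdne) := List.head?_eq_head _
          have hrel := hjun x (by rw [hgl]; rfl) _ (by rw [hhd']; rfl)
          have hle := List.filter_eq_nil_iff.mp h2 _ (List.head_mem hdne)
          simp only [decide_eq_true_eq] at hle
          rcases hrel with ⟨hcol, _⟩ | ⟨_, hr⟩
          · omega
          · exact hr
      -- compute ends and counts
      rw [List.flatten_cons, List.flatten_nil, List.append_nil]
      constructor
      · exact hs ▸ List.take_sublist p L
      by_cases hfull : s.length = p
      · have hendseq : ends p [s] = [x] := by
          simp [ends, List.filterMap_cons, hfull, hgl]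
        rw [hendseq]
        have hcongr : s.countP (fun q => decide (isR l q) && !(decide (q ∈ [x])))
            = s.countP (fun q => decide (isR l q) && !(q == x)) := by
          apply List.countP_congr
          intro q _
          simp [List.mem_singleton]
        have herase := countP_erase_last l s.dropLast x hxd
        rw [List.dropLast_concat_getLast hsne] at herase
        rw [hcongr, hlcL, hfull, if_pos (dvd_refl p)]
        rw [hlastRs] at hcntS
        rw [if_pos hlx] at herase
        rw [if_pos (by simpa using hlx)] at hcntS
        rw [hhds] at hcntS
        push_cast at herase hcntS ⊢
        omega
      · have hendseq : ends p [s] = [] := by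
          simp [ends, List.filterMap_cons, hfull]
        rw [hendseq]
        have hcongr : s.countP (fun q => decide (isR l q) && !(decide (q ∈ ([] : List (ℕ×ℕ)))))
            = s.countP (fun q => decide (isR l q)) := by
          apply List.countP_congr; intro q _; simp
        have hnd : ¬ p ∣ s.length := by
          intro hdvd
          have h1 : 0 < s.length := List.length_pos_iff.mpr hsne
          have := Nat.le_of_dvd h1 hdvd
          omega
        rw [hcongr, hlcL, if_neg hnd]
        rw [hlastRs, if_pos (by simpa using hlx)] at hcntS
        rw [hhds] at hcntS
        push_cast at hcntS ⊢
        omega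
    · -- recursive case
      have hlen : p < L.length := by
        by_contra hcon
        exact h2 (by rw [hL2, List.drop_eq_nil_of_le (by omega), List.filter_nil])
      have hfull : s.length = p := by omega
      have hdne : L.drop p ≠ [] := by
        rw [← List.length_pos_iff, List.length_drop]; omega
      have hmonod : Pairwise (fun a b : ℕ × ℕ => a.2 ≤ b.2) (L.drop p) :=
        List.Pairwise.sublist (List.drop_sublist p L) hmono
      have hsuf2 : L2 <:+ L.drop p := suffix_filter c' _ hmonod
      have hsufL : L2 <:+ L := hsuf2.trans (List.drop_suffix p L)
      have hsub2 : L2.Sublist L := hsufL.sublist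
      have hchain2 : Chain' (Rel l) L2 := hC.suffix hsufL
      have hnodup2 : L2.Nodup := hN.sublist hsub2
      have hhd2 : headcol L2 = c' + 1 := by
        have hchd : Chain' (fun a b : ℕ × ℕ => b.2 ≤ a.2 + 1) (L.drop p) :=
          (hC.drop p).imp (fun _ _ => rel_le_succ)
        have hheadle : ∀ q ∈ (L.drop p).head?, q.2 ≤ c' + 1 := by
          intro y hy
          have := rel_le_succ (hjun x (by rw [hgl]; rfl) y hy)
          omega
        have hhf := head_filter c' (L.drop p) hchd hheadle
        have hh2 : L2.head? = some (L2.head h2) := List.head?_eq_head _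
        have := hhf _ (by rw [← hL2, hh2]; rfl)
        rw [headcol, hh2]
        simpa using this
      have hlast2 : L2.getLast? = L.getLast? := by
        obtain ⟨pre, hpre⟩ := hsufL
        rw [← hpre, List.getLast?_append_of_ne_nil _ h2]
      have hfuel2 : L2.length ≤ f := by
        have h1 : L2.length ≤ (L.drop p).length := by
          rw [hL2]; exact List.length_filter_le _ _
        rw [List.length_drop] at h1
        omega
      obtain ⟨hsubF, hcnt⟩ := ih L2 c' hfuel2 h2 hchain2 hnodup2 hhd2
        (by rw [hlast2]; exact hlast)
      set S' := segsAux p f L2 with hS'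
      set F' := S'.flatten with hF'
      have hdisj : s.Disjoint (L.drop p) := by
        have hn2 := hN
        rw [← hsplit] at hn2
        exact (List.nodup_append'.mp hn2).2.2
      have hmemF' : ∀ q ∈ F', q ∈ L.drop p := fun q hq =>
        hsuf2.sublist.subset (hsubF.subset hq)
      have hends : ends p (s :: S') = x :: ends p S' := by
        simp [ends, List.filterMap_cons, hfull, hgl]
      rw [List.flatten_cons, hends]
      constructor
      · have := List.Sublist.append (List.Sublist.refl s) (hsubF.trans hsuf2.sublist)
        rwa [hsplit] at this
      rw [List.countP_append]
      have hcongrS : s.countP (fun q => decide (isR l q) && !(decide (q ∈ x :: ends p S')))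
          = s.countP (fun q => decide (isR l q) && !(q == x)) := by
        apply List.countP_congr
        intro q hq
        have hq' : q ∉ ends p S' := fun hqe =>
          hdisj hq (hmemF' q (mem_of_mem_ends hqe))
        simp [List.mem_cons, hq']
      have hcongrF : F'.countP (fun q => decide (isR l q) && !(decide (q ∈ x :: ends p S')))
          = F'.countP (fun q => decide (isR l q) && !(decide (q ∈ ends p S'))) := by
        apply List.countP_congr
        intro q hq
        have hq' : q ≠ x := fun h => hdisj (h ▸ hxmem) (hmemF' q hq)
        simp [List.mem_cons, hq']
      rw [hcongrS, hcongrF]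
      have herase := countP_erase_last l s.dropLast x hxd
      rw [List.dropLast_concat_getLast hsne] at herase
      have hlcL2 : lastcol L2 = lastcol L := by rw [lastcol, hlast2]; rfl
      rw [hlcL2] at hcnt
      have hlen2 : (s ++ F').length = p + F'.length := by
        rw [List.length_append, hfull]
      rw [hlen2]
      have hdvd_iff : p ∣ p + F'.length ↔ p ∣ F'.length := Nat.dvd_add_right (dvd_refl p)
      rw [hlastRs] at hcntS
      rw [hhds, hfull] at hcntS
      by_cases hdvd : p ∣ F'.length
      · rw [if_pos (hdvd_iff.mpr hdvd)]
        rw [if_pos hdvd] at hcnt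
        by_cases hix : isR l x
        · rw [if_pos hix] at herase
          rw [if_pos (by simpa using hix)] at hcntS
          push_cast at herase hcntS hcnt ⊢
          omega
        · rw [if_neg hix] at herase
          rw [if_neg (by simpa using hix)] at hcntS
          push_cast at herase hcntS hcnt ⊢
          omega
      · rw [if_neg (fun h => hdvd (hdvd_iff.mp h))]
        rw [if_neg hdvd] at hcnt
        by_cases hix : isR l x
        · rw [if_pos hix] at herase
          rw [if_pos (by simpa using hix)] at hcntS
          push_cast at herase hcntS hcnt ⊢
          omega
        · rw [if_neg hix] at herase
          rw [if_neg (by simpa using hix)] at hcntS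
          push_cast at herase hcntS hcnt ⊢
          omega


/-! ### Structure of the rim -/

def rowB (l : List ℕ) (i : ℕ) : List (ℕ × ℕ) :=
  (List.range' (max (l.getD (i+1) 0) 1) (l.getD i 0 + 1 - max (l.getD (i+1) 0) 1)).map
    (fun j => (i, j))

def Rk (l : List ℕ) (k : ℕ) : List (ℕ × ℕ) := ((List.range k).reverse).flatMap (rowB l)

lemma rimList_eq (l : List ℕ) : rimList l = Rk l l.length := rfl

lemma Rk_succ (l : List ℕ) (k : ℕ) : Rk l (k+1) = rowB l k ++ Rk l k := by
  rw [Rk, Rk, List.range_succ, List.reverse_append]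
  rfl

lemma getLast?_range' : ∀ (n s : ℕ), 1 ≤ n → (List.range' s n).getLast? = some (s + n - 1) := by
  intro n
  induction n with
  | zero => omega
  | succ m ih =>
    intro s _
    rw [List.range'_succ]
    cases m with
    | zero => rfl
    | succ m' =>
      rw [List.range'_succ, List.getLast?_cons_cons]
      have h := ih (s+1) (by omega)
      rw [List.range'_succ] at h
      rw [h]
      congr 1
      omega

lemma rowB_nil (l : List ℕ) (k : ℕ) (hk : l.getD k 0 = 0) : rowB l k = [] := by
  rw [rowB]
  have : l.getD k 0 + 1 - max (l.getD (k+1) 0) 1 = 0 := by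
    have := le_max_right (l.getD (k+1) 0) 1
    omega
  rw [this]
  rfl

section RowFacts

variable (l : List ℕ) (k : ℕ) (hk : 1 ≤ l.getD k 0) (hle : l.getD (k+1) 0 ≤ l.getD k 0)

lemma rowB_len : (rowB l k).length = l.getD k 0 + 1 - max (l.getD (k+1) 0) 1 := by
  rw [rowB, List.length_map, List.length_range']

include hk hle

lemma rowB_ne : rowB l k ≠ [] := by
  rw [← List.length_pos_iff, rowB_len]
  have := le_max_right (l.getD (k+1) 0) 1
  have := max_le hle hk
  omega

lemma rowB_head : (rowB l k).head? = some (k, max (l.getD (k+1) 0) 1) := by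
  rw [rowB, List.head?_map]
  have h1 : max (l.getD (k+1) 0) 1 ≤ l.getD k 0 := max_le hle hk
  obtain ⟨m, hm⟩ : ∃ m, l.getD k 0 + 1 - max (l.getD (k+1) 0) 1 = m + 1 :=
    ⟨l.getD k 0 - max (l.getD (k+1) 0) 1, by omega⟩
  rw [hm, List.range'_succ]
  rfl

lemma rowB_last : (rowB l k).getLast? = some (k, l.getD k 0) := by
  rw [rowB, List.getLast?_map]
  have h1 : max (l.getD (k+1) 0) 1 ≤ l.getD k 0 := max_le hle hk
  rw [getLast?_range' _ _ (by omega)]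
  simp only [Option.map_some]
  congr 2
  omega

lemma rowB_chain : Chain' (Rel l) (rowB l k) := by
  rw [rowB]
  have h1 : max (l.getD (k+1) 0) 1 ≤ l.getD k 0 := max_le hle hk
  have key : ∀ (n s : ℕ), s + n ≤ l.getD k 0 + 1 →
      Chain' (Rel l) ((List.range' s n).map (fun j => (k, j))) := by
    intro n
    induction n with
    | zero => simp [List.Chain']
    | succ m ih =>
      intro s hs
      rw [List.range'_succ]
      cases m with
      | zero => simp [List.Chain']
      | succ m' =>
        rw [List.map_cons, List.Chain', List.isChain_cons]
        constructor
        · intro y hy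
          rw [List.range'_succ, List.map_cons] at hy
          simp only [head?_cons, Option.mem_def, Option.some_inj] at hy
          subst hy
          left
          constructor
          · rfl
          · rw [isR]
            simp only
            omega
        · exact ih (s+1) (by omega)
  exact key _ _ (by omega)

lemma rowB_mem : ∀ q ∈ rowB l k, q.1 = k ∧ 1 ≤ q.2 ∧ q.2 ≤ l.getD k 0 := by
  intro q hq
  rw [rowB, List.mem_map] at hq
  obtain ⟨j, hj, rfl⟩ := hq
  rw [List.mem_range'_1] at hj
  have h1 := le_max_right (l.getD (k+1) 0) 1
  exact ⟨rfl, by omega, by omega⟩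

lemma rowB_nodup : (rowB l k).Nodup := by
  rw [rowB]
  exact (List.nodup_range' 1).map (fun a b h => by simpa using h)

end RowFacts


lemma head?_append_left {α : Type*} {l₁ l₂ : List α} (h : l₁ ≠ []) :
    (l₁ ++ l₂).head? = l₁.head? := by
  cases l₁ with
  | nil => exact absurd rfl h
  | cons a t => rfl

theorem rim_facts (l : List ℕ) (hA : ∀ i j, i ≤ j → l.getD j 0 ≤ l.getD i 0) :
    ∀ k : ℕ,
      Chain' (Rel l) (Rk l k) ∧
      (∀ j, j + 1 = k → 1 ≤ l.getD j 0 →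
        (Rk l k).head? = some (j, max (l.getD k 0) 1)) ∧
      (∀ q ∈ (Rk l k).head?, q.2 = 1 ∨ (k = q.1 + 1 ∧ q.2 = max (l.getD k 0) 1)) ∧
      (Rk l k ≠ [] → (Rk l k).getLast? = some (0, l.getD 0 0)) ∧
      (∀ q ∈ Rk l k, q.1 < k ∧ 1 ≤ q.2) ∧
      (Rk l k).Nodup ∧
      (1 ≤ l.getD 0 0 → 1 ≤ k → Rk l k ≠ []) := by
  intro k
  induction k with
  | zero =>
    refine ⟨by simp [Rk, List.Chain'], by omega, by simp [Rk], by simp [Rk], by simp [Rk], by simp [Rk],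
      by omega⟩
  | succ k ih =>
    obtain ⟨ih1, ih2, ih3, ih4, ih5, ih6, ih7⟩ := ih
    rw [Rk_succ]
    by_cases hk1 : 1 ≤ l.getD k 0
    · have hle : l.getD (k+1) 0 ≤ l.getD k 0 := hA k (k+1) (by omega)
      have hne := rowB_ne l k hk1 hle
      have hhead := rowB_head l k hk1 hle
      have hlastB := rowB_last l k hk1 hle
      have hmemB := rowB_mem l k hk1 hle
      refine ⟨?_, ?_, ?_, ?_, ?_, ?_, ?_⟩
      · rw [List.Chain', List.isChain_append]
        refine ⟨rowB_chain l k hk1 hle, ih1, ?_⟩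
        intro x hx y hy
        rw [hlastB] at hx
        simp only [Option.mem_def, Option.some_inj] at hx
        subst hx
        -- Rk l k is nonempty, so k ≥ 1
        have hRne : Rk l k ≠ [] := by
          intro hnil
          rw [hnil] at hy
          simp at hy
        have hkpos : 1 ≤ k := by
          by_contra hc
          have : k = 0 := by omega
          subst this
          exact hRne rfl
        have hk1' : 1 ≤ l.getD (k-1) 0 :=
          le_trans hk1 (hA (k-1) k (by omega))
        have := ih2 (k-1) (by omega) hk1'
        rw [this] at hy
        simp only [Option.mem_def, Option.some_inj] at hy
        subst hy
        right
        constructor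
        · simp only
          omega
        · rw [isR]
      · intro j hj _
        have : j = k := by omega
        subst this
        rw [head?_append_left hne, hhead]
      · intro q hq
        rw [head?_append_left hne, hhead] at hq
        simp only [Option.mem_def, Option.some_inj] at hq
        subst hq
        right
        exact ⟨rfl, rfl⟩
      · intro _
        by_cases hR : Rk l k = []
        · have hk0 : k = 0 := by
            by_contra hc
            exact ih7 (le_trans hk1 (hA 0 k (by omega))) (by omega) hR
          subst hk0
          rw [hR, List.append_nil, hlastB]
        · rw [List.getLast?_append_of_ne_nil _ hR]
          exact ih4 hR
      · intro q hq
        rw [List.mem_append] at hq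
        rcases hq with hq | hq
        · obtain ⟨h1, h2, _⟩ := hmemB q hq
          exact ⟨by omega, h2⟩
        · obtain ⟨h1, h2⟩ := ih5 q hq
          exact ⟨by omega, h2⟩
      · rw [List.nodup_append']
        refine ⟨rowB_nodup l k hk1 hle, ih6, ?_⟩
        intro q hq hq'
        have := (hmemB q hq).1
        have := (ih5 q hq').1
        omega
      · intro _ _
        simp [hne]
    · have hk0 : l.getD k 0 = 0 := by omega
      rw [rowB_nil l k hk0, List.nil_append]
      refine ⟨ih1, ?_, ?_, ih4, ?_, ih6, ?_⟩
      · intro j hj hj1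
        have : j = k := by omega
        subst this
        omega
      · intro q hq
        rcases ih3 q hq with h | ⟨h1, h2⟩
        · exact Or.inl h
        · left
          rw [h2, hk0]
          simp
      · intro q hq
        obtain ⟨h1, h2⟩ := ih5 q hq
        exact ⟨by omega, h2⟩
      · intro h0 _
        have hkpos : 1 ≤ k := by
          by_contra hc
          have : k = 0 := by omega
          subst this
          omega
        exact ih7 h0 hkpos


/-! ### Top-level assembly -/

lemma sorted_getD {l : List ℕ} (hl : l.Pairwise (· ≥ ·)) :
    ∀ i j, i ≤ j → l.getD j 0 ≤ l.getD i 0 := by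
  intro i j hij
  by_cases hj : j < l.length
  · have hi : i < l.length := lt_of_le_of_lt hij hj
    rw [l.getD_eq_getElem 0 hj, l.getD_eq_getElem 0 hi]
    rcases eq_or_lt_of_le hij with rfl | hlt
    · exact le_refl _
    · exact List.pairwise_iff_getElem.mp hl i j hi hj hlt
  · rw [l.getD_eq_default 0 (by omega)]
    exact Nat.zero_le _

lemma map_getD_range (l : List ℕ) :
    (List.range l.length).map (fun i => l.getD i 0) = l := by
  apply List.ext_getElem
  · simp
  · intro i h1 h2
    simp only [List.getElem_map, List.getElem_range]
    rw [l.getD_eq_getElem 0 h2]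

lemma sum_sub_sum (L : List ℕ) (f g : ℕ → ℕ) (h : ∀ i ∈ L, g i ≤ f i) :
    (L.map f).sum - (L.map g).sum = (L.map (fun i => f i - g i)).sum := by
  induction L with
  | nil => rfl
  | cons a t ih =>
    have hs : (t.map g).sum ≤ (t.map f).sum :=
      List.sum_le_sum (fun i hi => h i (List.mem_cons_of_mem a hi))
    have ha := h a (List.mem_cons_self)
    simp only [List.map_cons, List.sum_cons]
    rw [← ih (fun i hi => h i (List.mem_cons_of_mem a hi))]
    omega

lemma sum_ite_eq_countP {α : Type*} (L : List α) (P : α → Prop) [DecidablePred P] :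
    (L.map (fun i => if P i then 1 else 0)).sum = L.countP (fun i => decide (P i)) := by
  induction L with
  | nil => rfl
  | cons a t ih =>
    rw [List.map_cons, List.sum_cons, List.countP_cons, ih]
    by_cases h : P a <;> simp [h] <;> omega

theorem xu_formula (p : ℕ) (hp : 1 ≤ p) (l : List ℕ) (hl : l.Pairwise (· ≥ ·)) :
    (jNum p l : ℤ) = (aNum p l : ℤ) - l.getD 0 0 + (if p ∣ aNum p l then 0 else 1) := by
  have hA := sorted_getD hl
  obtain ⟨hchain, hhead2, hhead3, hlast4, hmem5, hnodup6, hne7⟩ := rim_facts l hA l.length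
  rw [← rimList_eq] at hchain hhead2 hhead3 hlast4 hmem5 hnodup6 hne7
  set R := rimList l with hRdef
  by_cases hR : R = []
  · -- empty rim
    have hrim : pRim p l = [] := by
      rw [pRim, segs, ← hRdef, hR]
      rw [segsAux_nil]
      rfl
    have ha : aNum p l = 0 := by rw [aNum, hrim]; rfl
    have hr : l.getD 0 0 = 0 := by
      by_contra hc
      rcases Nat.eq_zero_or_pos l.length with hlen | hlen
      · rw [l.getD_eq_default 0 (by omega)] at hc
        exact hc rfl
      · exact hne7 (by omega) hlen hR
    have hj : jNum p l = 0 := by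
      rw [jNum, Jmap]
      have : (List.range l.length).map (fun i =>
          let li := l.getD i 0
          if (i, li) ∈ pRim p l ∧ (i, li) ∉ segEnds p l then li - 1 else li)
          = (List.range l.length).map (fun i => l.getD i 0) := by
        apply List.map_congr_left
        intro i _
        simp [hrim]
      rw [this, map_getD_range]
      omega
    rw [hj, ha, hr]
    simp
  · -- nonempty rim
    have hhd : headcol R = 0 + 1 := by
      have hRh : R.head? = some (R.head hR) := List.head?_eq_head hR
      have := hhead3 _ (by rw [hRh]; rfl)
      have hlen0 : l.getD l.length 0 = 0 := l.getD_eq_default 0 le_rfl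
      rw [headcol, hRh]
      rcases this with h | ⟨_, h⟩
      · simp [h]
      · rw [hlen0] at h
        simp [h]
    have hlastR : ∀ q ∈ R.getLast?, isR l q := by
      intro q hq
      rw [hlast4 hR] at hq
      simp only [Option.mem_def, Option.some_inj] at hq
      subst hq
      rw [isR]
    have hlcR : lastcol R = l.getD 0 0 := by
      rw [lastcol, hlast4 hR]
      rfl
    obtain ⟨hsub, hcnt⟩ := main p hp l R.length R 0 le_rfl hR hchain hnodup6 hhd hlastR
    have hprim : pRim p l = (segsAux p R.length R).flatten := rfl
    have hsegEnds : segEnds p l = ends p (segsAux p R.length R) := rfl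
    have hanum : (pRim p l).length = aNum p l := rfl
    rw [← hprim, ← hsegEnds, hlcR, hanum] at hcnt
    rw [← hprim] at hsub
    -- jNum equals the count
    have hjcnt : jNum p l = (pRim p l).countP
        (fun q => decide (isR l q) && !(decide (q ∈ segEnds p l))) := by
      have hcond1 : ∀ i ∈ List.range l.length,
          (if (i, l.getD i 0) ∈ pRim p l ∧ (i, l.getD i 0) ∉ segEnds p l
            then l.getD i 0 - 1 else l.getD i 0) ≤ l.getD i 0 := by
        intro i _
        split <;> omega
      rw [jNum, Jmap]
      rw [show l.sum = ((List.range l.length).map (fun i => l.getD i 0)).sum from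
        (congrArg List.sum (map_getD_range l)).symm]
      rw [show (List.range l.length).map (fun i =>
            let li := l.getD i 0
            if (i, li) ∈ pRim p l ∧ (i, li) ∉ segEnds p l then li - 1 else li)
          = (List.range l.length).map (fun i =>
            if (i, l.getD i 0) ∈ pRim p l ∧ (i, l.getD i 0) ∉ segEnds p l
            then l.getD i 0 - 1 else l.getD i 0) from rfl]
      rw [sum_sub_sum _ _ _ hcond1]
      have : (List.range l.length).map (fun i => l.getD i 0 -
          (if (i, l.getD i 0) ∈ pRim p l ∧ (i, l.getD i 0) ∉ segEnds p l
            then l.getD i 0 - 1 else l.getD i 0))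
          = (List.range l.length).map (fun i =>
              if (i, l.getD i 0) ∈ pRim p l ∧ (i, l.getD i 0) ∉ segEnds p l
              then 1 else 0) := by
        apply List.map_congr_left
        intro i _
        by_cases h : (i, l.getD i 0) ∈ pRim p l ∧ (i, l.getD i 0) ∉ segEnds p l
        · rw [if_pos h, if_pos h]
          have hmem : (i, l.getD i 0) ∈ R := hsub.subset h.1
          have := (hmem5 _ hmem).2
          simp only at this
          omega
        · rw [if_neg h, if_neg h]
          omega
      rw [this, sum_ite_eq_countP]
      -- now relate the two countP's
      rw [List.countP_eq_length_filter, List.countP_eq_length_filter]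
      set A := (List.range l.length).filter
        (fun i => decide ((i, l.getD i 0) ∈ pRim p l ∧ (i, l.getD i 0) ∉ segEnds p l)) with hA'
      set B := (pRim p l).filter
        (fun q => decide (isR l q) && !(decide (q ∈ segEnds p l))) with hB'
      have hBsub : ∀ q ∈ B, q ∈ pRim p l ∧ isR l q ∧ q ∉ segEnds p l := by
        intro q hq
        rw [hB', List.mem_filter] at hq
        refine ⟨hq.1, ?_, ?_⟩
        · have := hq.2
          simp only [Bool.and_eq_true, decide_eq_true_eq, Bool.not_eq_true'] at this
          exact this.1
        · have := hq.2
          simp only [Bool.and_eq_true, decide_eq_true_eq, Bool.not_eq_true',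
            decide_eq_false_iff_not] at this
          exact this.2
      have hnodupRim : (pRim p l).Nodup := hnodup6.sublist hsub
      have hnB : B.Nodup := hnodupRim.filter _
      have hnBf : (B.map Prod.fst).Nodup := by
        apply hnB.map_on
        intro q hq q' hq' hfst
        obtain ⟨_, hq2, _⟩ := hBsub q hq
        obtain ⟨_, hq2', _⟩ := hBsub q' hq'
        rw [isR] at hq2 hq2'
        exact Prod.ext hfst (by rw [hq2, hq2', hfst])
      have hnA : A.Nodup := List.nodup_range.filter _
      have hmemiff : ∀ i, i ∈ B.map Prod.fst ↔ i ∈ A := by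
        intro i
        constructor
        · intro hi
          rw [List.mem_map] at hi
          obtain ⟨q, hq, rfl⟩ := hi
          obtain ⟨h1, h2, h3⟩ := hBsub q hq
          rw [isR] at h2
          have hqR : q ∈ R := hsub.subset h1
          have hrow := (hmem5 q hqR).1
          rw [hA', List.mem_filter]
          constructor
          · rw [List.mem_range]; exact hrow
          · have hq' : (q.1, l.getD q.1 0) = q := Prod.ext rfl h2.symm
            rw [hq']
            simp only [decide_eq_true_eq]
            exact ⟨h1, h3⟩
        · intro hi
          rw [hA', List.mem_filter] at hi
          simp only [decide_eq_true_eq] at hi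
          obtain ⟨_, hcond⟩ := hi
          rw [List.mem_map]
          refine ⟨(i, l.getD i 0), ?_, rfl⟩
          rw [hB', List.mem_filter]
          refine ⟨hcond.1, ?_⟩
          simp only [Bool.and_eq_true, decide_eq_true_eq, Bool.not_eq_true',
            decide_eq_false_iff_not]
          exact ⟨rfl, hcond.2⟩
      have hlen : A.length = B.length := by
        rw [← List.toFinset_card_of_nodup hnA,
          show B.length = (B.map Prod.fst).length from (List.length_map _).symm,
          ← List.toFinset_card_of_nodup hnBf]
        congr 1
        apply Finset.ext
        intro i
        rw [List.mem_toFinset, List.mem_toFinset, hmemiff]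
      rw [hlen]
    rw [hjcnt, hcnt]
    push_cast
    ring

end XuProof

open Mullineux in
/-- For a `p`-restricted partition `λ`, `j(λ)` equals the first part of the Mullineux
conjugate `M(λ)` (any partition having the Mullineux symbol prescribed by `λ`). -/
theorem jNum_eq_head_mullineux (p : ℕ) (hp : p.Prime) (l : List ℕ)
    (hl : IsRestricted p l) (mu : List ℕ) (hmu : IsPartition mu)
    (hM : IsMullineuxConjugate p l mu) :
    jNum p l = mu.getD 0 0 := by
  have h0 : (mu.getD 0 0 : ℤ) = (if (p : ℤ) ∣ (aNum p l : ℤ) then (aNum p l : ℤ) - (l.getD 0 0 : ℤ)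
      else (aNum p l : ℤ) + 1 - (l.getD 0 0 : ℤ)) := (hM 0).2
  have hx := XuProof.xu_formula p hp.pos l hl.1
  have hfin : (jNum p l : ℤ) = (mu.getD 0 0 : ℤ) := by
    rw [h0, hx]
    by_cases hd : p ∣ aNum p l
    · rw [if_pos hd, if_pos (Int.natCast_dvd_natCast.mpr hd)]
      ring
    · rw [if_neg hd, if_neg (fun h => hd (Int.natCast_dvd_natCast.mp h))]
      ring
  exact_mod_cast hfin
end

section
/- Let k be a field of characteristic ≠ 2 and define a symmetric bilinear form on Z^{m+n} by (ε_i, ε_j) = (−1)^{\bar i} δ_{ij}, where \bar i = 0 for i ≤ m and \bar i = 1 for i > m. Fix p ≥ 0 and order the odd roots β_1, ..., β_{mn} among {ε_i − ε_j : 1 ≤ i ≤ m < j ≤ m+n} so that β_i ≤ β_j in the dominance order implies i ≤ j. Starting from λ^{(0)} = λ and setting λ^{(i)} = λ^{(i−1)} if (λ^{(i−1)}, β_i) ≡ 0 (mod p) and λ^{(i)} = λ^{(i−1)} − β_i otherwise, the resulting weight λ^{(mn)} is independent of the choice of such an ordering. -/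
namespace Serganova

/-- One step of Serganova's algorithm: process the odd root `β = ε_a - ε_{m+b}`
(encoded by `r = (a, b) : Fin m × Fin n`).  Since `(λ, ε_a - ε_{m+b}) = λ_a + λ_{m+b}`,
the weight is replaced by `λ - β` exactly when `p ∤ λ_a + λ_{m+b}`. -/
def sergStep (p m n : ℕ) (lam : Fin (m+n) → ℤ) (r : Fin m × Fin n) : Fin (m+n) → ℤ :=
  let a : Fin (m+n) := Fin.castAdd n r.1
  let b : Fin (m+n) := Fin.natAdd m r.2
  if (p : ℤ) ∣ (lam a + lam b) then lam
  else Function.update (Function.update lam a (lam a - 1)) b (lam b + 1)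

/-- Serganova's algorithm run along the ordering `β_1, …, β_{mn}` of the odd
roots given by the enumeration `e`. -/
def sergRun (p m n : ℕ) (e : Fin (m*n) → Fin m × Fin n) (lam : Fin (m+n) → ℤ) :
    Fin (m+n) → ℤ :=
  (List.finRange (m*n)).foldl (fun l i => sergStep p m n l (e i)) lam

/-- `e` is an admissible ordering of the odd roots
`{ε_a - ε_{m+b} : a ∈ Fin m, b ∈ Fin n}`: it is a bijective enumeration, and whenever
`β_i ≤ β_j` in the dominance order (i.e. `(e j).1 ≤ (e i).1` and `(e i).2 ≤ (e j).2`,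
since `ε_a - ε_{m+b} ≤ ε_c - ε_{m+d}` iff `c ≤ a` and `b ≤ d`), we have `i ≤ j`. -/
def GoodOrder (m n : ℕ) (e : Fin (m*n) → Fin m × Fin n) : Prop :=
  Function.Bijective e ∧
    ∀ i j : Fin (m*n), ((e j).1 ≤ (e i).1 ∧ (e i).2 ≤ (e j).2) → i ≤ j

/-! ### Auxiliary material for the well-definedness proof -/

section Gen
variable {ι : Type*} [DecidableEq ι]

/-- Updates at four pairwise distinct points commute. -/
lemma update4_comm (f : ι → ℤ) (A B C D : ι) (u v w x : ℤ)
    (hAB : A ≠ B) (hAC : A ≠ C) (hAD : A ≠ D) (hBC : B ≠ C) (hBD : B ≠ D) (hCD : C ≠ D) :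
    Function.update (Function.update (Function.update (Function.update f A u) B v) C w) D x =
    Function.update (Function.update (Function.update (Function.update f C w) D x) A u) B v := by
  funext z
  simp only [Function.update_apply]
  split_ifs <;> subst_vars <;> simp_all

/-- Abstract form of one Serganova step. -/
def gstep (P : ℤ → ℤ → Prop) [∀ x y, Decidable (P x y)] (A B : ι) (f : ι → ℤ) : ι → ℤ :=
  if P (f A) (f B) then f else Function.update (Function.update f A (f A - 1)) B (f B + 1)

lemma gstep_comm (P Q : ℤ → ℤ → Prop) [∀ x y, Decidable (P x y)] [∀ x y, Decidable (Q x y)]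
    (A B C D : ι)
    (hAB : A ≠ B) (hAC : A ≠ C) (hAD : A ≠ D) (hBC : B ≠ C) (hBD : B ≠ D) (hCD : C ≠ D)
    (f : ι → ℤ) :
    gstep Q C D (gstep P A B f) = gstep P A B (gstep Q C D f) := by
  have r1C : Function.update (Function.update f A (f A - 1)) B (f B + 1) C = f C := by
    rw [Function.update_of_ne hBC.symm, Function.update_of_ne hAC.symm]
  have r1D : Function.update (Function.update f A (f A - 1)) B (f B + 1) D = f D := by
    rw [Function.update_of_ne hBD.symm, Function.update_of_ne hAD.symm]
  have r2A : Function.update (Function.update f C (f C - 1)) D (f D + 1) A = f A := by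
    rw [Function.update_of_ne hAD, Function.update_of_ne hAC]
  have r2B : Function.update (Function.update f C (f C - 1)) D (f D + 1) B = f B := by
    rw [Function.update_of_ne hBD, Function.update_of_ne hBC]
  simp only [gstep]
  by_cases hP : P (f A) (f B) <;> by_cases hQ : Q (f C) (f D)
  · simp only [hP, hQ, if_true, if_false, r1C, r1D, r2A, r2B]
  · simp only [hP, hQ, if_true, if_false, r1C, r1D, r2A, r2B]
  · simp only [hP, hQ, if_true, if_false, r1C, r1D, r2A, r2B]
  · simp only [hP, hQ, if_true, if_false, r1C, r1D, r2A, r2B]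
    exact update4_comm f A B C D _ _ _ _ hAB hAC hAD hBC hBD hCD

end Gen

section Fold
variable {α β : Type*}

lemma foldl_extract (le : α → α → Prop) (f : β → α → β)
    (hcomm : ∀ x y, ¬ le x y → ¬ le y x → ∀ s, f (f s x) y = f (f s y) x) (x : α) :
    ∀ (u : List α), (∀ z ∈ u, ¬ le x z ∧ ¬ le z x) → ∀ (v : List α) (s : β),
      (u ++ x :: v).foldl f s = (u ++ v).foldl f (f s x) := by
  intro u
  induction u with
  | nil => intro _ v s; rfl
  | cons a u' ih =>
    intro hu v s
    have ha := hu a (List.mem_cons_self : a ∈ a :: u')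
    have hu' : ∀ z ∈ u', ¬ le x z ∧ ¬ le z x := fun z hz => hu z (List.mem_cons_of_mem a hz)
    simp only [List.cons_append, List.foldl_cons]
    rw [ih hu' v (f s a), ← hcomm x a ha.1 ha.2 s]

lemma foldl_perm_of_antitone (le : α → α → Prop) (f : β → α → β)
    (hcomm : ∀ x y, ¬ le x y → ¬ le y x → ∀ s, f (f s x) y = f (f s y) x) :
    ∀ (l₁ l₂ : List α), l₁.Perm l₂ →
      l₁.Pairwise (fun x y => ¬ le y x) → l₂.Pairwise (fun x y => ¬ le y x) →
      ∀ s, l₁.foldl f s = l₂.foldl f s := by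
  intro l₁
  induction l₁ with
  | nil => intro l₂ hp _ _ s; rw [hp.nil_eq]
  | cons x t₁ ih =>
    intro l₂ hp hp₁ hp₂ s
    obtain ⟨u, v, rfl⟩ := List.mem_iff_append.mp (hp.subset (List.mem_cons_self : x ∈ x :: t₁))
    have hmid : t₁.Perm (u ++ v) := by
      have := hp.trans (List.perm_middle (a := x) (l₁ := u) (l₂ := v))
      exact this.cons_inv
    have hux : ∀ z ∈ u, ¬ le x z ∧ ¬ le z x := by
      intro z hz
      constructor
      · exact (List.pairwise_append.mp hp₂).2.2 z hz x (List.mem_cons_self : x ∈ x :: v)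
      · have hzt : z ∈ t₁ := hmid.symm.subset (List.mem_append_left v hz)
        exact (List.pairwise_cons.mp hp₁).1 z hzt
    rw [foldl_extract le f hcomm x u hux v s]
    simp only [List.foldl_cons]
    refine ih (u ++ v) hmid (List.pairwise_cons.mp hp₁).2 ?_ (f s x)
    exact hp₂.sublist ((List.sublist_cons_self x v).append_left u)

end Fold

/-- The dominance order on the odd roots: `β_{(a,b)} ≤ β_{(c,d)}` iff `c ≤ a ∧ b ≤ d`. -/
def rle {m n : ℕ} (x y : Fin m × Fin n) : Prop := y.1 ≤ x.1 ∧ x.2 ≤ y.2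

/-- Incomparable roots have distinct rows and distinct columns. -/
lemma incomp_ne {m n : ℕ} {x y : Fin m × Fin n} (h1 : ¬ rle x y) (h2 : ¬ rle y x) :
    x.1 ≠ y.1 ∧ x.2 ≠ y.2 := by
  unfold rle at h1 h2
  push_neg at h1 h2
  constructor
  · intro h
    rcases le_or_gt x.2 y.2 with hb | hb
    · exact absurd (h1 h.ge) (not_lt.mpr hb)
    · exact absurd (h2 h.le) (not_lt.mpr hb.le)
  · intro h
    rcases le_or_gt x.1 y.1 with ha | ha
    · exact absurd (h2 ha) (not_lt.mpr h.ge)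
    · exact absurd (h1 ha.le) (not_lt.mpr h.le)

lemma castAdd_ne_natAdd {m n : ℕ} (a : Fin m) (b : Fin n) :
    (Fin.castAdd n a : Fin (m+n)) ≠ Fin.natAdd m b := by
  intro h
  have := congrArg Fin.val h
  simp only [Fin.coe_castAdd, Fin.coe_natAdd] at this
  have := a.isLt
  omega

lemma sergStep_comm (p m n : ℕ) {x y : Fin m × Fin n}
    (h1 : ¬ rle x y) (h2 : ¬ rle y x) (s : Fin (m+n) → ℤ) :
    sergStep p m n (sergStep p m n s x) y = sergStep p m n (sergStep p m n s y) x := by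
  obtain ⟨hne1, hne2⟩ := incomp_ne h1 h2
  have hAC : (Fin.castAdd n x.1 : Fin (m+n)) ≠ Fin.castAdd n y.1 := by
    intro h; exact hne1 (Fin.ext (by simpa [Fin.ext_iff] using h))
  have hBD : (Fin.natAdd m x.2 : Fin (m+n)) ≠ Fin.natAdd m y.2 := by
    intro h
    have := congrArg Fin.val h
    simp only [Fin.coe_natAdd] at this
    exact hne2 (Fin.ext (by omega))
  exact gstep_comm (fun u v => (p : ℤ) ∣ u + v) (fun u v => (p : ℤ) ∣ u + v)
    (Fin.castAdd n x.1) (Fin.natAdd m x.2) (Fin.castAdd n y.1) (Fin.natAdd m y.2)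
    (castAdd_ne_natAdd x.1 x.2) hAC (castAdd_ne_natAdd x.1 y.2)
    (castAdd_ne_natAdd y.1 x.2).symm hBD (castAdd_ne_natAdd y.1 y.2) s

/-- The list of odd roots given by a good ordering is antitone-pairwise for `rle`. -/
lemma goodOrder_pairwise {m n : ℕ} (e : Fin (m*n) → Fin m × Fin n) (he : GoodOrder m n e) :
    (List.map e (List.finRange (m*n))).Pairwise (fun x y => ¬ rle y x) := by
  rw [List.pairwise_map]
  refine (List.pairwise_lt_finRange (m*n)).imp ?_
  intro i j hij hle
  exact absurd (he.2 j i hle) (not_le.mpr hij)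

end Serganova

open Serganova in
/-- Serganova's algorithm is independent of the chosen admissible ordering of the odd
roots: for any `p ≥ 0` and any two orderings of `{ε_i - ε_j : 1 ≤ i ≤ m < j ≤ m+n}`
compatible with the dominance order, the resulting weight `λ^{(mn)}` is the same. -/
theorem sergRun_well_defined (p m n : ℕ) (lam : Fin (m+n) → ℤ)
    (e e' : Fin (m*n) → Fin m × Fin n)
    (he : GoodOrder m n e) (he' : GoodOrder m n e') :
    sergRun p m n e lam = sergRun p m n e' lam := by
  have hfold : ∀ (f : Fin (m*n) → Fin m × Fin n),
      sergRun p m n f lam =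
        ((List.finRange (m*n)).map f).foldl (fun l r => sergStep p m n l r) lam := by
    intro f
    exact (List.foldl_map (f := f) (g := fun l r => sergStep p m n l r) (l := List.finRange (m*n)) (init := lam)).symm
  rw [hfold e, hfold e']
  have hnd : (List.map e (List.finRange (m*n))).Nodup :=
    (List.nodup_finRange _).map he.1.injective
  have hnd' : (List.map e' (List.finRange (m*n))).Nodup :=
    (List.nodup_finRange _).map he'.1.injective
  have hperm : (List.map e (List.finRange (m*n))).Perm (List.map e' (List.finRange (m*n))) := by
    refine (List.perm_ext_iff_of_nodup hnd hnd').mpr fun x => ?_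
    simp only [List.mem_map, List.mem_finRange, true_and]
    exact iff_of_true (he.1.surjective x) (he'.1.surjective x)
  exact foldl_perm_of_antitone rle (fun l r => sergStep p m n l r)
    (fun x y h1 h2 s => sergStep_comm p m n h1 h2 s)
    _ _ hperm (goodOrder_pairwise e he) (goodOrder_pairwise e' he') lam
end

section
/- Let k be a field of characteristic p ≠ 2 and d ≤ m. Then the endomorphism algebra of the tensor space V^{⊗d} (V the natural (m|n)-dimensional superspace) over the Schur superalgebra S(m|n,d) is isomorphic to the group algebra kS_d acting by signed place permutations. -/
namespace SchurSuper

def pairsF (d : ℕ) : Finset (Fin d × Fin d) := Finset.univ.filter (fun q => q.1 < q.2)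

/-- `γ(ε, w) = ∏_{s<t, w⁻¹ s > w⁻¹ t} (-1)^{ε_s ε_t}`. -/
def gam {d : ℕ} (eps : Fin d → ZMod 2) (w : Equiv.Perm (Fin d)) : ℤ :=
  ∏ q ∈ (pairsF d).filter (fun q => w⁻¹ q.2 < w⁻¹ q.1),
    (if eps q.1 = 1 ∧ eps q.2 = 1 then -1 else 1)

/-- `α(δ, ε) = ∏_{s<t} (-1)^{δ_s ε_t}`. -/
def alphaSgn {d : ℕ} (del eps : Fin d → ZMod 2) : ℤ :=
  ∏ q ∈ pairsF d, (if del q.1 = 1 ∧ eps q.2 = 1 then -1 else 1)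

/-- parity of index -/
def par (m n : ℕ) (x : Fin (m+n)) : ZMod 2 := if (x : ℕ) < m then 0 else 1

/-- the set `I(m|n,d)` of multi-indices, indexing the basis of `V^{⊗d}` -/
abbrev Idx (m n d : ℕ) := Fin d → Fin (m+n)

def epsOf (m n : ℕ) {d : ℕ} (i : Idx m n d) : Fin d → ZMod 2 := fun s => par m n (i s)

/-- The matrix of the signed place-permutation action of `w ∈ S_d` on `V^{⊗d}`
(in the basis `{v_i}_{i ∈ I(m|n,d)}`): `v_j · w = γ(ε_j, w) v_{j∘w}`. -/
def Pmat (k : Type*) [Field k] (m n d : ℕ) (w : Equiv.Perm (Fin d)) :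
    Matrix (Idx m n d) (Idx m n d) k :=
  fun i j => if i = j ∘ w then ((gam (epsOf m n j) w : ℤ) : k) else 0

/-- The Schur superalgebra `S(m|n,d) = A(m|n,d)^*`, realized concretely: an element is
the function `(i,j) ↦ x(T̃_{i,j})` on double indices, and such functions are exactly
those satisfying the super-symmetry `a(i·w, j·w) = γ(ε_i + ε_j, w)·a(i,j)`. -/
def SchurCoeffs (k : Type*) [Field k] (m n d : ℕ) : Set (Idx m n d → Idx m n d → k) :=
  {a | ∀ (i j : Idx m n d) (w : Equiv.Perm (Fin d)),
    a (i ∘ w) (j ∘ w) = ((gam (fun s => epsOf m n i s + epsOf m n j s) w : ℤ) : k) * a i j}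

/-- The representation `ρ_d : S(m|n,d) → End_k(V^{⊗d})`, written in matrix form:
the matrix coefficient of `ρ_d(a)` at `(i,j)` is `α(ε_i + ε_j, ε_j)·a(i,j)`. -/
def rhoMat (k : Type*) [Field k] (m n d : ℕ) (a : Idx m n d → Idx m n d → k) :
    Matrix (Idx m n d) (Idx m n d) k :=
  fun i j => ((alphaSgn (fun s => epsOf m n i s + epsOf m n j s) (epsOf m n j) : ℤ) : k)
    * a i j

end SchurSuper

namespace SchurAux
open SchurSuper

variable {d : ℕ}

lemma mem_pairsF {q : Fin d × Fin d} : q ∈ pairsF d ↔ q.1 < q.2 := by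
  simp [pairsF]

set_option linter.unnecessarySimpa false in
lemma prodR {M : Type*} [CommMonoid M] (g : Fin d → Fin d → M) (w : Equiv.Perm (Fin d)) :
    ∏ q ∈ pairsF d, g (w q.1) (w q.2)
      = ∏ q ∈ pairsF d, (if w⁻¹ q.2 < w⁻¹ q.1 then g q.2 q.1 else g q.1 q.2) := by
  refine Finset.prod_nbij'
    (fun q => if w q.1 < w q.2 then (w q.1, w q.2) else (w q.2, w q.1))
    (fun q => if w⁻¹ q.1 < w⁻¹ q.2 then (w⁻¹ q.1, w⁻¹ q.2) else (w⁻¹ q.2, w⁻¹ q.1))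
    ?_ ?_ ?_ ?_ ?_
  · intro q hq
    rw [mem_pairsF] at hq
    by_cases h : w q.1 < w q.2
    · simpa [mem_pairsF, h] using h
    · have h' : w q.2 < w q.1 :=
        lt_of_le_of_ne (le_of_not_gt h) (fun he => hq.ne' (w.injective he))
      simpa [mem_pairsF, h] using h'
  · intro q hq
    rw [mem_pairsF] at hq
    by_cases h : w⁻¹ q.1 < w⁻¹ q.2
    · simp only [Equiv.Perm.coe_inv] at h; simpa [mem_pairsF, h] using h
    · have h' : w⁻¹ q.2 < w⁻¹ q.1 :=
        lt_of_le_of_ne (le_of_not_gt h) (fun he => hq.ne' (w⁻¹.injective he))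
      simp only [Equiv.Perm.coe_inv] at h h'; simpa [mem_pairsF, h] using h'
  · intro q hq
    rw [mem_pairsF] at hq
    by_cases h : w q.1 < w q.2
    · simp [h, hq, Equiv.symm_apply_apply]
    · simp [h, hq, asymm hq, Equiv.symm_apply_apply]
  · intro q hq
    rw [mem_pairsF] at hq
    by_cases h : w⁻¹ q.1 < w⁻¹ q.2
    · simp only [Equiv.Perm.coe_inv] at h; simp [h, hq, Equiv.apply_symm_apply]
    · simp only [Equiv.Perm.coe_inv] at h; simp [h, hq, asymm hq, Equiv.apply_symm_apply]
  · intro q hq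
    rw [mem_pairsF] at hq
    by_cases h : w q.1 < w q.2
    · simp [h, hq, asymm hq, Equiv.symm_apply_apply]
    · simp [h, hq, Equiv.symm_apply_apply]

lemma gam_eq (eps : Fin d → ZMod 2) (w : Equiv.Perm (Fin d)) :
    gam eps w = ∏ q ∈ pairsF d,
      (if w⁻¹ q.2 < w⁻¹ q.1 then (if eps q.1 = 1 ∧ eps q.2 = 1 then (-1 : ℤ) else 1) else 1) := by
  rw [gam, Finset.prod_filter]

lemma gam_mul (eps : Fin d → ZMod 2) (w w' : Equiv.Perm (Fin d)) :
    gam eps (w * w') = gam eps w * gam (fun s => eps (w s)) w' := by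
  have h2 := prodR (M := ℤ)
      (fun s t => if w'⁻¹ (w⁻¹ t) < w'⁻¹ (w⁻¹ s) then (if eps s = 1 ∧ eps t = 1 then (-1:ℤ) else 1) else 1) w
  have hL : gam (fun s => eps (w s)) w'
      = ∏ q ∈ pairsF d, (if w⁻¹ q.2 < w⁻¹ q.1
          then (if w'⁻¹ (w⁻¹ q.1) < w'⁻¹ (w⁻¹ q.2) then (if eps q.2 = 1 ∧ eps q.1 = 1 then (-1:ℤ) else 1) else 1)
          else (if w'⁻¹ (w⁻¹ q.2) < w'⁻¹ (w⁻¹ q.1) then (if eps q.1 = 1 ∧ eps q.2 = 1 then (-1:ℤ) else 1) else 1)) := by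
    rw [gam_eq]
    rw [← h2]
    apply Finset.prod_congr rfl
    intro q hq
    simp [Equiv.symm_apply_apply]
  rw [gam_eq eps w, hL, ← Finset.prod_mul_distrib, gam_eq]
  apply Finset.prod_congr rfl
  intro q hq
  rw [mem_pairsF] at hq
  have hne : w⁻¹ q.1 ≠ w⁻¹ q.2 := fun he => hq.ne (w⁻¹.injective he)
  have hne' : w'⁻¹ (w⁻¹ q.1) ≠ w'⁻¹ (w⁻¹ q.2) := fun he => hne (w'⁻¹.injective he)
  have hmulinv : ∀ x : Fin d, (w * w')⁻¹ x = w'⁻¹ (w⁻¹ x) := by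
    intro x; simp [mul_inv_rev]
  rw [hmulinv, hmulinv]
  by_cases h1 : w⁻¹ q.2 < w⁻¹ q.1
  · rw [if_pos h1, if_pos h1]
    by_cases h2 : w'⁻¹ (w⁻¹ q.1) < w'⁻¹ (w⁻¹ q.2)
    · rw [if_pos h2, if_neg (asymm h2)]
      by_cases hc : eps q.1 = 1 ∧ eps q.2 = 1
      · rw [if_pos hc, if_pos ⟨hc.2, hc.1⟩]; ring
      · rw [if_neg hc, if_neg (fun hcc => hc ⟨hcc.2, hcc.1⟩)]; ring
    · have h2' : w'⁻¹ (w⁻¹ q.2) < w'⁻¹ (w⁻¹ q.1) :=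
        lt_of_le_of_ne (le_of_not_gt h2) (Ne.symm hne')
      rw [if_neg h2, if_pos h2', mul_one]
  · rw [if_neg h1, if_neg h1, one_mul]

lemma star (δ η : Fin d → ZMod 2) (w : Equiv.Perm (Fin d)) :
    gam δ w * alphaSgn (fun s => δ s + η s) η
      = alphaSgn (fun s => δ (w s) + η (w s)) (fun s => η (w s))
          * (gam (fun s => δ s + η s) w * gam η w) := by
  have h2 := prodR (M := ℤ) (fun x y => if δ x + η x = 1 ∧ η y = 1 then (-1:ℤ) else 1) w
  have hA : alphaSgn (fun s => δ (w s) + η (w s)) (fun s => η (w s))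
      = ∏ q ∈ pairsF d, (if w⁻¹ q.2 < w⁻¹ q.1
          then (if δ q.2 + η q.2 = 1 ∧ η q.1 = 1 then (-1:ℤ) else 1)
          else (if δ q.1 + η q.1 = 1 ∧ η q.2 = 1 then (-1:ℤ) else 1)) := by
    rw [alphaSgn, ← h2]
  rw [gam_eq δ w, alphaSgn, ← Finset.prod_mul_distrib, hA, gam_eq (fun s => δ s + η s) w,
    gam_eq η w, ← Finset.prod_mul_distrib, ← Finset.prod_mul_distrib]
  apply Finset.prod_congr rfl
  intro q hq
  by_cases h1 : w⁻¹ q.2 < w⁻¹ q.1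
  · simp only [if_pos h1]
    generalize δ q.1 = x; generalize δ q.2 = y; generalize η q.1 = u; generalize η q.2 = v
    revert x y u v; decide
  · simp only [if_neg h1, one_mul, mul_one]

lemma gam_one (eps : Fin d → ZMod 2) : gam eps 1 = 1 := by
  rw [gam_eq]
  apply Finset.prod_eq_one
  intro q hq
  rw [mem_pairsF] at hq
  rw [if_neg]
  simpa using asymm hq

lemma gam_eps_zero (eps : Fin d → ZMod 2) (heps : ∀ s, eps s = 0) (w : Equiv.Perm (Fin d)) :
    gam eps w = 1 := by
  rw [gam]
  apply Finset.prod_eq_one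
  intro q hq
  rw [if_neg]
  rintro ⟨h1, -⟩
  rw [heps q.1] at h1
  exact absurd h1 (by decide)

lemma alphaSgn_eps_zero (del eps : Fin d → ZMod 2) (heps : ∀ s, eps s = 0) :
    alphaSgn del eps = 1 := by
  rw [alphaSgn]
  apply Finset.prod_eq_one
  intro q hq
  rw [if_neg]
  rintro ⟨-, h2⟩
  rw [heps q.2] at h2
  exact absurd h2 (by decide)

end SchurAux

open SchurSuper in
/-- Double centralizer property: for `d ≤ m`, the endomorphism algebra of the tensor
space `V^{⊗d}` over the Schur superalgebra `S(m|n,d)` is isomorphic to the group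
algebra `kS_d` acting by signed place permutations: `w ↦ Pmat w` is an (anti-)
homomorphic embedding of `kS_d` into `End_k(V^{⊗d})` whose image is exactly the
centralizer of the image of `S(m|n,d)`. -/
theorem endomorphism_algebra_eq_group_algebra (k : Type) [Field k]
    (hk : ringChar k ≠ 2) (m n d : ℕ) (hd : d ≤ m) :
    (∀ w w' : Equiv.Perm (Fin d),
        Pmat k m n d (w * w') = Pmat k m n d w' * Pmat k m n d w) ∧
    (∀ c : Equiv.Perm (Fin d) → k,
        (∑ w : Equiv.Perm (Fin d), c w • Pmat k m n d w) = 0 → c = 0) ∧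
    (∀ θ : Matrix (Idx m n d) (Idx m n d) k,
        (∀ a ∈ SchurCoeffs k m n d, θ * rhoMat k m n d a = rhoMat k m n d a * θ) ↔
          ∃ c : Equiv.Perm (Fin d) → k,
            θ = ∑ w : Equiv.Perm (Fin d), c w • Pmat k m n d w) := by
  classical
  -- the standard injective even multi-index
  have hℓlt : ∀ s : Fin d, (s : ℕ) < m + n :=
    fun s => lt_of_lt_of_le s.isLt (le_trans hd (Nat.le_add_right m n))
  set ℓ : Idx m n d := fun s => ⟨(s : ℕ), hℓlt s⟩ with hℓdef
  have hℓinj : Function.Injective ℓ := by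
    intro a b h
    have h2 : (ℓ a).val = (ℓ b).val := congrArg Fin.val h
    exact Fin.ext h2
  have hℓ0 : ∀ s, epsOf m n ℓ s = 0 := by
    intro s
    have hs : ((ℓ s : Fin (m+n)) : ℕ) < m := lt_of_lt_of_le s.isLt hd
    simp [epsOf, par, hs]
  have hℓc0 : ∀ (g : Fin d → Fin d) (s : Fin d), epsOf m n (ℓ ∘ g) s = 0 :=
    fun g s => hℓ0 (g s)
  -- Part 1
  have part1 : ∀ w w' : Equiv.Perm (Fin d),
      Pmat k m n d (w * w') = Pmat k m n d w' * Pmat k m n d w := by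
    intro w w'
    ext i j
    rw [Matrix.mul_apply]
    have hsum : ∀ l : Idx m n d, Pmat k m n d w' i l * Pmat k m n d w l j
        = if l = j ∘ ⇑w then
            (if i = (j ∘ ⇑w) ∘ ⇑w' then
              ((gam (epsOf m n (j ∘ ⇑w)) w' : ℤ) : k) * ((gam (epsOf m n j) w : ℤ) : k) else 0)
          else 0 := by
      intro l
      by_cases h : l = j ∘ ⇑w
      · subst h
        by_cases h2 : i = (j ∘ ⇑w) ∘ ⇑w' <;> simp [Pmat, h2]
      · simp [Pmat, h]
    rw [Finset.sum_congr rfl (fun l _ => hsum l), Finset.sum_ite_eq' Finset.univ (j ∘ ⇑w)]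
    simp only [Finset.mem_univ, if_true]
    have hc : j ∘ ⇑(w * w') = (j ∘ ⇑w) ∘ ⇑w' := rfl
    have he : epsOf m n (j ∘ ⇑w) = fun s => epsOf m n j (w s) := rfl
    simp only [Pmat, hc, SchurAux.gam_mul, he]
    split_ifs with h
    · push_cast; ring
    · rfl
  refine ⟨part1, ?_, ?_⟩
  · -- Part 2 : linear independence
    intro c h
    funext w0
    have h2 : (∑ w : Equiv.Perm (Fin d), c w • Pmat k m n d w) (ℓ ∘ ⇑w0) ℓ = 0 := by
      rw [h]; rfl
    rw [Matrix.sum_apply] at h2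
    have hsum : ∀ w : Equiv.Perm (Fin d),
        (c w • Pmat k m n d w) (ℓ ∘ ⇑w0) ℓ = if w = w0 then c w else 0 := by
      intro w
      have hcond : (ℓ ∘ ⇑w0 = ℓ ∘ ⇑w) ↔ w = w0 := by
        constructor
        · intro hh
          apply Equiv.ext
          intro s
          exact (hℓinj (congrFun hh s)).symm
        · rintro rfl; rfl
      by_cases hw : w = w0
      · rw [if_pos hw]
        have : ℓ ∘ ⇑w0 = ℓ ∘ ⇑w := hcond.mpr hw
        simp [Pmat, this, SchurAux.gam_eps_zero (epsOf m n ℓ) hℓ0]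
      · rw [if_neg hw]
        have : ¬ (ℓ ∘ ⇑w0 = ℓ ∘ ⇑w) := fun hh => hw (hcond.mp hh)
        simp [Pmat, this]
    rw [Finset.sum_congr rfl (fun w _ => hsum w), Finset.sum_ite_eq' Finset.univ w0] at h2
    simpa using h2
  · -- Part 3
    intro θ
    constructor
    · -- forward: commuting implies in the span
      intro hcomm
      refine ⟨fun w => θ (ℓ ∘ ⇑w) ℓ, ?_⟩
      ext i j
      -- the averaged Schur coefficient attached to the pair (j, ℓ)
      set a : Idx m n d → Idx m n d → k := fun x y =>
        ∑ u : Equiv.Perm (Fin d),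
          if j ∘ ⇑u = x ∧ ℓ ∘ ⇑u = y then ((gam (epsOf m n j) u : ℤ) : k) else 0 with hadef
      have hiffcomp : ∀ (u : Equiv.Perm (Fin d)) (f g : Idx m n d),
          (f ∘ ⇑u = g ∘ ⇑u) ↔ f = g := by
        intro u f g
        constructor
        · intro hh
          funext s
          have := congrFun hh (u⁻¹ s)
          simpa [Function.comp] using this
        · rintro rfl; rfl
      have ha : a ∈ SchurCoeffs k m n d := by
        intro x y u
        have hstep : ∀ v : Equiv.Perm (Fin d),
            (if j ∘ ⇑(v * u) = x ∘ ⇑u ∧ ℓ ∘ ⇑(v * u) = y ∘ ⇑u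
              then ((gam (epsOf m n j) (v * u) : ℤ) : k) else 0)
            = ((gam (fun s => epsOf m n x s + epsOf m n y s) u : ℤ) : k) *
              (if j ∘ ⇑v = x ∧ ℓ ∘ ⇑v = y then ((gam (epsOf m n j) v : ℤ) : k) else 0) := by
          intro v
          have hcomp1 : j ∘ ⇑(v * u) = (j ∘ ⇑v) ∘ ⇑u := rfl
          have hcomp2 : ℓ ∘ ⇑(v * u) = (ℓ ∘ ⇑v) ∘ ⇑u := rfl
          rw [hcomp1, hcomp2]
          by_cases hc : j ∘ ⇑v = x ∧ ℓ ∘ ⇑v = y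
          · rw [if_pos ⟨(hiffcomp u _ _).mpr hc.1, (hiffcomp u _ _).mpr hc.2⟩, if_pos hc]
            rw [SchurAux.gam_mul]
            have heq : (fun s => epsOf m n j (v s)) = fun s => epsOf m n x s + epsOf m n y s := by
              funext s
              rw [← hc.1, ← hc.2]
              show epsOf m n j (v s) = epsOf m n (j ∘ ⇑v) s + epsOf m n (ℓ ∘ ⇑v) s
              rw [hℓc0]
              simp [epsOf, Function.comp]
            rw [heq]
            push_cast
            ring
          · rw [if_neg, if_neg hc, mul_zero]
            intro hh
            exact hc ⟨(hiffcomp u _ _).mp hh.1, (hiffcomp u _ _).mp hh.2⟩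
        calc a (x ∘ ⇑u) (y ∘ ⇑u)
            = ∑ v : Equiv.Perm (Fin d),
                (if j ∘ ⇑(v * u) = x ∘ ⇑u ∧ ℓ ∘ ⇑(v * u) = y ∘ ⇑u
                  then ((gam (epsOf m n j) (v * u) : ℤ) : k) else 0) := by
              simp only [hadef]
              exact (Fintype.sum_equiv (Equiv.mulRight u) _ _ (fun v => rfl)).symm
          _ = ∑ v : Equiv.Perm (Fin d),
                ((gam (fun s => epsOf m n x s + epsOf m n y s) u : ℤ) : k) *
                  (if j ∘ ⇑v = x ∧ ℓ ∘ ⇑v = y then ((gam (epsOf m n j) v : ℤ) : k) else 0) :=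
              Finset.sum_congr rfl (fun v _ => hstep v)
          _ = ((gam (fun s => epsOf m n x s + epsOf m n y s) u : ℤ) : k) * a x y := by
              rw [← Finset.mul_sum]
      have h := hcomm a ha
      have h2 : (θ * rhoMat k m n d a) i ℓ = (rhoMat k m n d a * θ) i ℓ := by rw [h]
      -- compute the LHS of h2
      have haℓ : ∀ l : Idx m n d, a l ℓ = if j = l then 1 else 0 := by
        intro l
        simp only [hadef]
        have hstep : ∀ u : Equiv.Perm (Fin d),
            (if j ∘ ⇑u = l ∧ ℓ ∘ ⇑u = ℓ then ((gam (epsOf m n j) u : ℤ) : k) else 0)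
            = if u = 1 then (if j = l then 1 else 0) else 0 := by
          intro u
          have hu1 : (ℓ ∘ ⇑u = ℓ) ↔ u = 1 := by
            constructor
            · intro hh
              apply Equiv.ext
              intro s
              exact (hℓinj (congrFun hh s))
            · rintro rfl
              simp
          by_cases hu : u = 1
          · subst hu
            rw [if_pos rfl]
            by_cases hjl : j = l
            · rw [if_pos (⟨by simpa using hjl, by simp⟩ :
                  j ∘ ⇑(1 : Equiv.Perm (Fin d)) = l ∧ ℓ ∘ ⇑(1 : Equiv.Perm (Fin d)) = ℓ),
                if_pos hjl, SchurAux.gam_one]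
              norm_num
            · rw [if_neg (fun hh => hjl (by simpa using hh.1) :
                  ¬ (j ∘ ⇑(1 : Equiv.Perm (Fin d)) = l ∧ ℓ ∘ ⇑(1 : Equiv.Perm (Fin d)) = ℓ)),
                if_neg hjl]
          · rw [if_neg (fun hh => hu (hu1.mp hh.2)), if_neg hu]
        rw [Finset.sum_congr rfl (fun u _ => hstep u), Finset.sum_ite_eq' Finset.univ 1]
        simp
      have hLHS : (θ * rhoMat k m n d a) i ℓ = θ i j := by
        rw [Matrix.mul_apply]
        have hstep : ∀ l : Idx m n d,
            θ i l * rhoMat k m n d a l ℓ = if j = l then θ i l else 0 := by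
          intro l
          simp only [rhoMat]
          rw [SchurAux.alphaSgn_eps_zero _ _ hℓ0, haℓ]
          by_cases hjl : j = l <;> simp [hjl]
        rw [Finset.sum_congr rfl (fun l _ => hstep l), Finset.sum_ite_eq Finset.univ j]
        simp
      -- compute the RHS of h2
      have hRHS : (rhoMat k m n d a * θ) i ℓ
          = ∑ u : Equiv.Perm (Fin d),
              (if j ∘ ⇑u = i then ((gam (epsOf m n j) u : ℤ) : k) * θ (ℓ ∘ ⇑u) ℓ else 0) := by
        rw [Matrix.mul_apply]
        have hstep : ∀ l : Idx m n d,
            rhoMat k m n d a i l * θ l ℓ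
            = ∑ u : Equiv.Perm (Fin d),
                (if l = ℓ ∘ ⇑u then
                  (if j ∘ ⇑u = i then
                    ((alphaSgn (fun s => epsOf m n i s + epsOf m n l s) (epsOf m n l) : ℤ) : k)
                      * ((gam (epsOf m n j) u : ℤ) : k) * θ l ℓ else 0) else 0) := by
          intro l
          simp only [rhoMat, hadef]
          rw [Finset.mul_sum, Finset.sum_mul]
          apply Finset.sum_congr rfl
          intro u _
          by_cases hc : j ∘ ⇑u = i ∧ ℓ ∘ ⇑u = l
          · rw [if_pos hc, if_pos hc.2.symm, if_pos hc.1]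
          · rw [if_neg hc]
            by_cases hl : l = ℓ ∘ ⇑u
            · rw [if_pos hl]
              rw [if_neg]
              · ring
              · intro hh
                exact hc ⟨hh, hl.symm⟩
            · rw [if_neg hl]
              ring
        rw [Finset.sum_congr rfl (fun l _ => hstep l), Finset.sum_comm]
        apply Finset.sum_congr rfl
        intro u _
        rw [Finset.sum_ite_eq' Finset.univ (ℓ ∘ ⇑u)]
        simp only [Finset.mem_univ, if_true]
        by_cases hc : j ∘ ⇑u = i
        · rw [if_pos hc, if_pos hc]
          rw [SchurAux.alphaSgn_eps_zero _ _ (hℓc0 ⇑u)]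
          norm_num
        · rw [if_neg hc, if_neg hc]
      -- put things together
      rw [hLHS, hRHS] at h2
      rw [h2, Matrix.sum_apply]
      apply Finset.sum_congr rfl
      intro u _
      rw [Matrix.smul_apply, Pmat, smul_eq_mul]
      by_cases hc : j ∘ ⇑u = i
      · rw [if_pos hc, if_pos hc.symm]
        ring
      · rw [if_neg hc, if_neg (fun hh => hc hh.symm), mul_zero]
    · -- backward: span elements commute
      rintro ⟨c, rfl⟩
      intro a ha
      have hPcomm : ∀ w : Equiv.Perm (Fin d),
          Pmat k m n d w * rhoMat k m n d a = rhoMat k m n d a * Pmat k m n d w := by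
        intro w
        ext i j
        rw [Matrix.mul_apply, Matrix.mul_apply]
        have hL : ∀ l : Idx m n d, Pmat k m n d w i l * rhoMat k m n d a l j
            = if l = i ∘ ⇑w⁻¹ then
                ((gam (epsOf m n (i ∘ ⇑w⁻¹)) w : ℤ) : k)
                  * (((alphaSgn (fun s => epsOf m n (i ∘ ⇑w⁻¹) s + epsOf m n j s)
                        (epsOf m n j) : ℤ) : k) * a (i ∘ ⇑w⁻¹) j)
              else 0 := by
          intro l
          by_cases hl : l = i ∘ ⇑w⁻¹
          · subst hl
            have hi : i = (i ∘ ⇑w⁻¹) ∘ ⇑w := by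
              funext s; simp [Function.comp]
            rw [if_pos rfl, Pmat, if_pos hi, rhoMat]
          · have hni : ¬ (i = l ∘ ⇑w) := by
              intro hh
              apply hl
              rw [hh]
              funext s
              simp [Function.comp]
            rw [if_neg hl, Pmat, if_neg hni, zero_mul]
        have hR : ∀ l : Idx m n d, rhoMat k m n d a i l * Pmat k m n d w l j
            = if l = j ∘ ⇑w then
                ((alphaSgn (fun s => epsOf m n i s + epsOf m n (j ∘ ⇑w) s)
                    (epsOf m n (j ∘ ⇑w)) : ℤ) : k) * a i (j ∘ ⇑w)
                  * ((gam (epsOf m n j) w : ℤ) : k)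
              else 0 := by
          intro l
          by_cases hl : l = j ∘ ⇑w
          · subst hl
            rw [if_pos rfl, Pmat, if_pos rfl, rhoMat]
          · rw [if_neg hl, Pmat, if_neg hl, mul_zero]
        rw [Finset.sum_congr rfl (fun l _ => hL l), Finset.sum_ite_eq' Finset.univ (i ∘ ⇑w⁻¹),
          Finset.sum_congr rfl (fun l _ => hR l), Finset.sum_ite_eq' Finset.univ (j ∘ ⇑w)]
        simp only [Finset.mem_univ, if_true]
        have hsc := ha (i ∘ ⇑w⁻¹) j w
        have hii : (i ∘ ⇑w⁻¹) ∘ ⇑w = i := by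
          funext s; simp [Function.comp]
        rw [hii] at hsc
        rw [hsc]
        have hα : (alphaSgn (fun s => epsOf m n i s + epsOf m n (j ∘ ⇑w) s)
              (epsOf m n (j ∘ ⇑w)) : ℤ)
            = alphaSgn (fun s => epsOf m n (i ∘ ⇑w⁻¹) (w s) + epsOf m n j (w s))
                (fun s => epsOf m n j (w s)) := by
          congr 1
          funext s
          have : epsOf m n i s = epsOf m n (i ∘ ⇑w⁻¹) (w s) := by
            simp [epsOf, Function.comp]
          rw [this]
          rfl
        rw [hα]
        have hstar := SchurAux.star (epsOf m n (i ∘ ⇑w⁻¹)) (epsOf m n j) w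
        have hstark : ((gam (epsOf m n (i ∘ ⇑w⁻¹)) w : ℤ) : k)
              * ((alphaSgn (fun s => epsOf m n (i ∘ ⇑w⁻¹) s + epsOf m n j s)
                  (epsOf m n j) : ℤ) : k)
            = ((alphaSgn (fun s => epsOf m n (i ∘ ⇑w⁻¹) (w s) + epsOf m n j (w s))
                  (fun s => epsOf m n j (w s)) : ℤ) : k)
              * (((gam (fun s => epsOf m n (i ∘ ⇑w⁻¹) s + epsOf m n j s) w : ℤ) : k)
                  * ((gam (epsOf m n j) w : ℤ) : k)) := by
          exact_mod_cast congrArg (fun z : ℤ => (z : k)) hstar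
        linear_combination (a (i ∘ ⇑w⁻¹) j) * hstark
      rw [Finset.sum_mul, Finset.mul_sum]
      apply Finset.sum_congr rfl
      intro w _
      rw [Matrix.smul_mul, Matrix.mul_smul, hPcomm w]
end
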